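/- arXiv:2001.11459 — 7 statements merged into one kernel-verified Lean document; each statement's English description precedes it below -/
import Mathlib

section
/- Let (X_{it}) be i.i.d. symmetric random variables and let k ≥ 2. If I = (i_1,…,i_k) ∈ {1,…,p}^k satisfies i_j = i_{j+1} for some 1 ≤ j ≤ k (with the cyclic convention i_{k+1} := i_1), then F(i_1,…,i_k) = F(i_1,…,i_{j−1}, i_{j+1},…,i_k), i.e. erasing one element of a run does not change the value of F. -/
open MeasureTheory ProbabilityTheory Filter

noncomputable section

variable {Ω : Type*}

/-- The self-normalized entries `Y_{it} = X_{it} / sqrt(D_i)` with `D_i = ∑_{t<n} X_{it}²`. -/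
def Ymat (X : ℕ → ℕ → Ω → ℝ) (n i t : ℕ) (ω : Ω) : ℝ :=
  X i t ω / Real.sqrt (∑ s ∈ Finset.range n, (X i s ω) ^ 2)

/-- `f(I,T) = E[∏_j Y_{i_j t_{j-1}} Y_{i_j t_j}]`, with the cyclic convention `t_0 = t_k`. -/
def fpath [MeasurableSpace Ω] (X : ℕ → ℕ → Ω → ℝ) (P : Measure Ω) (n : ℕ) {k : ℕ}
    (I T : Fin k → ℕ) : ℝ :=
  ∫ ω, ∏ j : Fin k, (Ymat X n (I j) (T ((finRotate k).symm j)) ω * Ymat X n (I j) (T j) ω) ∂P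

/-- `F(I) = ∑_{t_1,…,t_k < n} f(I,T)`, with the convention `F(∅) = n`. -/
def Fpath [MeasurableSpace Ω] (X : ℕ → ℕ → Ω → ℝ) (P : Measure Ω) (n : ℕ) {k : ℕ}
    (I : Fin k → ℕ) : ℝ :=
  if k = 0 then n else ∑ T : Fin k → Fin n, fpath X P n I fun j => (T j : ℕ)

lemma val_succAbove' {n : ℕ} (p : Fin (n+1)) (i : Fin n) :
    ((p.succAbove i : Fin (n+1)) : ℕ) = if (i:ℕ) < (p:ℕ) then (i:ℕ) else (i:ℕ)+1 := by
  unfold Fin.succAbove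
  rcases lt_or_ge (i.castSucc) p with h | h
  · rw [if_pos h, if_pos (by simpa [Fin.lt_def] using h), Fin.coe_castSucc]
  · rw [if_neg (not_lt.mpr h), if_neg (by simpa [Fin.le_def, not_lt] using h), Fin.val_succ]

lemma succAbove_add_one_cases (m' : ℕ) (j : Fin (m'+2)) (l : Fin (m'+1)) :
    j.succAbove (l+1) = j.succAbove l + 1 ∨
    (j.succAbove l + 1 = j ∧ j.succAbove (l+1) = j + 1) := by
  have hl := l.isLt
  have hj := j.isLt
  simp only [Fin.ext_iff, Fin.val_add_one, val_succAbove', Fin.val_last]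
  split_ifs <;> omega

lemma ymat_abs_le_one (X : ℕ → ℕ → Ω → ℝ) (n i t : ℕ) (ht : t < n) (ω : Ω) :
    |Ymat X n i t ω| ≤ 1 := by
  unfold Ymat
  set D := ∑ s ∈ Finset.range n, (X i s ω)^2 with hD
  have hD0 : 0 ≤ D := Finset.sum_nonneg fun s _ => sq_nonneg _
  have hle : (X i t ω)^2 ≤ D := Finset.single_le_sum (f := fun s => (X i s ω)^2)
      (fun s _ => sq_nonneg _) (Finset.mem_range.mpr ht)
  rcases eq_or_lt_of_le hD0 with h0 | hpos
  · have : X i t ω = 0 := by nlinarith [sq_nonneg (X i t ω)]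
    simp [this]
  · rw [abs_div, abs_of_nonneg (Real.sqrt_nonneg _)]
    rw [div_le_one (Real.sqrt_pos.mpr hpos)]
    calc |X i t ω| = Real.sqrt ((X i t ω)^2) := (Real.sqrt_sq_eq_abs _).symm
      _ ≤ Real.sqrt D := Real.sqrt_le_sqrt hle

lemma ymat_measurable [MeasurableSpace Ω] (X : ℕ → ℕ → Ω → ℝ)
    (hmeas : ∀ i t, Measurable (X i t)) (n i t : ℕ) :
    Measurable (Ymat X n i t) := by
  unfold Ymat
  exact (hmeas i t).div ((Finset.measurable_sum _ (fun s _ => (hmeas i s).pow_const 2)).sqrt)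

lemma integrable_prod_ymat [MeasurableSpace Ω] (P : Measure Ω) [IsProbabilityMeasure P]
    (X : ℕ → ℕ → Ω → ℝ) (hmeas : ∀ i t, Measurable (X i t)) (n : ℕ) {k : ℕ}
    (I : Fin k → ℕ) (T T' : Fin k → Fin n) :
    Integrable (fun ω => ∏ l, (Ymat X n (I l) (T l) ω * Ymat X n (I l) (T' l) ω)) P := by
  have hm : Measurable (fun ω => ∏ l, (Ymat X n (I l) (T l) ω * Ymat X n (I l) (T' l) ω)) :=
    Finset.measurable_prod _ fun l _ =>
      (ymat_measurable X hmeas n (I l) (T l)).mul (ymat_measurable X hmeas n (I l) (T' l))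
  refine (integrable_const (1:ℝ)).mono' hm.aestronglyMeasurable ?_
  filter_upwards with ω
  rw [Real.norm_eq_abs, Finset.abs_prod]
  refine Finset.prod_le_one (fun l _ => abs_nonneg _) (fun l _ => ?_)
  rw [abs_mul]
  exact mul_le_one₀ (ymat_abs_le_one X n (I l) (T l) (T l).isLt ω) (abs_nonneg _)
    (ymat_abs_le_one X n (I l) (T' l) (T' l).isLt ω)

/-- Regroup the cyclic product by `t`-index and swap sum and product. -/
lemma sum_prod_eq (X : ℕ → ℕ → Ω → ℝ) (n : ℕ) {k : ℕ} (I : Fin k → ℕ) (ω : Ω) :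
    ∑ T : Fin k → Fin n, ∏ l : Fin k,
      (Ymat X n (I l) ((T ((finRotate k).symm l) : ℕ)) ω * Ymat X n (I l) ((T l : ℕ)) ω)
    = ∏ l : Fin k, ∑ t : Fin n,
        Ymat X n (I l) (t : ℕ) ω * Ymat X n (I (finRotate k l)) (t : ℕ) ω := by
  rw [Finset.prod_univ_sum, Fintype.piFinset_univ]
  refine Finset.sum_congr rfl fun T _ => ?_
  have h1 : ∏ l : Fin k, Ymat X n (I (finRotate k l)) ((T l : ℕ)) ω
      = ∏ l : Fin k, Ymat X n (I l) ((T ((finRotate k).symm l) : ℕ)) ω := by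
    have := Equiv.prod_comp (finRotate k)
      (fun l => Ymat X n (I l) ((T ((finRotate k).symm l) : ℕ)) ω)
    simpa only [Equiv.symm_apply_apply] using this
  rw [Finset.prod_mul_distrib, Finset.prod_mul_distrib, ← h1, mul_comm]

/-- The key pointwise combinatorial identity. -/
lemma core (X : ℕ → ℕ → Ω → ℝ) (n m' : ℕ) (I : Fin (m'+2) → ℕ)
    (j : Fin (m'+2)) (hrun : I j = I (j+1)) (ω : Ω) :
    ∏ l : Fin (m'+2), (∑ t : Fin n, Ymat X n (I l) (t:ℕ) ω * Ymat X n (I (finRotate (m'+2) l)) (t:ℕ) ω)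
    = ∏ l : Fin (m'+1), (∑ t : Fin n,
        Ymat X n (I (j.succAbove l)) (t:ℕ) ω * Ymat X n (I (j.succAbove (finRotate (m'+1) l))) (t:ℕ) ω) := by
  set Y : ℕ → Fin n → ℝ := fun a t => Ymat X n a (t:ℕ) ω with hY
  set h : ℕ → ℕ → ℝ := fun a b => ∑ t : Fin n, Y a t * Y b t with hh
  have hidx : ∀ l : Fin (m'+1), I (j.succAbove (l+1)) = I (j.succAbove l + 1) := by
    intro l
    rcases succAbove_add_one_cases m' j l with h1 | ⟨h2, h3⟩
    · rw [h1]
    · rw [h3, h2, ← hrun]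
  have hRHS : ∀ l : Fin (m'+1),
      (∑ t : Fin n, Y (I (j.succAbove l)) t * Y (I (j.succAbove (finRotate (m'+1) l))) t)
      = h (I (j.succAbove l)) (I (j.succAbove l + 1)) := by
    intro l
    rw [finRotate_succ_apply, hidx l]
  calc ∏ l : Fin (m'+2), (∑ t : Fin n, Y (I l) t * Y (I (finRotate (m'+2) l)) t)
      = ∏ l : Fin (m'+2), h (I l) (I (l+1)) := by
        refine Finset.prod_congr rfl fun l _ => ?_
        rw [finRotate_succ_apply]
    _ = h (I j) (I (j+1)) * ∏ l : Fin (m'+1), h (I (j.succAbove l)) (I (j.succAbove l + 1)) :=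
        Fin.prod_univ_succAbove (fun l => h (I l) (I (l+1))) j
    _ = ∏ l : Fin (m'+1), h (I (j.succAbove l)) (I (j.succAbove l + 1)) := by
        rw [← hrun]
        by_cases hz : ∀ t : Fin n, Y (I j) t = 0
        · have hne : j - 1 ≠ j := by
            intro hcon
            have : (1 : Fin (m'+2)) = 0 := by
              have := congrArg (· + 1) hcon
              simpa [sub_add_cancel, left_eq_add] using this.symm
            simp [Fin.ext_iff] at this
          obtain ⟨l₀, hl₀⟩ := Fin.exists_succAbove_eq hne
          have hz2 : h (I (j.succAbove l₀)) (I (j.succAbove l₀ + 1)) = 0 := by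
            rw [hl₀, sub_add_cancel, hh]
            exact Finset.sum_eq_zero fun t _ => by rw [hz t, mul_zero]
          rw [Finset.prod_eq_zero (Finset.mem_univ l₀) hz2, mul_zero]
        · push_neg at hz
          obtain ⟨t₀, ht₀⟩ := hz
          have h1 : h (I j) (I j) = 1 := by
            rw [hh]
            show (∑ t : Fin n, Y (I j) t * Y (I j) t) = 1
            set D := ∑ s ∈ Finset.range n, (X (I j) s ω)^2 with hD
            have hD0 : 0 ≤ D := Finset.sum_nonneg fun s _ => sq_nonneg _
            have hX0 : X (I j) (t₀:ℕ) ω ≠ 0 := by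
              intro hc
              apply ht₀
              simp [hY, Ymat, hc]
            have hDpos : 0 < D := by
              have hle : (X (I j) (t₀:ℕ) ω)^2 ≤ D := Finset.single_le_sum
                (f := fun s => (X (I j) s ω)^2) (fun s _ => sq_nonneg _)
                (Finset.mem_range.mpr t₀.isLt)
              nlinarith [sq_nonneg (X (I j) (t₀:ℕ) ω), sq_abs (X (I j) (t₀:ℕ) ω),
                pow_pos (abs_pos.mpr hX0) 2]
            have hsq : Real.sqrt D * Real.sqrt D = D := Real.mul_self_sqrt hD0
            have hterm : ∀ t : Fin n, Y (I j) t * Y (I j) t = (X (I j) (t:ℕ) ω)^2 / D := by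
              intro t
              rw [hY]
              simp only [Ymat, ← hD]
              rw [div_mul_div_comm, hsq, sq]
            rw [Finset.sum_congr rfl fun t _ => hterm t, ← Finset.sum_div]
            rw [Fin.sum_univ_eq_sum_range (fun s => (X (I j) s ω)^2) n, ← hD]
            exact div_self (ne_of_gt hDpos)
          rw [h1, one_mul]
    _ = ∏ l : Fin (m'+1), (∑ t : Fin n, Y (I (j.succAbove l)) t * Y (I (j.succAbove (finRotate (m'+1) l))) t) :=
        (Finset.prod_congr rfl fun l _ => hRHS l).symm

theorem Fpath_erase_run
    [MeasurableSpace Ω] (P : Measure Ω) [IsProbabilityMeasure P]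
    (X : ℕ → ℕ → Ω → ℝ)
    (hmeas : ∀ i t, Measurable (X i t))
    (hindep : iIndepFun
      (fun it : ℕ × ℕ => X it.1 it.2) P)
    (hident : ∀ i t, IdentDistrib (X i t) (X 0 0) P P)
    (hnondeg : ¬ ∃ c : ℝ, ∀ᵐ ω ∂P, X 0 0 ω = c)
    (hsymm : IdentDistrib (X 0 0) (fun ω => -X 0 0 ω) P P)
    (n p m : ℕ) (hm : 1 ≤ m)
    (I : Fin (m + 1) → ℕ) (hIp : ∀ l, I l < p)
    (j : Fin (m + 1)) (hrun : I j = I (j + 1)) :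
    Fpath X P n I = Fpath X P n (I ∘ j.succAbove) := by
  obtain ⟨m', rfl⟩ : ∃ m', m = m' + 1 := ⟨m - 1, by omega⟩
  have hFL : Fpath X P n I = ∑ T : Fin (m'+2) → Fin n, fpath X P n I fun l => (T l : ℕ) := by
    rw [Fpath, if_neg (by omega)]
  have hFR : Fpath X P n (I ∘ j.succAbove)
      = ∑ T : Fin (m'+1) → Fin n, fpath X P n (I ∘ j.succAbove) fun l => (T l : ℕ) := by
    rw [Fpath, if_neg (by omega)]
  rw [hFL, hFR]
  have hint : ∀ {k : ℕ} (J : Fin k → ℕ) (T : Fin k → Fin n),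
      Integrable (fun ω => ∏ l : Fin k,
        (Ymat X n (J l) ((T ((finRotate k).symm l) : ℕ)) ω * Ymat X n (J l) ((T l : ℕ)) ω)) P :=
    fun J T => integrable_prod_ymat P X hmeas n J (fun l => T ((finRotate _).symm l)) T
  calc ∑ T : Fin (m'+2) → Fin n, fpath X P n I (fun l => (T l : ℕ))
      = ∫ ω, ∑ T : Fin (m'+2) → Fin n, ∏ l : Fin (m'+2),
          (Ymat X n (I l) ((T ((finRotate (m'+2)).symm l) : ℕ)) ω * Ymat X n (I l) ((T l : ℕ)) ω) ∂P := by
        rw [integral_finset_sum _ (fun T _ => hint I T)]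
        rfl
    _ = ∫ ω, ∑ T : Fin (m'+1) → Fin n, ∏ l : Fin (m'+1),
          (Ymat X n ((I ∘ j.succAbove) l) ((T ((finRotate (m'+1)).symm l) : ℕ)) ω
            * Ymat X n ((I ∘ j.succAbove) l) ((T l : ℕ)) ω) ∂P := by
        congr 1
        funext ω
        rw [sum_prod_eq X n I ω, sum_prod_eq X n (I ∘ j.succAbove) ω]
        exact core X n m' I j hrun ω
    _ = ∑ T : Fin (m'+1) → Fin n, fpath X P n (I ∘ j.succAbove) (fun l => (T l : ℕ)) := by
        rw [integral_finset_sum _ (fun T _ => hint (I ∘ j.succAbove) T)]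
        rfl

end
end

section
/- Let (X_{it}) be i.i.d. symmetric random variables. Let I ∈ {1,…,p}^k be an r-path of length k (i.e. I has exactly r distinct components, 1 ≤ r ≤ k). Then for any T ∈ {1,…,n}^k with f(I,T) > 0, the number of distinct components of T is at most k − r + 1. -/
open MeasureTheory ProbabilityTheory Filter

noncomputable section



lemma walk_card' {V : Type*} [DecidableEq V] (v : ℕ → V) (E : ℕ → ℕ × ℕ)
    (f g : ℕ × ℕ → V) :
    ∀ (M : ℕ), (∀ a < M, (v a = f (E a) ∧ v (a+1) = g (E a)) ∨
      (v a = g (E a) ∧ v (a+1) = f (E a))) →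
    ((Finset.range (M+1)).image v).card ≤ ((Finset.range M).image E).card + 1 := by
  intro M
  induction M with
  | zero => simp
  | succ M ih =>
    intro h
    have ih' := ih (fun a ha => h a (by omega))
    rw [show Finset.range (M+1+1) = insert (M+1) (Finset.range (M+1)) from Finset.range_add_one,
      Finset.image_insert]
    by_cases hv : v (M+1) ∈ (Finset.range (M+1)).image v
    · rw [Finset.insert_eq_self.2 hv]
      refine ih'.trans ?_
      have hsub : (Finset.range M).image E ⊆ (Finset.range (M+1)).image E :=
        Finset.image_subset_image (Finset.range_subset_range.2 (by omega))
      exact Nat.add_le_add_right (Finset.card_le_card hsub) 1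
    · rw [Finset.card_insert_of_notMem hv]
      have hE : E M ∉ (Finset.range M).image E := by
        intro hmem
        obtain ⟨a, ha, hEa⟩ := Finset.mem_image.1 hmem
        have ham := Finset.mem_range.1 ha
        apply hv
        have h1 : v (M+1) = f (E M) ∨ v (M+1) = g (E M) := by
          rcases h M (by omega) with ⟨_, h2⟩ | ⟨_, h2⟩
          · exact Or.inr h2
          · exact Or.inl h2
        have h2 : v (M+1) = v a ∨ v (M+1) = v (a+1) := by
          rcases h a (by omega) with ⟨ha1, ha2⟩ | ⟨ha1, ha2⟩ <;>
            rcases h1 with h1 | h1 <;> rw [← hEa] at h1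
          · exact Or.inl (by rw [h1, ha1])
          · exact Or.inr (by rw [h1, ha2])
          · exact Or.inr (by rw [h1, ha2])
          · exact Or.inl (by rw [h1, ha1])
        rcases h2 with h2 | h2
        · exact h2 ▸ Finset.mem_image_of_mem v (Finset.mem_range.2 (by omega))
        · exact h2 ▸ Finset.mem_image_of_mem v (Finset.mem_range.2 (by omega))
      have hcard : ((Finset.range (M+1)).image E).card
          = ((Finset.range M).image E).card + 1 := by
        rw [show Finset.range (M+1) = insert M (Finset.range M) from Finset.range_add_one,
          Finset.image_insert, Finset.card_insert_of_notMem hE]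
      rw [hcard]
      omega

lemma two_mul_card_image_le {α : Type*} [DecidableEq α] (N : ℕ) (E : ℕ → α)
    (h : ∀ x ∈ (Finset.range N).image E,
      2 ≤ ((Finset.range N).filter (fun a => E a = x)).card) :
    2 * ((Finset.range N).image E).card ≤ N := by
  have h1 : (Finset.range N).card = ∑ x ∈ (Finset.range N).image E,
      ((Finset.range N).filter (fun a => E a = x)).card :=
    Finset.card_eq_sum_card_image E _
  have h2 : 2 * ((Finset.range N).image E).card ≤ ∑ x ∈ (Finset.range N).image E,
      ((Finset.range N).filter (fun a => E a = x)).card := by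
    calc 2 * ((Finset.range N).image E).card
        = ∑ _x ∈ (Finset.range N).image E, 2 := by
          rw [Finset.sum_const, smul_eq_mul, mul_comm]
      _ ≤ _ := Finset.sum_le_sum h
  simpa [Finset.card_range] using h2.trans (le_of_eq h1.symm)

lemma card_filter_range_eq {k : ℕ} (f : Fin k → ℕ × ℕ) (f' : ℕ → ℕ × ℕ)
    (hff : ∀ j : Fin k, f' j.val = f j) (x : ℕ × ℕ) :
    ((Finset.range k).filter (fun a => f' a = x)).card
      = (Finset.univ.filter (fun j : Fin k => f j = x)).card := by
  refine Finset.card_bij' (fun a ha =>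
      (⟨a, Finset.mem_range.1 (Finset.mem_filter.1 ha).1⟩ : Fin k))
    (fun b _ => b.val) ?_ ?_ ?_ ?_
  · intro a ha
    have h2 := (Finset.mem_filter.1 ha).2
    refine Finset.mem_filter.2 ⟨Finset.mem_univ _, ?_⟩
    rw [← hff ⟨a, Finset.mem_range.1 (Finset.mem_filter.1 ha).1⟩]
    exact h2
  · intro b hb
    refine Finset.mem_filter.2 ⟨Finset.mem_range.2 b.isLt, ?_⟩
    rw [show f' b.val = f b from by rw [hff b]]
    exact (Finset.mem_filter.1 hb).2
  · intro a ha; rfl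
  · intro b hb; rfl



variable {Ω : Type*}

lemma abs_div_sqrt_le_one {a b : ℝ} (h : a^2 ≤ b) : |a / Real.sqrt b| ≤ 1 := by
  rcases eq_or_lt_of_le (Real.sqrt_nonneg b) with h0 | h0
  · simp [← h0]
  · rw [abs_div, abs_of_nonneg (Real.sqrt_nonneg b), div_le_one h0]
    calc |a| = Real.sqrt (a^2) := by rw [Real.sqrt_sq_eq_abs]
    _ ≤ Real.sqrt b := Real.sqrt_le_sqrt h

lemma fpath_eq_zero_of_odd
    [MeasurableSpace Ω] (P : Measure Ω) [IsProbabilityMeasure P]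
    (X : ℕ → ℕ → Ω → ℝ)
    (hmeas : ∀ i t, Measurable (X i t))
    (hindep : iIndepFun
      (fun it : ℕ × ℕ => X it.1 it.2) P)
    (hident : ∀ i t, IdentDistrib (X i t) (X 0 0) P P)
    (hsymm : IdentDistrib (X 0 0) (fun ω => -X 0 0 ω) P P)
    (n : ℕ) {k : ℕ} (I T : Fin k → ℕ) (hT : ∀ l, T l < n)
    (p₀ : ℕ × ℕ) (hp₁ : p₀.1 ∈ Finset.univ.image I) (hp₂ : p₀.2 < n)
    (hodd : Odd ((Finset.univ.filter
        (fun j : Fin k => (I j, T ((finRotate k).symm j)) = p₀)).card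
      + (Finset.univ.filter (fun j : Fin k => (I j, T j) = p₀)).card)) :
    fpath X P n I T = 0 := by
  classical
  set S' : Finset (ℕ × ℕ) := (Finset.univ.image I) ×ˢ Finset.range n with hS'
  have hp₀S : p₀ ∈ S' := by
    simp only [hS', Finset.mem_product, Finset.mem_range]
    exact ⟨hp₁, hp₂⟩
  set Tf : Finset (ℕ × ℕ) := S'.erase p₀ with hTf
  -- the reconstruction map
  set A : ℝ × (Tf → ℝ) → ℕ → ℕ → ℝ := fun z i t =>
    if h : (i, t) ∈ Tf then z.2 ⟨(i, t), h⟩ else if (i, t) = p₀ then z.1 else 0 with hA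
  set F : ℝ × (Tf → ℝ) → ℝ := fun z => ∏ j : Fin k,
      (A z (I j) (T ((finRotate k).symm j)) /
          Real.sqrt (∑ s ∈ Finset.range n, (A z (I j) s) ^ 2) *
        (A z (I j) (T j) / Real.sqrt (∑ s ∈ Finset.range n, (A z (I j) s) ^ 2))) with hF
  set vec : Ω → ℝ × (Tf → ℝ) := fun ω =>
    (X p₀.1 p₀.2 ω, fun q => X q.1.1 q.1.2 ω) with hvec
  -- A reconstructs X on S'
  have hrec : ∀ ω, ∀ q ∈ S', A (vec ω) q.1 q.2 = X q.1 q.2 ω := by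
    intro ω q hq
    by_cases h : (q.1, q.2) ∈ Tf
    · simp only [hA, dif_pos h, hvec]
    · have hqp : (q.1, q.2) = p₀ := by
        by_contra hne
        exact h (Finset.mem_erase.2 ⟨hne, by simpa using hq⟩)
      simp only [hA, dif_neg h, if_pos hqp, hvec]
      rw [show q.1 = p₀.1 from congrArg Prod.fst hqp, show q.2 = p₀.2 from congrArg Prod.snd hqp]
  -- pointwise equality of integrand
  have hpt : ∀ ω, (∏ j : Fin k, (Ymat X n (I j) (T ((finRotate k).symm j)) ω *
      Ymat X n (I j) (T j) ω)) = F (vec ω) := by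
    intro ω
    apply Finset.prod_congr rfl
    intro j _
    have hI : I j ∈ Finset.univ.image I := Finset.mem_image_of_mem I (Finset.mem_univ j)
    have hden : (∑ s ∈ Finset.range n, (X (I j) s ω) ^ 2)
        = ∑ s ∈ Finset.range n, (A (vec ω) (I j) s) ^ 2 := by
      apply Finset.sum_congr rfl
      intro s hs
      rw [hrec ω (I j, s) (by simp only [hS', Finset.mem_product]; exact ⟨hI, hs⟩)]
    have hnum1 : X (I j) (T ((finRotate k).symm j)) ω
        = A (vec ω) (I j) (T ((finRotate k).symm j)) := by
      rw [hrec ω (I j, T ((finRotate k).symm j))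
        (by simp only [hS', Finset.mem_product, Finset.mem_range]; exact ⟨hI, hT _⟩)]
    have hnum2 : X (I j) (T j) ω = A (vec ω) (I j) (T j) := by
      rw [hrec ω (I j, T j)
        (by simp only [hS', Finset.mem_product, Finset.mem_range]; exact ⟨hI, hT _⟩)]
    simp only [Ymat, hden, hnum1, hnum2]
  -- sign flip of A
  have hAflip : ∀ (z : ℝ × (Tf → ℝ)) i t,
      A (-z.1, z.2) i t = (if (i, t) = p₀ then (-1:ℝ) else 1) * A z i t := by
    intro z i t
    by_cases h : (i, t) ∈ Tf
    · have hne : (i, t) ≠ p₀ := (Finset.mem_erase.1 h).1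
      simp [hA, h, hne]
    · have hnp : p₀ ∉ Tf := Finset.notMem_erase _ _
      by_cases h2 : (i, t) = p₀ <;> simp [hA, h, h2, hnp]
  have hFodd : ∀ z : ℝ × (Tf → ℝ), F (-z.1, z.2) = - F z := by
    intro z
    have hden : ∀ i s, (A (-z.1, z.2) i s) ^ 2 = (A z i s) ^ 2 := by
      intro i s; rw [hAflip]; split_ifs <;> ring
    have heq : F (-z.1, z.2) = ∏ j : Fin k,
        (((if (I j, T ((finRotate k).symm j)) = p₀ then (-1:ℝ) else 1) *
          (if (I j, T j) = p₀ then (-1:ℝ) else 1)) *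
        (A z (I j) (T ((finRotate k).symm j)) /
            Real.sqrt (∑ s ∈ Finset.range n, (A z (I j) s) ^ 2) *
          (A z (I j) (T j) / Real.sqrt (∑ s ∈ Finset.range n, (A z (I j) s) ^ 2)))) := by
      simp only [hF]
      apply Finset.prod_congr rfl
      intro j _
      have h1 := hAflip z (I j) (T ((finRotate k).symm j))
      have h2 := hAflip z (I j) (T j)
      have h3 : (∑ s ∈ Finset.range n, (A (-z.1, z.2) (I j) s) ^ 2)
          = ∑ s ∈ Finset.range n, (A z (I j) s) ^ 2 :=
        Finset.sum_congr rfl fun s _ => hden _ _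
      rw [h1, h2, h3]; ring
    rw [heq, Finset.prod_mul_distrib]
    have h4 : (∏ j : Fin k, ((if (I j, T ((finRotate k).symm j)) = p₀ then (-1:ℝ) else 1) *
        (if (I j, T j) = p₀ then (-1:ℝ) else 1))) = -1 := by
      rw [Finset.prod_mul_distrib, Finset.prod_ite (fun _ => (-1:ℝ)) (fun _ => (1:ℝ)),
        Finset.prod_ite (fun _ => (-1:ℝ)) (fun _ => (1:ℝ))]
      simp only [Finset.prod_const, one_pow, mul_one]
      rw [← pow_add]
      exact Odd.neg_one_pow hodd
    rw [h4, hF]; ring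
  -- measurability
  have measA : ∀ i t, Measurable (fun z : ℝ × (Tf → ℝ) => A z i t) := by
    intro i t
    by_cases h : (i, t) ∈ Tf
    · simp only [hA, dif_pos h]
      exact (measurable_pi_apply _).comp measurable_snd
    · by_cases h2 : (i, t) = p₀
      · simp only [hA, dif_neg h, if_pos h2]; exact measurable_fst
      · simp only [hA, dif_neg h, if_neg h2]; exact measurable_const
  have measF : Measurable F := by
    apply Finset.measurable_prod
    intro j _
    have hd : Measurable (fun z : ℝ × (Tf → ℝ) =>
        Real.sqrt (∑ s ∈ Finset.range n, (A z (I j) s) ^ 2)) :=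
      Real.continuous_sqrt.measurable.comp (Finset.measurable_sum _ (fun s _ => (measA _ _).pow_const 2))
    exact ((measA _ _).div hd).mul ((measA _ _).div hd)
  -- boundedness
  have hFbd : ∀ z, |F z| ≤ 1 := by
    intro z
    have hYbd : ∀ i t, t < n →
        |A z i t / Real.sqrt (∑ s ∈ Finset.range n, (A z i s) ^ 2)| ≤ 1 := by
      intro i t ht
      exact abs_div_sqrt_le_one
        (Finset.single_le_sum (f := fun s => A z i s ^ 2) (fun s _ => sq_nonneg _)
          (Finset.mem_range.2 ht))
    rw [hF, Finset.abs_prod]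
    apply Finset.prod_le_one (fun j _ => abs_nonneg _)
    intro j _
    rw [abs_mul]
    have b1 := hYbd (I j) (T ((finRotate k).symm j)) (hT _)
    have b2 := hYbd (I j) (T j) (hT _)
    calc |A z (I j) (T ((finRotate k).symm j)) /
            Real.sqrt (∑ s ∈ Finset.range n, (A z (I j) s) ^ 2)| *
          |A z (I j) (T j) / Real.sqrt (∑ s ∈ Finset.range n, (A z (I j) s) ^ 2)|
        ≤ 1 * 1 := mul_le_mul b1 b2 (abs_nonneg _) zero_le_one
      _ = 1 := mul_one 1
  -- independence and product structure
  have hXmeas : Measurable (X p₀.1 p₀.2) := hmeas _ _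
  have hZmeas : Measurable (fun ω => (fun q : Tf => X q.1.1 q.1.2 ω)) :=
    measurable_pi_lambda _ fun q => hmeas _ _
  have hvecmeas : Measurable vec := hXmeas.prodMk hZmeas
  have hindep2 : IndepFun (X p₀.1 p₀.2) (fun ω => (fun q : Tf => X q.1.1 q.1.2 ω)) P := by
    have hdisj : Disjoint ({p₀} : Finset (ℕ × ℕ)) Tf :=
      Finset.disjoint_singleton_left.2 (Finset.notMem_erase _ _)
    have h := hindep.indepFun_finset {p₀} Tf hdisj (fun q => hmeas _ _)
    exact h.comp (φ := fun v : ({p₀} : Finset (ℕ × ℕ)) → ℝ =>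
      v ⟨p₀, Finset.mem_singleton_self p₀⟩) (measurable_pi_apply _) measurable_id
  set μ := P.map (X p₀.1 p₀.2) with hμdef
  set ν := P.map (fun ω => (fun q : Tf => X q.1.1 q.1.2 ω)) with hνdef
  have hmapeq : P.map vec = μ.prod ν :=
    (indepFun_iff_map_prod_eq_prod_map_map hXmeas.aemeasurable hZmeas.aemeasurable).1 hindep2
  have hμP : IsProbabilityMeasure μ := Measure.isProbabilityMeasure_map hXmeas.aemeasurable
  have hνP : IsProbabilityMeasure ν := Measure.isProbabilityMeasure_map hZmeas.aemeasurable
  have hFint : Integrable F (μ.prod ν) := by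
    refine ⟨measF.aestronglyMeasurable, ?_⟩
    apply MeasureTheory.HasFiniteIntegral.of_bounded (C := 1)
    exact Filter.Eventually.of_forall fun z => by simpa [Real.norm_eq_abs] using hFbd z
  set H : ℝ → ℝ := fun x => ∫ y, F (x, y) ∂ν with hH
  have hHmeas : StronglyMeasurable H :=
    MeasureTheory.StronglyMeasurable.integral_prod_right' (measF.stronglyMeasurable)
  have step1 : fpath X P n I T = ∫ x, H x ∂μ := by
    unfold fpath
    rw [integral_congr_ae (Filter.Eventually.of_forall hpt)]
    rw [← integral_map hvecmeas.aemeasurable measF.aestronglyMeasurable, hmapeq,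
      integral_prod _ hFint]
  have hHodd : ∀ x, H (-x) = - H x := by
    intro x
    rw [hH]
    simp only
    rw [← integral_neg]
    exact integral_congr_ae (Filter.Eventually.of_forall fun y => hFodd (x, y))
  have hμsymm : μ.map (fun x : ℝ => -x) = μ := by
    have h1 : μ = P.map (X 0 0) := (hident p₀.1 p₀.2).map_eq
    have h2 : P.map (X 0 0) = P.map (fun ω => -X 0 0 ω) := hsymm.map_eq
    have h3 : (P.map (X 0 0)).map (fun x : ℝ => -x) = P.map (fun ω => -X 0 0 ω) := by
      rw [Measure.map_map measurable_neg (hmeas 0 0)]; rfl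
    rw [h1, h3, ← h2]
  have hzero : (∫ x, H x ∂μ) = - ∫ x, H x ∂μ := by
    conv_lhs => rw [← hμsymm]
    rw [integral_map measurable_neg.aemeasurable hHmeas.aestronglyMeasurable]
    calc (∫ x, H (-x) ∂μ) = ∫ x, - H x ∂μ :=
        integral_congr_ae (Filter.Eventually.of_forall fun x => hHodd x)
      _ = - ∫ x, H x ∂μ := integral_neg H
  rw [step1]
  linarith [hzero]



theorem card_image_T_le_of_fpath_pos
    [MeasurableSpace Ω] (P : Measure Ω) [IsProbabilityMeasure P]
    (X : ℕ → ℕ → Ω → ℝ)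
    (hmeas : ∀ i t, Measurable (X i t))
    (hindep : iIndepFun
      (fun it : ℕ × ℕ => X it.1 it.2) P)
    (hident : ∀ i t, IdentDistrib (X i t) (X 0 0) P P)
    (hnondeg : ¬ ∃ c : ℝ, ∀ᵐ ω ∂P, X 0 0 ω = c)
    (hsymm : IdentDistrib (X 0 0) (fun ω => -X 0 0 ω) P P)
    (n p k r : ℕ) (hk : 1 ≤ k) (hr1 : 1 ≤ r) (hrk : r ≤ k)
    (I : Fin k → ℕ) (hIp : ∀ l, I l < p)
    (hI : (Finset.univ.image I).card = r)
    (T : Fin k → ℕ) (hT : ∀ l, T l < n)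
    (hpos : 0 < fpath X P n I T) :
    (Finset.univ.image T).card ≤ k - r + 1 := by
  classical
  set fi : ℕ → Fin k := fun m => if h : m < k then ⟨m, h⟩ else ⟨0, by omega⟩ with hfi
  set E : ℕ → ℕ × ℕ := fun m => if m % 2 = 0
    then (I (fi (m/2)), T ((finRotate k).symm (fi (m/2))))
    else (I (fi (m/2)), T (fi (m/2))) with hE
  set v : ℕ → ℕ ⊕ ℕ := fun m => if m % 2 = 1
    then Sum.inl (I (fi (m/2))) else Sum.inr (T ((finRotate k).symm (fi (m/2)))) with hv
  have hfival : ∀ j : Fin k, fi j.val = j := fun j => by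
    simp only [hfi, dif_pos j.isLt]
  -- rotation compatibility
  have hrot : ∀ j, j < k → (finRotate k).symm (fi (j+1)) = fi j := by
    intro j hj
    rw [Equiv.symm_apply_eq]
    obtain ⟨k', hk'⟩ : ∃ k', k = k'+1 := ⟨k-1, by omega⟩
    subst hk'
    rw [finRotate_succ_apply]
    by_cases h1 : j + 1 < k' + 1
    · have h2 : j < k' + 1 := by omega
      simp only [hfi, dif_pos h1, dif_pos h2]
      apply Fin.ext
      rw [Fin.val_add_one_of_lt]
      exact Fin.lt_iff_val_lt_val.2 (by simp [Fin.last]; omega)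
    · simp only [hfi, dif_neg h1, dif_pos hj]
      rw [show (⟨j, hj⟩ : Fin (k'+1)) = Fin.last k' from by
          apply Fin.ext; simp [Fin.last]; omega,
        Fin.last_add_one]
      apply Fin.ext
      simp
  -- the walk property
  have hwalk : ∀ a < 2*k, (v a = Sum.inl (E a).1 ∧ v (a+1) = Sum.inr (E a).2) ∨
      (v a = Sum.inr (E a).2 ∧ v (a+1) = Sum.inl (E a).1) := by
    intro a ha
    rcases Nat.even_or_odd a with ⟨j, hj⟩ | ⟨j, hj⟩
    · right
      have hjk : j < k := by omega
      have e1 : a % 2 = 0 := by omega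
      have e2 : a / 2 = j := by omega
      have e3 : (a+1) % 2 = 1 := by omega
      have e4 : (a+1) / 2 = j := by omega
      constructor
      · simp [hv, hE, e1, e2]
      · simp [hv, hE, e1, e2, e3, e4]
    · left
      have hjk : j < k := by omega
      have e1 : a % 2 = 1 := by omega
      have e2 : a / 2 = j := by omega
      have e3 : (a+1) % 2 = 0 := by omega
      have e4 : (a+1) / 2 = j + 1 := by omega
      constructor
      · simp [hv, hE, e1, e2]
      · have h := congrArg T (hrot j hjk)
        simp [hv, hE, e1, e2, e3, e4]
        simpa using h
  -- the vertex image
  have hvimg : (Finset.range (2*k+1)).image v =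
      ((Finset.univ.image I).image Sum.inl) ∪ ((Finset.univ.image T).image Sum.inr) := by
    apply Finset.Subset.antisymm
    · intro x hx
      obtain ⟨m, hm, rfl⟩ := Finset.mem_image.1 hx
      by_cases h : m % 2 = 1
      · apply Finset.mem_union_left
        simp only [hv, if_pos h]
        exact Finset.mem_image_of_mem _ (Finset.mem_image_of_mem I (Finset.mem_univ _))
      · apply Finset.mem_union_right
        simp only [hv, if_neg h]
        exact Finset.mem_image_of_mem _ (Finset.mem_image_of_mem T (Finset.mem_univ _))
    · apply Finset.union_subset
      · intro x hx
        obtain ⟨y, hy, rfl⟩ := Finset.mem_image.1 hx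
        obtain ⟨j, _, rfl⟩ := Finset.mem_image.1 hy
        apply Finset.mem_image.2
        refine ⟨2*j.val+1, Finset.mem_range.2 (by have := j.isLt; omega), ?_⟩
        have e1 : (2*j.val+1) % 2 = 1 := by omega
        have e2 : (2*j.val+1) / 2 = j.val := by omega
        simp [hv, e1, e2, hfival j]
      · intro x hx
        obtain ⟨y, hy, rfl⟩ := Finset.mem_image.1 hx
        obtain ⟨j, _, rfl⟩ := Finset.mem_image.1 hy
        apply Finset.mem_image.2
        refine ⟨2*((finRotate k) j).val,
          Finset.mem_range.2 (by have := ((finRotate k) j).isLt; omega), ?_⟩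
        have e1 : ¬ (2*((finRotate k) j).val) % 2 = 1 := by omega
        have e2 : (2*((finRotate k) j).val) / 2 = ((finRotate k) j).val := by omega
        simp only [hv, if_neg e1, e2, hfival]
        rw [Equiv.symm_apply_apply]
  have hdisj : Disjoint ((Finset.univ.image I).image (Sum.inl : ℕ → ℕ ⊕ ℕ))
      ((Finset.univ.image T).image Sum.inr) := by
    rw [Finset.disjoint_left]
    intro x hx1 hx2
    obtain ⟨y1, _, rfl⟩ := Finset.mem_image.1 hx1
    obtain ⟨y2, _, h⟩ := Finset.mem_image.1 hx2
    exact absurd h (by simp)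
  have hvcard : ((Finset.range (2*k+1)).image v).card = r + (Finset.univ.image T).card := by
    rw [hvimg, Finset.card_union_of_disjoint hdisj,
      Finset.card_image_of_injective _ Sum.inl_injective,
      Finset.card_image_of_injective _ Sum.inr_injective, hI]
  -- fibers of E
  have hE2j : ∀ j : Fin k, E (2*j.val) = (I j, T ((finRotate k).symm j)) := by
    intro j
    have e1 : (2*j.val) % 2 = 0 := by omega
    have e2 : (2*j.val) / 2 = j.val := by omega
    simp [hE, e1, e2, hfival j]
  have hE2j1 : ∀ j : Fin k, E (2*j.val+1) = (I j, T j) := by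
    intro j
    have e1 : ¬ (2*j.val+1) % 2 = 0 := by omega
    have e2 : (2*j.val+1) / 2 = j.val := by omega
    simp [hE, e1, e2, hfival j]
  have hEfib : ∀ x : ℕ × ℕ, ((Finset.range (2*k)).filter (fun a => E a = x)).card =
      (Finset.univ.filter (fun j : Fin k => (I j, T ((finRotate k).symm j)) = x)).card
      + (Finset.univ.filter (fun j : Fin k => (I j, T j) = x)).card := by
    intro x
    have hsplit : Finset.range (2*k) =
        ((Finset.range k).image (fun j => 2*j)) ∪ ((Finset.range k).image (fun j => 2*j+1)) := by
      apply Finset.ext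
      intro m
      simp only [Finset.mem_range, Finset.mem_union, Finset.mem_image]
      constructor
      · intro hm
        rcases Nat.even_or_odd m with ⟨j, hj⟩ | ⟨j, hj⟩
        · exact Or.inl ⟨j, by omega, by omega⟩
        · exact Or.inr ⟨j, by omega, by omega⟩
      · rintro (⟨j, hj, rfl⟩ | ⟨j, hj, rfl⟩) <;> omega
    have hd2 : Disjoint (((Finset.range k).image (fun j => 2*j)).filter (fun a => E a = x))
        (((Finset.range k).image (fun j => 2*j+1)).filter (fun a => E a = x)) := by
      rw [Finset.disjoint_left]
      intro m hm1 hm2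
      obtain ⟨j1, _, h1⟩ := Finset.mem_image.1 (Finset.mem_filter.1 hm1).1
      obtain ⟨j2, _, h2⟩ := Finset.mem_image.1 (Finset.mem_filter.1 hm2).1
      omega
    have hinj1 : Function.Injective (fun j : ℕ => 2*j) := fun a b h => by dsimp at h; omega
    have hinj2 : Function.Injective (fun j : ℕ => 2*j+1) := fun a b h => by dsimp at h; omega
    rw [hsplit, Finset.filter_union, Finset.card_union_of_disjoint hd2,
      Finset.filter_image, Finset.filter_image,
      Finset.card_image_of_injective _ hinj1, Finset.card_image_of_injective _ hinj2]
    congr 1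
    · exact card_filter_range_eq (fun j : Fin k => (I j, T ((finRotate k).symm j)))
        (fun a => E (2*a)) (fun j => hE2j j) x
    · exact card_filter_range_eq (fun j : Fin k => (I j, T j))
        (fun a => E (2*a+1)) (fun j => hE2j1 j) x
  -- evenness of fibers
  have heven : ∀ x ∈ (Finset.range (2*k)).image E,
      2 ≤ ((Finset.range (2*k)).filter (fun a => E a = x)).card := by
    intro x hx
    obtain ⟨a, ha, rfl⟩ := Finset.mem_image.1 hx
    have hmemI : (E a).1 ∈ Finset.univ.image I := by
      by_cases h : a % 2 = 0 <;>
        simp [hE, h] <;> exact Finset.mem_image_of_mem I (Finset.mem_univ _)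
    have h2n : (E a).2 < n := by
      by_cases h : a % 2 = 0 <;> simp [hE, h] <;> exact hT _
    have hnotodd : ¬ Odd ((Finset.univ.filter
          (fun j : Fin k => (I j, T ((finRotate k).symm j)) = E a)).card
        + (Finset.univ.filter (fun j : Fin k => (I j, T j) = E a)).card) := by
      intro hodd
      have h0 := fpath_eq_zero_of_odd P X hmeas hindep hident hsymm n I T hT
        (E a) hmemI h2n hodd
      rw [h0] at hpos
      exact lt_irrefl 0 hpos
    have h1 : 0 < ((Finset.range (2*k)).filter (fun a' => E a' = E a)).card :=
      Finset.card_pos.2 ⟨a, Finset.mem_filter.2 ⟨Finset.mem_range.2 (Finset.mem_range.1 ha), rfl⟩⟩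
    rw [hEfib (E a)] at h1 ⊢
    rcases Nat.even_or_odd ((Finset.univ.filter
        (fun j : Fin k => (I j, T ((finRotate k).symm j)) = E a)).card
      + (Finset.univ.filter (fun j : Fin k => (I j, T j) = E a)).card) with he | ho
    · obtain ⟨c, hc⟩ := he
      omega
    · exact absurd ho hnotodd
  -- conclude
  have hwc := walk_card' v E (fun e => Sum.inl e.1) (fun e => Sum.inr e.2) (2*k) hwalk
  have h2 := two_mul_card_image_le (2*k) E heven
  rw [hvcard] at hwc
  omega

end
end

section
/- For each n let B_n = (B_{jk}) be a non-random n×n real matrix with sup_n ‖B_n‖₂ < ∞ (‖·‖₂ the spectral norm), and let S_n = {(i₁,j₁,i₂,j₂) : 1 ≤ i₁,j₁,i₂,j₂ ≤ n} \ {(i₁,j₁,i₂,j₂) : (i₁ = i₂ and j₁ = j₂) or (i₁ = j₂ ≠ i₂ = j₁)}. Assume E[Y₁⁴] = o(n^{-1}), n·Var(Y₁Y₂) → 0, and V_n = n² ∑_{(i₁,j₁,i₂,j₂) ∈ S_n} (Cov(Y_{i₁}Y_{j₁}, Y_{i₂}Y_{j₂}))² → 0. Then E[ |∑_{i,j=1}^n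 B_{ij}(Y_i Y_j − E[Y_i Y_j])|² ] → 0 as n → ∞; that is, E[|Y₀ B_n Y₀' − tr(B_n M_n)|²] = o(1), where Y₀ = (Y₁,…,Y_n) (a row vector) and M_n is the n×n matrix with entries E[Y_i Y_j]. -/
open MeasureTheory ProbabilityTheory Filter

noncomputable section

variable {Ω : Type*}

/-- The self-normalized variables `Y_t = X_t / sqrt(∑_{s<n} X_s²)`. -/
def Yvec (X : ℕ → Ω → ℝ) (n t : ℕ) (ω : Ω) : ℝ :=
  X t ω / Real.sqrt (∑ s ∈ Finset.range n, (X s ω) ^ 2)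

/-- The spectral norm (largest singular value) of a real square matrix. -/
def specNorm {n : ℕ} (M : Matrix (Fin n) (Fin n) ℝ) : ℝ :=
  ‖Matrix.toEuclideanCLM (𝕜 := ℝ) M‖

set_option linter.unusedSectionVars false
set_option linter.unusedVariables false
set_option maxHeartbeats 1000000

namespace QFCAux

lemma Yvec_meas [MeasurableSpace Ω] {X : ℕ → Ω → ℝ} (hmeas : ∀ t, Measurable (X t))
    (n t : ℕ) : Measurable (Yvec X n t) := by
  apply Measurable.div (hmeas t)
  exact (Finset.measurable_sum _ (fun s _ => (hmeas s).pow_const 2)).sqrt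

lemma Yvec_abs_le {X : ℕ → Ω → ℝ} {n t : ℕ} (ht : t < n) (ω : Ω) :
    |Yvec X n t ω| ≤ 1 := by
  unfold Yvec
  set D := ∑ s ∈ Finset.range n, (X s ω) ^ 2 with hD
  have hD0 : 0 ≤ D := Finset.sum_nonneg fun s _ => sq_nonneg _
  have hle : (X t ω) ^ 2 ≤ D :=
    Finset.single_le_sum (f := fun s => (X s ω) ^ 2) (fun s _ => sq_nonneg _)
      (Finset.mem_range.2 ht)
  rcases eq_or_lt_of_le hD0 with h | h
  · have : X t ω = 0 := by nlinarith [sq_nonneg (X t ω)]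
    simp [this]
  · have habs : |X t ω| ≤ Real.sqrt D := Real.abs_le_sqrt hle
    rw [abs_div, div_le_one (by positivity), abs_of_nonneg (Real.sqrt_nonneg D)]
    exact habs

variable [MeasurableSpace Ω] {P : Measure Ω} [IsProbabilityMeasure P] {X : ℕ → Ω → ℝ}

lemma map_vec_eq_pi (hmeas : ∀ t, Measurable (X t))
    (hindep : iIndepFun X P)
    (hident : ∀ t, IdentDistrib (X t) (X 0) P P) (n : ℕ) :
    P.map (fun ω (t : Fin n) => X t ω) = Measure.pi (fun _ : Fin n => P.map (X 0)) := by
  classical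
  haveI : IsProbabilityMeasure (P.map (X 0)) := Measure.isProbabilityMeasure_map (hmeas 0).aemeasurable
  have hT : Measurable (fun ω (t : Fin n) => X t ω) :=
    measurable_pi_lambda _ fun t => hmeas t
  refine (Measure.pi_eq fun s hs => ?_).symm
  set sets : ℕ → Set ℝ := fun k => if h : k < n then s ⟨k, h⟩ else Set.univ with hsets
  have hsetsm : ∀ k, MeasurableSet (sets k) := by
    intro k; by_cases h : k < n <;> simp [sets, h, hs]
  have hpre : (fun ω (t : Fin n) => X t ω) ⁻¹' Set.pi Set.univ s
      = ⋂ k ∈ Finset.range n, X k ⁻¹' sets k := by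
    ext ω
    simp only [Set.mem_preimage, Set.mem_univ_pi, Set.mem_iInter, Finset.mem_range]
    constructor
    · intro h k hk; simpa [sets, hk] using h ⟨k, hk⟩
    · intro h t; simpa [sets, t.2] using h t t.2
  rw [Measure.map_apply hT (MeasurableSet.univ_pi hs), hpre,
    hindep.measure_inter_preimage_eq_mul (Finset.range n) (fun k _ => hsetsm k),
    ← Fin.prod_univ_eq_prod_range (fun k => P (X k ⁻¹' sets k)) n]
  refine Finset.prod_congr rfl fun i _ => ?_
  have h1 : sets (i : ℕ) = s i := by simp [sets, i.2]
  rw [h1, ← (hident (i : ℕ)).map_eq, Measure.map_apply (hmeas (i : ℕ)) (hs i)]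

lemma pi_perm_invariant (ν : Measure ℝ) [IsProbabilityMeasure ν] {n : ℕ}
    (σ : Equiv.Perm (Fin n)) :
    (Measure.pi (fun _ : Fin n => ν)).map (fun v (t : Fin n) => v (σ t)) =
      Measure.pi (fun _ : Fin n => ν) := by
  have hm : Measurable (fun (v : Fin n → ℝ) (t : Fin n) => v (σ t)) :=
    measurable_pi_lambda _ fun t => measurable_pi_apply _
  refine (Measure.pi_eq fun s hs => ?_).symm
  have hpre : (fun (v : Fin n → ℝ) (t : Fin n) => v (σ t)) ⁻¹' Set.pi Set.univ s
      = Set.pi Set.univ (fun u => s (σ.symm u)) := by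
    ext v
    simp only [Set.mem_preimage, Set.mem_univ_pi]
    constructor
    · intro h u; simpa using h (σ.symm u)
    · intro h t; simpa using h (σ t)
  rw [Measure.map_apply hm (MeasurableSet.univ_pi hs), hpre,
    Measure.pi_pi]
  exact Equiv.prod_comp σ.symm fun t => ν (s t)

lemma integral_perm (hmeas : ∀ t, Measurable (X t))
    (hindep : iIndepFun X P)
    (hident : ∀ t, IdentDistrib (X t) (X 0) P P) {n : ℕ} (σ : Equiv.Perm (Fin n))
    {g : (Fin n → ℝ) → ℝ} (hg : Measurable g) :
    ∫ ω, g (fun t => X (σ t) ω) ∂P = ∫ ω, g (fun t : Fin n => X t ω) ∂P := by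
  haveI : IsProbabilityMeasure (P.map (X 0)) := Measure.isProbabilityMeasure_map (hmeas 0).aemeasurable
  have hT : Measurable (fun ω (t : Fin n) => X t ω) :=
    measurable_pi_lambda _ fun t => hmeas t
  have hm : Measurable (fun (v : Fin n → ℝ) (t : Fin n) => v (σ t)) :=
    measurable_pi_lambda _ fun t => measurable_pi_apply _
  have hmap := map_vec_eq_pi hmeas hindep hident n
  calc ∫ ω, g (fun t => X (σ t) ω) ∂P
      = ∫ v, g (fun t => v (σ t)) ∂(P.map (fun ω (t : Fin n) => X t ω)) := by
        have hfm : AEStronglyMeasurable (fun v : Fin n → ℝ => g fun t => v (σ t))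
            (P.map (fun ω (t : Fin n) => X t ω)) := (hg.comp hm).aestronglyMeasurable
        rw [integral_map hT.aemeasurable hfm]
    _ = ∫ w, g w ∂((Measure.pi (fun _ : Fin n => P.map (X 0))).map
          (fun v (t : Fin n) => v (σ t))) := by
        rw [hmap, integral_map hm.aemeasurable hg.aestronglyMeasurable]
    _ = ∫ w, g w ∂(Measure.pi (fun _ : Fin n => P.map (X 0))) := by
        rw [pi_perm_invariant]
    _ = ∫ ω, g (fun t : Fin n => X t ω) ∂P := by
        rw [hmap.symm, integral_map hT.aemeasurable hg.aestronglyMeasurable]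

lemma exists_perm_pair {n : ℕ} {a b i j : Fin n} (hab : a ≠ b) (hij : i ≠ j) :
    ∃ σ : Equiv.Perm (Fin n), σ a = i ∧ σ b = j := by
  classical
  set τ := Equiv.swap a i with hτ
  have hca : τ.symm j ≠ a := by
    intro h
    have : j = τ a := by rw [← h, Equiv.apply_symm_apply]
    rw [hτ, Equiv.swap_apply_left] at this
    exact hij this.symm
  refine ⟨τ * Equiv.swap b (τ.symm j), ?_, ?_⟩
  · rw [Equiv.Perm.mul_apply, Equiv.swap_apply_of_ne_of_ne hab (Ne.symm hca),
      hτ, Equiv.swap_apply_left]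
  · rw [Equiv.Perm.mul_apply, Equiv.swap_apply_left, Equiv.apply_symm_apply]

lemma moment_pair_perm (hmeas : ∀ t, Measurable (X t))
    (hindep : iIndepFun X P)
    (hident : ∀ t, IdentDistrib (X t) (X 0) P P) {n : ℕ}
    (σ : Equiv.Perm (Fin n)) (i j : Fin n) (k : ℕ) :
    ∫ ω, (Yvec X n (σ i) ω * Yvec X n (σ j) ω) ^ k ∂P
      = ∫ ω, (Yvec X n i ω * Yvec X n j ω) ^ k ∂P := by
  set g : (Fin n → ℝ) → ℝ := fun v =>
    ((v i / Real.sqrt (∑ t, v t ^ 2)) * (v j / Real.sqrt (∑ t, v t ^ 2))) ^ k with hgdef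
  have hg : Measurable g := by
    apply Measurable.pow_const
    apply Measurable.mul <;>
      exact Measurable.div (measurable_pi_apply _)
        ((Finset.measurable_sum _ fun t _ => (measurable_pi_apply t).pow_const 2).sqrt)
  have key := integral_perm hmeas hindep hident σ hg
  have hY : ∀ (a : Fin n) (ω : Ω), Yvec X n a ω
      = X a ω / Real.sqrt (∑ t : Fin n, (X t ω) ^ 2) := by
    intro a ω
    rw [Yvec, Fin.sum_univ_eq_sum_range (fun t => (X t ω) ^ 2) n]
  have h1 : (fun ω => g (fun t => X (σ t) ω))
      = fun ω => (Yvec X n (σ i) ω * Yvec X n (σ j) ω) ^ k := by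
    funext ω
    have hs : (∑ t : Fin n, (X (σ t) ω) ^ 2) = ∑ t : Fin n, (X t ω) ^ 2 :=
      Equiv.sum_comp σ (fun t : Fin n => (X t ω) ^ 2)
    simp only [g, hs, hY]
  have h2 : (fun ω => g (fun t : Fin n => X t ω))
      = fun ω => (Yvec X n i ω * Yvec X n j ω) ^ k := by
    funext ω; simp only [g, hY]
  rw [h1, h2] at key
  exact key

lemma integrable_of_bound {f : Ω → ℝ} (hf : Measurable f) (c : ℝ) (h : ∀ ω, |f ω| ≤ c) :
    Integrable f P :=
  (integrable_const c).mono' hf.aestronglyMeasurable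
    (Filter.Eventually.of_forall (by simpa [Real.norm_eq_abs] using h))

lemma abs_integral_le {f : Ω → ℝ} (hf : Measurable f) {c : ℝ} (h : ∀ ω, |f ω| ≤ c) :
    |∫ ω, f ω ∂P| ≤ c := by
  calc |∫ ω, f ω ∂P| ≤ ∫ ω, |f ω| ∂P := by
        simpa [Real.norm_eq_abs] using norm_integral_le_integral_norm (μ := P) f
    _ ≤ ∫ (_ : Ω), c ∂P :=
        integral_mono (integrable_of_bound hf c h).abs (integrable_const c) h
    _ = c := by simp

lemma sq_integral_le {f : Ω → ℝ} (hf : Measurable f) (hb : ∀ ω, |f ω| ≤ 1) :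
    (∫ ω, f ω ∂P) ^ 2 ≤ ∫ ω, f ω ^ 2 ∂P := by
  set c := ∫ ω, f ω ∂P with hc
  have hint : Integrable f P := integrable_of_bound hf 1 hb
  have hint2 : Integrable (fun ω => f ω ^ 2) P := by
    refine integrable_of_bound (hf.pow_const 2) 1 fun ω => ?_
    rw [abs_pow]
    exact pow_le_one₀ (abs_nonneg _) (hb ω)
  have h0 : 0 ≤ ∫ ω, (f ω - c) ^ 2 ∂P := integral_nonneg fun ω => sq_nonneg _
  have hexp : ∫ ω, (f ω - c) ^ 2 ∂P = (∫ ω, f ω ^ 2 ∂P) - c ^ 2 := by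
    have hpt : ∀ ω, (f ω - c) ^ 2 = f ω ^ 2 - (2 * c) * f ω + c ^ 2 := fun ω => by ring
    have hi1 : Integrable (fun ω => f ω ^ 2 - 2 * c * f ω) P := hint2.sub (hint.const_mul _)
    rw [integral_congr_ae (Filter.Eventually.of_forall hpt),
      integral_add hi1 (integrable_const _),
      integral_sub hint2 (hint.const_mul _), integral_const_mul, integral_const]
    simp [← hc]
    ring
  linarith

/-- The product `Y_{p.1} Y_{p.2}`. -/
def Zp (X : ℕ → Ω → ℝ) (n : ℕ) (p : Fin n × Fin n) (ω : Ω) : ℝ :=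
  Yvec X n p.1 ω * Yvec X n p.2 ω

lemma Zp_apply (X : ℕ → Ω → ℝ) (n : ℕ) (p : Fin n × Fin n) (ω : Ω) :
    Zp X n p ω = Yvec X n p.1 ω * Yvec X n p.2 ω := rfl

lemma Zp_meas (hmeas : ∀ t, Measurable (X t)) (n : ℕ) (p : Fin n × Fin n) :
    Measurable (Zp X n p) :=
  (Yvec_meas hmeas n p.1).mul (Yvec_meas hmeas n p.2)

lemma Zp_abs_le (n : ℕ) (p : Fin n × Fin n) (ω : Ω) : |Zp X n p ω| ≤ 1 := by
  rw [Zp, abs_mul]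
  exact mul_le_one₀ (Yvec_abs_le p.1.2 ω) (abs_nonneg _) (Yvec_abs_le p.2.2 ω)

/-- covariance of `Z_p` and `Z_q`. -/
def covp (P : Measure Ω) (X : ℕ → Ω → ℝ) (n : ℕ) (p q : Fin n × Fin n) : ℝ :=
  (∫ ω, Zp X n p ω * Zp X n q ω ∂P) -
    (∫ ω, Zp X n p ω ∂P) * (∫ ω, Zp X n q ω ∂P)

lemma covp_self_nonneg (hmeas : ∀ t, Measurable (X t)) (n : ℕ) (p : Fin n × Fin n) :
    0 ≤ covp P X n p p := by
  have h := sq_integral_le (P := P) (Zp_meas hmeas n p) (Zp_abs_le n p)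
  have h2 : ∫ ω, Zp X n p ω * Zp X n p ω ∂P = ∫ ω, Zp X n p ω ^ 2 ∂P :=
    integral_congr_ae (Filter.Eventually.of_forall fun ω => by ring)
  rw [covp, h2]
  nlinarith

lemma covp_self_le (hmeas : ∀ t, Measurable (X t)) (n : ℕ) (p : Fin n × Fin n) :
    covp P X n p p ≤ ∫ ω, Zp X n p ω ^ 2 ∂P := by
  have h2 : ∫ ω, Zp X n p ω * Zp X n p ω ∂P = ∫ ω, Zp X n p ω ^ 2 ∂P :=
    integral_congr_ae (Filter.Eventually.of_forall fun ω => by ring)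
  rw [covp, h2]
  nlinarith [sq_nonneg (∫ ω, Zp X n p ω ∂P)]

lemma covp_swap (n : ℕ) (p : Fin n × Fin n) :
    covp P X n p (p.2, p.1) = covp P X n p p := by
  have hz : ∀ ω, Zp X n (p.2, p.1) ω = Zp X n p ω := fun ω => by
    simp [Zp, mul_comm]
  rw [covp, covp,
    integral_congr_ae (Filter.Eventually.of_forall fun ω => by rw [hz ω]),
    integral_congr_ae (g := fun ω => Zp X n p ω) (Filter.Eventually.of_forall fun ω => hz ω)]

lemma integral_sub_mul_sub (hmeas : ∀ t, Measurable (X t)) (n : ℕ) (p q : Fin n × Fin n) :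
    ∫ ω, (Zp X n p ω - ∫ ω', Zp X n p ω' ∂P) * (Zp X n q ω - ∫ ω', Zp X n q ω' ∂P) ∂P
      = covp P X n p q := by
  set a := ∫ ω', Zp X n p ω' ∂P with ha
  set b := ∫ ω', Zp X n q ω' ∂P with hb
  have hip : Integrable (Zp X n p) P :=
    integrable_of_bound (Zp_meas hmeas n p) 1 (Zp_abs_le n p)
  have hiq : Integrable (Zp X n q) P :=
    integrable_of_bound (Zp_meas hmeas n q) 1 (Zp_abs_le n q)
  have hipq : Integrable (fun ω => Zp X n p ω * Zp X n q ω) P := by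
    refine integrable_of_bound ((Zp_meas hmeas n p).mul (Zp_meas hmeas n q)) 1 fun ω => ?_
    rw [abs_mul]
    exact mul_le_one₀ (Zp_abs_le n p ω) (abs_nonneg _) (Zp_abs_le n q ω)
  have hpt : ∀ ω, (Zp X n p ω - a) * (Zp X n q ω - b)
      = Zp X n p ω * Zp X n q ω - a * Zp X n q ω - b * Zp X n p ω + a * b :=
    fun ω => by ring
  have hi1 : Integrable (fun ω => Zp X n p ω * Zp X n q ω - a * Zp X n q ω) P :=
    hipq.sub (hiq.const_mul _)
  have hi2 : Integrable
      (fun ω => Zp X n p ω * Zp X n q ω - a * Zp X n q ω - b * Zp X n p ω) P :=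
    hi1.sub (hip.const_mul _)
  rw [integral_congr_ae (Filter.Eventually.of_forall hpt),
    integral_add hi2 (integrable_const _), integral_sub hi1 (hip.const_mul _),
    integral_sub hipq (hiq.const_mul _), integral_const_mul, integral_const_mul, integral_const]
  simp only [covp, ← ha, ← hb, measure_univ, probReal_univ, ENNReal.toReal_one, smul_eq_mul, one_mul]
  ring

lemma expansion (hmeas : ∀ t, Measurable (X t)) (n : ℕ) (M : Matrix (Fin n) (Fin n) ℝ) :
    ∫ ω, (∑ i : Fin n, ∑ j : Fin n, M i j *
        (Yvec X n i ω * Yvec X n j ω - ∫ ω', Yvec X n i ω' * Yvec X n j ω' ∂P)) ^ 2 ∂P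
      = ∑ p : Fin n × Fin n, ∑ q : Fin n × Fin n,
          M p.1 p.2 * M q.1 q.2 * covp P X n p q := by
  set m : Fin n × Fin n → ℝ := fun p => ∫ ω', Zp X n p ω' ∂P with hm
  set F : (Fin n × Fin n) → Ω → ℝ := fun p ω => M p.1 p.2 * (Zp X n p ω - m p) with hF
  have hFmeas : ∀ p, Measurable (F p) := fun p =>
    ((Zp_meas hmeas n p).sub measurable_const).const_mul _
  have hFb : ∀ p ω, |F p ω| ≤ |M p.1 p.2| * 2 := by
    intro p ω
    rw [hF, abs_mul]
    refine mul_le_mul_of_nonneg_left ?_ (abs_nonneg _)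
    have h1 : |m p| ≤ 1 := abs_integral_le (Zp_meas hmeas n p) (Zp_abs_le n p)
    calc |Zp X n p ω - m p| ≤ |Zp X n p ω| + |m p| := abs_sub _ _
      _ ≤ 1 + 1 := add_le_add (Zp_abs_le n p ω) h1
      _ = 2 := by norm_num
  have hFF : ∀ p q, Integrable (fun ω => F p ω * F q ω) P := by
    intro p q
    refine integrable_of_bound ((hFmeas p).mul (hFmeas q))
      ((|M p.1 p.2| * 2) * (|M q.1 q.2| * 2)) fun ω => ?_
    rw [abs_mul]
    exact mul_le_mul (hFb p ω) (hFb q ω) (abs_nonneg _) (by positivity)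
  have hpt : ∀ ω, (∑ i : Fin n, ∑ j : Fin n, M i j *
        (Yvec X n i ω * Yvec X n j ω - ∫ ω', Yvec X n i ω' * Yvec X n j ω' ∂P)) ^ 2
      = ∑ p : Fin n × Fin n, ∑ q : Fin n × Fin n, F p ω * F q ω := by
    intro ω
    have h1 : (∑ i : Fin n, ∑ j : Fin n, M i j *
        (Yvec X n i ω * Yvec X n j ω - ∫ ω', Yvec X n i ω' * Yvec X n j ω' ∂P))
        = ∑ p : Fin n × Fin n, F p ω := (Fintype.sum_prod_type' _).symm
    rw [h1, sq, Finset.sum_mul_sum]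
  calc ∫ ω, (∑ i : Fin n, ∑ j : Fin n, M i j *
        (Yvec X n i ω * Yvec X n j ω - ∫ ω', Yvec X n i ω' * Yvec X n j ω' ∂P)) ^ 2 ∂P
      = ∫ ω, ∑ p : Fin n × Fin n, ∑ q : Fin n × Fin n, F p ω * F q ω ∂P :=
        integral_congr_ae (Filter.Eventually.of_forall hpt)
    _ = ∑ p : Fin n × Fin n, ∫ ω, ∑ q : Fin n × Fin n, F p ω * F q ω ∂P :=
        integral_finset_sum _ fun p _ => integrable_finset_sum _ fun q _ => hFF p q
    _ = ∑ p : Fin n × Fin n, ∑ q : Fin n × Fin n, ∫ ω, F p ω * F q ω ∂P :=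
        Finset.sum_congr rfl fun p _ => integral_finset_sum _ fun q _ => hFF p q
    _ = ∑ p : Fin n × Fin n, ∑ q : Fin n × Fin n, M p.1 p.2 * M q.1 q.2 * covp P X n p q := by
        refine Finset.sum_congr rfl fun p _ => Finset.sum_congr rfl fun q _ => ?_
        have hpt2 : ∀ ω, F p ω * F q ω = (M p.1 p.2 * M q.1 q.2) *
            ((Zp X n p ω - m p) * (Zp X n q ω - m q)) := fun ω => by rw [hF]; ring
        rw [integral_congr_ae (Filter.Eventually.of_forall hpt2), integral_const_mul,
          hm, integral_sub_mul_sub hmeas n p q]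

lemma frob_le {n : ℕ} (M : Matrix (Fin n) (Fin n) ℝ) :
    ∑ p : Fin n × Fin n, (M p.1 p.2) ^ 2 ≤ (n : ℝ) * specNorm M ^ 2 := by
  classical
  have col : ∀ j : Fin n, ∑ i : Fin n, (M i j) ^ 2 ≤ specNorm M ^ 2 := by
    intro j
    set x : EuclideanSpace ℝ (Fin n) := EuclideanSpace.single j (1 : ℝ) with hx
    have hxn : ‖x‖ = 1 := by simp [hx, EuclideanSpace.norm_single]
    have happ : Matrix.toEuclideanCLM (𝕜 := ℝ) M x
        = (WithLp.equiv 2 _).symm (M.mulVec (Pi.single j 1)) := by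
      rw [hx, ← EuclideanSpace.toLp_single, Matrix.toEuclideanCLM_toLp, WithLp.equiv_symm_apply]
    have hnorm : ‖Matrix.toEuclideanCLM (𝕜 := ℝ) M x‖ ≤ specNorm M :=
      le_trans ((Matrix.toEuclideanCLM (𝕜 := ℝ) M).le_opNorm x) (by rw [hxn, mul_one]; rfl)
    have hsq : ‖Matrix.toEuclideanCLM (𝕜 := ℝ) M x‖ ^ 2 = ∑ i, (M i j) ^ 2 := by
      rw [happ, EuclideanSpace.norm_eq, Real.sq_sqrt (by positivity)]
      refine Finset.sum_congr rfl fun i _ => ?_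
      rw [WithLp.equiv_symm_apply, PiLp.toLp_apply, Matrix.mulVec_single]; simp [sq_abs]
    calc ∑ i, (M i j) ^ 2 = ‖Matrix.toEuclideanCLM (𝕜 := ℝ) M x‖ ^ 2 := hsq.symm
      _ ≤ specNorm M ^ 2 := by
          have h0 : (0:ℝ) ≤ ‖Matrix.toEuclideanCLM (𝕜 := ℝ) M x‖ := norm_nonneg _
          nlinarith
  calc ∑ p : Fin n × Fin n, (M p.1 p.2) ^ 2
      = ∑ j : Fin n, ∑ i : Fin n, (M i j) ^ 2 := by
        rw [Fintype.sum_prod_type]; exact Finset.sum_comm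
    _ ≤ ∑ _j : Fin n, specNorm M ^ 2 := Finset.sum_le_sum fun j _ => col j
    _ = (n : ℝ) * specNorm M ^ 2 := by simp [Finset.sum_const, mul_comm]

end QFCAux

open QFCAux

theorem quadratic_form_concentration
    [MeasurableSpace Ω] (P : Measure Ω) [IsProbabilityMeasure P]
    (X : ℕ → Ω → ℝ)
    (hmeas : ∀ t, Measurable (X t))
    (hindep : iIndepFun X P)
    (hident : ∀ t, IdentDistrib (X t) (X 0) P P)
    (hnondeg : ¬ ∃ c : ℝ, ∀ᵐ ω ∂P, X 0 ω = c)
    (B : ∀ n : ℕ, Matrix (Fin n) (Fin n) ℝ)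
    (hB : ∃ C : ℝ, ∀ n, specNorm (B n) ≤ C)
    (hY4 : Tendsto (fun n : ℕ => (n : ℝ) * ∫ ω, (Yvec X n 0 ω) ^ 4 ∂P) atTop (nhds 0))
    (hvar : Tendsto (fun n : ℕ => (n : ℝ) *
        ((∫ ω, (Yvec X n 0 ω * Yvec X n 1 ω) ^ 2 ∂P) -
          (∫ ω, Yvec X n 0 ω * Yvec X n 1 ω ∂P) ^ 2)) atTop (nhds 0))
    (hV : Tendsto (fun n : ℕ => (n : ℝ) ^ 2 *
        ∑ idx ∈ Finset.univ.filter (fun idx : Fin n × Fin n × Fin n × Fin n =>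
            ¬ ((idx.1 = idx.2.2.1 ∧ idx.2.1 = idx.2.2.2) ∨
               (idx.1 = idx.2.2.2 ∧ idx.2.1 = idx.2.2.1 ∧ idx.1 ≠ idx.2.2.1))),
          ((∫ ω, Yvec X n idx.1 ω * Yvec X n idx.2.1 ω *
              (Yvec X n idx.2.2.1 ω * Yvec X n idx.2.2.2 ω) ∂P) -
            (∫ ω, Yvec X n idx.1 ω * Yvec X n idx.2.1 ω ∂P) *
              (∫ ω, Yvec X n idx.2.2.1 ω * Yvec X n idx.2.2.2 ω ∂P)) ^ 2)
        atTop (nhds 0)) :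
    Tendsto (fun n : ℕ =>
        ∫ ω, (∑ i : Fin n, ∑ j : Fin n, B n i j *
            (Yvec X n i ω * Yvec X n j ω - ∫ ω', Yvec X n i ω' * Yvec X n j ω' ∂P)) ^ 2 ∂P)
      atTop (nhds 0) := by
  obtain ⟨C, hC⟩ := hB
  have hC0 : 0 ≤ C := le_trans (norm_nonneg _) (hC 0)
  -- notation for the three vanishing quantities
  set Vq : ℕ → ℝ := fun n =>
      ∑ idx ∈ Finset.univ.filter (fun idx : Fin n × Fin n × Fin n × Fin n =>
            ¬ ((idx.1 = idx.2.2.1 ∧ idx.2.1 = idx.2.2.2) ∨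
               (idx.1 = idx.2.2.2 ∧ idx.2.1 = idx.2.2.1 ∧ idx.1 ≠ idx.2.2.1))),
          ((∫ ω, Yvec X n idx.1 ω * Yvec X n idx.2.1 ω *
              (Yvec X n idx.2.2.1 ω * Yvec X n idx.2.2.2 ω) ∂P) -
            (∫ ω, Yvec X n idx.1 ω * Yvec X n idx.2.1 ω ∂P) *
              (∫ ω, Yvec X n idx.2.2.1 ω * Yvec X n idx.2.2.2 ω ∂P)) ^ 2 with hVq
  set v01 : ℕ → ℝ := fun n =>
      (∫ ω, (Yvec X n 0 ω * Yvec X n 1 ω) ^ 2 ∂P) -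
        (∫ ω, Yvec X n 0 ω * Yvec X n 1 ω ∂P) ^ 2 with hv01
  set e4 : ℕ → ℝ := fun n => ∫ ω, (Yvec X n 0 ω) ^ 4 ∂P with he4
  set G : ℕ → ℝ := fun n =>
      C ^ 2 * Real.sqrt ((n : ℝ) ^ 2 * Vq n) + 2 * C ^ 2 * ((n : ℝ) * |v01 n| + (n : ℝ) * e4 n)
    with hG
  have hGlim : Tendsto G atTop (nhds 0) := by
    have h1 : Tendsto (fun n : ℕ => Real.sqrt ((n : ℝ) ^ 2 * Vq n)) atTop
        (nhds (Real.sqrt 0)) := hV.sqrt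
    rw [Real.sqrt_zero] at h1
    have h2' : Tendsto (fun n : ℕ => |(n : ℝ) * v01 n|) atTop (nhds |0|) := hvar.abs
    rw [abs_zero] at h2'
    have h2 : Tendsto (fun n : ℕ => (n : ℝ) * |v01 n|) atTop (nhds 0) := by
      refine h2'.congr fun n => ?_
      rw [abs_mul, Nat.abs_cast]
    have h3 : Tendsto (fun n : ℕ => (n : ℝ) * e4 n) atTop (nhds 0) := hY4
    have hsum := (h1.const_mul (C ^ 2)).add ((h2.add h3).const_mul (2 * C ^ 2))
    have hz : (C ^ 2 * 0 + 2 * C ^ 2 * (0 + 0) : ℝ) = 0 := by ring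
    rw [hz] at hsum
    exact hsum
  refine squeeze_zero (fun n => integral_nonneg fun ω => sq_nonneg _) (fun n => ?_) hGlim
  -- fix n; expand and bound
  classical
  rw [expansion hmeas n (B n)]
  set f4 : Fin n × Fin n × Fin n × Fin n → ℝ := fun idx =>
    B n idx.1 idx.2.1 * B n idx.2.2.1 idx.2.2.2 *
      covp P X n (idx.1, idx.2.1) (idx.2.2.1, idx.2.2.2) with hf4
  have hreindex : (∑ p : Fin n × Fin n, ∑ q : Fin n × Fin n,
      B n p.1 p.2 * B n q.1 q.2 * covp P X n p q)
      = ∑ idx : Fin n × Fin n × Fin n × Fin n, f4 idx := by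
    simp only [Fintype.sum_prod_type, hf4]
  set pred : Fin n × Fin n × Fin n × Fin n → Prop := fun idx =>
    ((idx.1 = idx.2.2.1 ∧ idx.2.1 = idx.2.2.2) ∨
      (idx.1 = idx.2.2.2 ∧ idx.2.1 = idx.2.2.1 ∧ idx.1 ≠ idx.2.2.1)) with hpred
  have hsplit := Finset.sum_filter_add_sum_filter_not Finset.univ pred f4
  -- Frobenius-norm bound
  have hfrob : ∑ p : Fin n × Fin n, (B n p.1 p.2) ^ 2 ≤ (n : ℝ) * C ^ 2 := by
    refine le_trans (frob_le (B n)) ?_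
    have h0 : (0:ℝ) ≤ specNorm (B n) := norm_nonneg _
    have hsq : specNorm (B n) ^ 2 ≤ C ^ 2 := by nlinarith [hC n]
    have hn0 : (0:ℝ) ≤ (n:ℝ) := by positivity
    exact mul_le_mul_of_nonneg_left hsq hn0
  have hfrob0 : 0 ≤ ∑ p : Fin n × Fin n, (B n p.1 p.2) ^ 2 :=
    Finset.sum_nonneg fun _ _ => sq_nonneg _
  -- the constant K bounding diagonal covariances
  set Kc : ℝ := |v01 n| + e4 n with hKc
  have he40 : 0 ≤ e4 n := integral_nonneg fun ω => by positivity
  have hKc0 : 0 ≤ Kc := add_nonneg (abs_nonneg _) he40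
  have hcovKc : ∀ p : Fin n × Fin n, |covp P X n p p| ≤ Kc := by
    intro p
    rw [abs_of_nonneg (covp_self_nonneg hmeas n p)]
    rcases eq_or_ne p.1 p.2 with hpq | hpq
    · -- diagonal pair: bounded by the fourth moment
      have npos : 0 < n := p.1.pos
      set a : Fin n := ⟨0, npos⟩ with hadef
      set σ : Equiv.Perm (Fin n) := Equiv.swap a p.1 with hσ
      have hmom := moment_pair_perm hmeas hindep hident σ a a 2
      rw [hσ, Equiv.swap_apply_left] at hmom
      have h1 : covp P X n p p ≤ ∫ ω, Zp X n p ω ^ 2 ∂P := covp_self_le hmeas n p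
      have h2 : ∫ ω, Zp X n p ω ^ 2 ∂P = ∫ ω, (Yvec X n p.1 ω * Yvec X n p.1 ω) ^ 2 ∂P := by
        refine integral_congr_ae (Filter.Eventually.of_forall fun ω => ?_)
        beta_reduce
        rw [Zp_apply, ← hpq]
      have h3 : ∫ ω, (Yvec X n (a : ℕ) ω * Yvec X n (a : ℕ) ω) ^ 2 ∂P = e4 n := by
        refine integral_congr_ae (Filter.Eventually.of_forall fun ω => ?_)
        show (Yvec X n 0 ω * Yvec X n 0 ω) ^ 2 = (Yvec X n 0 ω) ^ 4
        ring
      have : covp P X n p p ≤ e4 n := by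
        rw [← h3, ← hmom]
        exact le_trans h1 (le_of_eq h2)
      exact le_trans this (le_add_of_nonneg_left (abs_nonneg _))
    · -- off-diagonal pair: equals v01
      have hne : (p.1 : ℕ) ≠ (p.2 : ℕ) := fun h => hpq (Fin.ext h)
      have h2n : 2 ≤ n := by
        have := p.1.2; have := p.2.2; omega
      set a : Fin n := ⟨0, by omega⟩ with hadef
      set b : Fin n := ⟨1, by omega⟩ with hbdef
      have hab : a ≠ b := by
        intro h
        have : (0 : ℕ) = 1 := congrArg Fin.val h
        omega
      obtain ⟨σ, hσa, hσb⟩ := exists_perm_pair hab hpq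
      have hmom2 := moment_pair_perm hmeas hindep hident σ a b 2
      have hmom1 := moment_pair_perm hmeas hindep hident σ a b 1
      rw [hσa, hσb] at hmom2 hmom1
      have heq : covp P X n p p = v01 n := by
        rw [covp, hv01]
        have hzz : ∫ ω, Zp X n p ω * Zp X n p ω ∂P
            = ∫ ω, (Yvec X n p.1 ω * Yvec X n p.2 ω) ^ 2 ∂P :=
          integral_congr_ae (Filter.Eventually.of_forall fun ω => by beta_reduce; rw [Zp_apply]; ring)
        have hz1 : ∫ ω, Zp X n p ω ∂P
            = ∫ ω, (Yvec X n p.1 ω * Yvec X n p.2 ω) ^ 1 ∂P :=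
          integral_congr_ae (Filter.Eventually.of_forall fun ω => by beta_reduce; rw [Zp_apply]; ring)
        rw [hzz, hz1, hmom2, hmom1]
        have ha0 : ((a : ℕ)) = 0 := rfl
        have hb1 : ((b : ℕ)) = 1 := rfl
        rw [ha0, hb1]
        have : ∫ ω, (Yvec X n 0 ω * Yvec X n 1 ω) ^ 1 ∂P
            = ∫ ω, Yvec X n 0 ω * Yvec X n 1 ω ∂P :=
          integral_congr_ae (Filter.Eventually.of_forall fun ω => by ring)
        rw [this]
        ring
      rw [heq]
      exact le_trans (le_abs_self _) (le_add_of_nonneg_right he40)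
  -- diagonal part bound
  have hdiag : ∑ idx ∈ Finset.univ.filter pred, f4 idx
      ≤ 2 * C ^ 2 * ((n : ℝ) * |v01 n| + (n : ℝ) * e4 n) := by
    set pred1 : Fin n × Fin n × Fin n × Fin n → Prop := fun idx =>
      idx.2.2.1 = idx.1 ∧ idx.2.2.2 = idx.2.1 with hpred1
    set pred2 : Fin n × Fin n × Fin n × Fin n → Prop := fun idx =>
      idx.2.2.1 = idx.2.1 ∧ idx.2.2.2 = idx.1 with hpred2
    have hsub : Finset.univ.filter pred ⊆
        Finset.univ.filter pred1 ∪ Finset.univ.filter pred2 := by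
      intro idx h
      simp only [Finset.mem_filter, Finset.mem_union, Finset.mem_univ, true_and,
        hpred, hpred1, hpred2] at h ⊢
      rcases h with ⟨h1, h2⟩ | ⟨h1, h2, _⟩
      · exact Or.inl ⟨h1.symm, h2.symm⟩
      · exact Or.inr ⟨h2.symm, h1.symm⟩
    have hset1 : Finset.univ.filter pred1 =
        Finset.image (fun p : Fin n × Fin n => (p.1, p.2, p.1, p.2)) Finset.univ := by
      ext idx
      obtain ⟨i1, j1, i2, j2⟩ := idx
      simp only [Finset.mem_filter, Finset.mem_image, Finset.mem_univ, true_and,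
        hpred1, Prod.mk.injEq]
      constructor
      · rintro ⟨h1, h2⟩; exact ⟨(i1, j1), rfl, rfl, h1.symm, h2.symm⟩
      · rintro ⟨p, hp1, hp2, hp3, hp4⟩
        exact ⟨by rw [← hp3, hp1], by rw [← hp4, hp2]⟩
    have hset2 : Finset.univ.filter pred2 =
        Finset.image (fun p : Fin n × Fin n => (p.1, p.2, p.2, p.1)) Finset.univ := by
      ext idx
      obtain ⟨i1, j1, i2, j2⟩ := idx
      simp only [Finset.mem_filter, Finset.mem_image, Finset.mem_univ, true_and,
        hpred2, Prod.mk.injEq]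
      constructor
      · rintro ⟨h1, h2⟩; exact ⟨(i1, j1), rfl, rfl, h1.symm, h2.symm⟩
      · rintro ⟨p, hp1, hp2, hp3, hp4⟩
        exact ⟨by rw [← hp3, hp2], by rw [← hp4, hp1]⟩
    have hinj1 : Set.InjOn (fun p : Fin n × Fin n => (p.1, p.2, p.1, p.2))
        (Finset.univ : Finset (Fin n × Fin n)) := by
      intro p _ q _ h
      simp only [Prod.mk.injEq] at h
      exact Prod.ext h.1 h.2.1
    have hinj2 : Set.InjOn (fun p : Fin n × Fin n => (p.1, p.2, p.2, p.1))
        (Finset.univ : Finset (Fin n × Fin n)) := by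
      intro p _ q _ h
      simp only [Prod.mk.injEq] at h
      exact Prod.ext h.1 h.2.1
    have hsum1 : ∑ idx ∈ Finset.univ.filter pred1, |f4 idx|
        = ∑ p : Fin n × Fin n, (B n p.1 p.2) ^ 2 * |covp P X n p p| := by
      rw [hset1, Finset.sum_image hinj1]
      refine Finset.sum_congr rfl fun p _ => ?_
      show |B n p.1 p.2 * B n p.1 p.2 * covp P X n (p.1, p.2) (p.1, p.2)| = _
      rw [abs_mul, abs_mul_self, ← sq, Prod.mk.eta]
    have hsum2 : ∑ idx ∈ Finset.univ.filter pred2, |f4 idx|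
        ≤ ∑ p : Fin n × Fin n,
            (((B n p.1 p.2) ^ 2 + (B n p.2 p.1) ^ 2) / 2) * |covp P X n p p| := by
      rw [hset2, Finset.sum_image hinj2]
      refine Finset.sum_le_sum fun p _ => ?_
      show |B n p.1 p.2 * B n p.2 p.1 * covp P X n (p.1, p.2) (p.2, p.1)| ≤ _
      have hcs : covp P X n (p.1, p.2) (p.2, p.1) = covp P X n p p := by
        have := covp_swap (P := P) (X := X) n p
        simpa [Prod.mk.eta] using this
      rw [hcs, abs_mul, abs_mul]
      refine mul_le_mul_of_nonneg_right ?_ (abs_nonneg _)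
      nlinarith [sq_nonneg (|B n p.1 p.2| - |B n p.2 p.1|), sq_abs (B n p.1 p.2),
        sq_abs (B n p.2 p.1), abs_nonneg (B n p.1 p.2), abs_nonneg (B n p.2 p.1)]
    have hswapsum : ∑ p : Fin n × Fin n, (B n p.2 p.1) ^ 2 * |covp P X n p p|
        ≤ Kc * ∑ p : Fin n × Fin n, (B n p.2 p.1) ^ 2 := by
      rw [Finset.mul_sum]
      refine Finset.sum_le_sum fun p _ => ?_
      rw [mul_comm (Kc)]
      exact mul_le_mul_of_nonneg_left (hcovKc p) (sq_nonneg _)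
    have hswap : ∑ p : Fin n × Fin n, (B n p.2 p.1) ^ 2
        = ∑ p : Fin n × Fin n, (B n p.1 p.2) ^ 2 :=
      Fintype.sum_equiv (Equiv.prodComm (Fin n) (Fin n))
        (fun p => (B n p.2 p.1) ^ 2) (fun p => (B n p.1 p.2) ^ 2) (fun p => rfl)
    have hsum1le : ∑ p : Fin n × Fin n, (B n p.1 p.2) ^ 2 * |covp P X n p p|
        ≤ Kc * ((n : ℝ) * C ^ 2) := by
      calc ∑ p : Fin n × Fin n, (B n p.1 p.2) ^ 2 * |covp P X n p p|
          ≤ ∑ p : Fin n × Fin n, (B n p.1 p.2) ^ 2 * Kc :=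
            Finset.sum_le_sum fun p _ => mul_le_mul_of_nonneg_left (hcovKc p) (sq_nonneg _)
        _ = (∑ p : Fin n × Fin n, (B n p.1 p.2) ^ 2) * Kc := by rw [← Finset.sum_mul]
        _ ≤ ((n : ℝ) * C ^ 2) * Kc := mul_le_mul_of_nonneg_right hfrob hKc0
        _ = Kc * ((n : ℝ) * C ^ 2) := by ring
    have hsum2le : ∑ idx ∈ Finset.univ.filter pred2, |f4 idx| ≤ Kc * ((n : ℝ) * C ^ 2) := by
      refine le_trans hsum2 ?_
      have : ∑ p : Fin n × Fin n,
          (((B n p.1 p.2) ^ 2 + (B n p.2 p.1) ^ 2) / 2) * |covp P X n p p|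
          ≤ ∑ p : Fin n × Fin n,
            (((B n p.1 p.2) ^ 2 + (B n p.2 p.1) ^ 2) / 2) * Kc :=
        Finset.sum_le_sum fun p _ =>
          mul_le_mul_of_nonneg_left (hcovKc p) (by positivity)
      refine le_trans this ?_
      have heq : ∑ p : Fin n × Fin n, (((B n p.1 p.2) ^ 2 + (B n p.2 p.1) ^ 2) / 2) * Kc
          = (∑ p : Fin n × Fin n, (B n p.1 p.2) ^ 2) * Kc := by
        rw [← Finset.sum_mul]
        congr 1
        rw [← Finset.sum_div, Finset.sum_add_distrib, hswap]
        ring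
      rw [heq]
      calc (∑ p : Fin n × Fin n, (B n p.1 p.2) ^ 2) * Kc
          ≤ ((n : ℝ) * C ^ 2) * Kc := mul_le_mul_of_nonneg_right hfrob hKc0
        _ = Kc * ((n : ℝ) * C ^ 2) := by ring
    have habs : ∑ idx ∈ Finset.univ.filter pred, f4 idx
        ≤ ∑ idx ∈ Finset.univ.filter pred, |f4 idx| :=
      Finset.sum_le_sum fun idx _ => le_abs_self _
    have hsubs : ∑ idx ∈ Finset.univ.filter pred, |f4 idx|
        ≤ ∑ idx ∈ Finset.univ.filter pred1 ∪ Finset.univ.filter pred2, |f4 idx| :=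
      Finset.sum_le_sum_of_subset_of_nonneg hsub fun idx _ _ => abs_nonneg _
    have hunion : ∑ idx ∈ Finset.univ.filter pred1 ∪ Finset.univ.filter pred2, |f4 idx|
        ≤ (∑ idx ∈ Finset.univ.filter pred1, |f4 idx|)
          + ∑ idx ∈ Finset.univ.filter pred2, |f4 idx| := by
      have h := Finset.sum_union_inter (s₁ := Finset.univ.filter pred1)
        (s₂ := Finset.univ.filter pred2) (f := fun idx => |f4 idx|)
      have h0 : 0 ≤ ∑ idx ∈ Finset.univ.filter pred1 ∩ Finset.univ.filter pred2, |f4 idx| :=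
        Finset.sum_nonneg fun _ _ => abs_nonneg _
      linarith
    have htot : ∑ idx ∈ Finset.univ.filter pred, f4 idx ≤ 2 * (Kc * ((n : ℝ) * C ^ 2)) := by
      have h1' : ∑ idx ∈ Finset.univ.filter pred1, |f4 idx| ≤ Kc * ((n : ℝ) * C ^ 2) := by
        rw [hsum1]; exact hsum1le
      linarith [habs, hsubs, hunion, hsum2le, h1']
    refine le_trans htot (le_of_eq ?_)
    rw [hKc]
    ring
  -- off-diagonal part bound
  have hoff : ∑ idx ∈ Finset.univ.filter (fun idx => ¬ pred idx), f4 idx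
      ≤ C ^ 2 * Real.sqrt ((n : ℝ) ^ 2 * Vq n) := by
    set s := Finset.univ.filter (fun idx : Fin n × Fin n × Fin n × Fin n => ¬ pred idx) with hs
    have hVeq : Vq n = ∑ idx ∈ s,
        (covp P X n (idx.1, idx.2.1) (idx.2.2.1, idx.2.2.2)) ^ 2 := by
      rfl
    have hV0 : 0 ≤ Vq n := by
      rw [hVeq]; exact Finset.sum_nonneg fun _ _ => sq_nonneg _
    have hcs := Finset.sum_mul_sq_le_sq_mul_sq s
      (fun idx => B n idx.1 idx.2.1 * B n idx.2.2.1 idx.2.2.2)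
      (fun idx => covp P X n (idx.1, idx.2.1) (idx.2.2.1, idx.2.2.2))
    have hBsq : ∑ idx ∈ s, (B n idx.1 idx.2.1 * B n idx.2.2.1 idx.2.2.2) ^ 2
        ≤ ((n : ℝ) * C ^ 2) ^ 2 := by
      have hall : ∑ idx ∈ s, (B n idx.1 idx.2.1 * B n idx.2.2.1 idx.2.2.2) ^ 2
          ≤ ∑ idx : Fin n × Fin n × Fin n × Fin n,
              (B n idx.1 idx.2.1 * B n idx.2.2.1 idx.2.2.2) ^ 2 :=
        Finset.sum_le_sum_of_subset_of_nonneg (Finset.filter_subset _ _)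
          fun _ _ _ => sq_nonneg _
      have hfact : ∑ idx : Fin n × Fin n × Fin n × Fin n,
          (B n idx.1 idx.2.1 * B n idx.2.2.1 idx.2.2.2) ^ 2
          = (∑ p : Fin n × Fin n, (B n p.1 p.2) ^ 2) ^ 2 := by
        rw [sq (∑ p : Fin n × Fin n, (B n p.1 p.2) ^ 2), Finset.sum_mul_sum]
        simp only [Fintype.sum_prod_type, mul_pow]
      have hsq : (∑ p : Fin n × Fin n, (B n p.1 p.2) ^ 2) ^ 2 ≤ ((n : ℝ) * C ^ 2) ^ 2 := by
        have := mul_self_le_mul_self hfrob0 hfrob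
        nlinarith
      calc ∑ idx ∈ s, (B n idx.1 idx.2.1 * B n idx.2.2.1 idx.2.2.2) ^ 2
          ≤ (∑ p : Fin n × Fin n, (B n p.1 p.2) ^ 2) ^ 2 := hfact ▸ hall
        _ ≤ ((n : ℝ) * C ^ 2) ^ 2 := hsq
    have hsq2 : (∑ idx ∈ s, f4 idx) ^ 2 ≤ ((n : ℝ) * C ^ 2) ^ 2 * Vq n := by
      have hle2 : (∑ idx ∈ s, f4 idx) ^ 2
          ≤ (∑ idx ∈ s, (B n idx.1 idx.2.1 * B n idx.2.2.1 idx.2.2.2) ^ 2)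
            * ∑ idx ∈ s, (covp P X n (idx.1, idx.2.1) (idx.2.2.1, idx.2.2.2)) ^ 2 := hcs
      rw [hVeq]
      have hcv0 : 0 ≤ ∑ idx ∈ s, (covp P X n (idx.1, idx.2.1) (idx.2.2.1, idx.2.2.2)) ^ 2 :=
        Finset.sum_nonneg fun _ _ => sq_nonneg _
      calc (∑ idx ∈ s, f4 idx) ^ 2
          ≤ (∑ idx ∈ s, (B n idx.1 idx.2.1 * B n idx.2.2.1 idx.2.2.2) ^ 2)
            * ∑ idx ∈ s, (covp P X n (idx.1, idx.2.1) (idx.2.2.1, idx.2.2.2)) ^ 2 := hle2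
        _ ≤ ((n : ℝ) * C ^ 2) ^ 2
            * ∑ idx ∈ s, (covp P X n (idx.1, idx.2.1) (idx.2.2.1, idx.2.2.2)) ^ 2 :=
            mul_le_mul_of_nonneg_right hBsq hcv0
    calc ∑ idx ∈ s, f4 idx ≤ |∑ idx ∈ s, f4 idx| := le_abs_self _
      _ = Real.sqrt ((∑ idx ∈ s, f4 idx) ^ 2) := (Real.sqrt_sq_eq_abs _).symm
      _ ≤ Real.sqrt (((n : ℝ) * C ^ 2) ^ 2 * Vq n) := Real.sqrt_le_sqrt hsq2
      _ = C ^ 2 * Real.sqrt ((n : ℝ) ^ 2 * Vq n) := by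
          rw [Real.sqrt_mul (sq_nonneg _), Real.sqrt_mul (sq_nonneg _),
            Real.sqrt_sq (by positivity : (0:ℝ) ≤ (n : ℝ) * C ^ 2),
            Real.sqrt_sq (by positivity : (0:ℝ) ≤ (n : ℝ))]
          ring
  rw [hreindex, ← hsplit]
  exact le_trans (add_le_add hdiag hoff) (le_of_eq (by simp only [hG]; ring))

end
end

section
/- For every positive integer k and every integer j with 1 ≤ j ≤ k, one has −∑_{i=2j−1}^{2k} (−1)^i · binom(2k, i) · binom(i−1, 2j−2) = 1. -/
open Finset

lemma lemA (n r : ℕ) (h : r < n) :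
    ∑ t ∈ Finset.range (n+1), (-1:ℤ)^t * (n.choose t) * (t.choose r) = 0 := by
  have drop : ∑ t ∈ Finset.range (n+1), (-1:ℤ)^t * (n.choose t) * (t.choose r)
      = ∑ t ∈ Finset.Icc r n, (-1:ℤ)^t * (n.choose t) * (t.choose r) := by
    rw [Finset.range_eq_Ico, ← Finset.Ico_add_one_right_eq_Icc]
    apply (Finset.sum_subset ?_ ?_).symm
    · intro x hx; simp [Finset.mem_Ico] at hx ⊢; omega
    · intro x hx hx2; simp [Finset.mem_Ico] at hx hx2
      rw [Nat.choose_eq_zero_of_lt (show x < r by omega)]; simp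
  rw [drop, ← Finset.Ico_add_one_right_eq_Icc, Finset.sum_Ico_eq_sum_range,
    show n + 1 - r = n - r + 1 by omega]
  have key : ∀ s ∈ Finset.range (n - r + 1),
      (-1:ℤ)^(r+s) * (n.choose (r+s)) * ((r+s).choose r)
        = ((-1:ℤ)^r * (n.choose r)) * ((-1:ℤ)^s * ((n-r).choose s)) := by
    intro s hs
    rw [Finset.mem_range] at hs
    have hle : r + s ≤ n := by omega
    have hc := Nat.choose_mul (n := n) (k := r + s) (s := r) (by omega)
    rw [Nat.add_sub_cancel_left] at hc
    have hc' : ((n.choose (r+s) : ℤ)) * ((r+s).choose r) = (n.choose r) * ((n-r).choose s) := by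
      exact_mod_cast congrArg (Nat.cast : ℕ → ℤ) hc
    rw [mul_assoc, hc', pow_add]; ring
  rw [Finset.sum_congr rfl key, ← Finset.mul_sum,
    Int.alternating_sum_range_choose_of_ne (show n - r ≠ 0 by omega), mul_zero]

lemma lemB (m : ℕ) (hm : 1 ≤ m) : ∀ n, m ≤ n →
    ∑ i ∈ Finset.Icc m n, (-1:ℤ)^i * (n.choose i) * ((i-1).choose (m-1)) = (-1:ℤ)^m := by
  intro n
  induction n with
  | zero => omega
  | succ n ih =>
    intro hmn
    rcases Nat.lt_or_ge n m with hlt | hge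
    · have hnm : n + 1 = m := by omega
      subst hnm
      simp [Nat.choose_self]
    · have hS := ih hge
      have expand : ∀ i ∈ Finset.Icc m (n+1),
          (-1:ℤ)^i * ((n+1).choose i) * ((i-1).choose (m-1))
          = (-1:ℤ)^i * (n.choose i) * ((i-1).choose (m-1))
            + (-1:ℤ)^i * (n.choose (i-1)) * ((i-1).choose (m-1)) := by
        intro i hi
        rw [Finset.mem_Icc] at hi
        have : (n+1).choose i = n.choose i + n.choose (i-1) := by
          rw [show i = (i-1)+1 by omega, Nat.choose_succ_succ', Nat.add_sub_cancel]
          exact Nat.add_comm _ _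
        rw [this]; push_cast; ring
      rw [Finset.sum_congr rfl expand, Finset.sum_add_distrib]
      have split1 : ∑ i ∈ Finset.Icc m (n+1), (-1:ℤ)^i * (n.choose i) * ((i-1).choose (m-1))
          = ∑ i ∈ Finset.Icc m n, (-1:ℤ)^i * (n.choose i) * ((i-1).choose (m-1)) := by
        rw [Finset.sum_Icc_succ_top (by omega)]
        rw [Nat.choose_eq_zero_of_lt (by omega)]
        simp
      have split2 : ∑ i ∈ Finset.Icc m (n+1), (-1:ℤ)^i * (n.choose (i-1)) * ((i-1).choose (m-1)) = 0 := by
        have reindex : ∑ i ∈ Finset.Icc m (n+1), (-1:ℤ)^i * (n.choose (i-1)) * ((i-1).choose (m-1))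
            = ∑ t ∈ Finset.Icc (m-1) n, (-1:ℤ)^(t+1) * (n.choose t) * (t.choose (m-1)) := by
          rw [Finset.sum_bij (fun i _ => i - 1)]
          · intro i hi; rw [Finset.mem_Icc] at *; omega
          · intro a ha b hb; rw [Finset.mem_Icc] at *; omega
          · intro t ht; rw [Finset.mem_Icc] at ht
            exact ⟨t+1, Finset.mem_Icc.mpr (by omega), by omega⟩
          · intro i hi; rw [Finset.mem_Icc] at hi
            rw [show i - 1 + 1 = i by omega]
        rw [reindex]
        have step : ∑ t ∈ Finset.Icc (m-1) n, (-1:ℤ)^(t+1) * (n.choose t) * (t.choose (m-1))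
            = -∑ t ∈ Finset.Icc (m-1) n, (-1:ℤ)^t * (n.choose t) * (t.choose (m-1)) := by
          rw [← Finset.sum_neg_distrib]
          apply Finset.sum_congr rfl; intro t _; ring
        rw [step]
        have full : ∑ t ∈ Finset.Icc (m-1) n, (-1:ℤ)^t * (n.choose t) * (t.choose (m-1))
            = ∑ t ∈ Finset.range (n+1), (-1:ℤ)^t * (n.choose t) * (t.choose (m-1)) := by
          rw [Finset.range_eq_Ico, ← Finset.Ico_add_one_right_eq_Icc]
          apply Finset.sum_subset
          · intro x hx; simp [Finset.mem_Ico] at hx ⊢; omega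
          · intro x hx hx2
            simp [Finset.mem_Ico] at hx hx2
            rw [Nat.choose_eq_zero_of_lt (show x < m - 1 by omega)]
            simp
        rw [full, lemA n (m-1) (by omega), neg_zero]
      rw [split1, split2, add_zero, hS]

theorem alternating_binomial_sum_eq_one (k j : ℕ) (hk : 1 ≤ k) (hj1 : 1 ≤ j) (hjk : j ≤ k) :
    -(∑ i ∈ Finset.Icc (2 * j - 1) (2 * k),
        (-1 : ℤ) ^ i * (Nat.choose (2 * k) i) * (Nat.choose (i - 1) (2 * j - 2))) = 1 := by
  have h := lemB (2*j-1) (by omega) (2*k) (by omega)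
  rw [show 2*j-1-1 = 2*j-2 by omega] at h
  rw [h, show 2*j-1 = 2*(j-1)+1 by omega, pow_succ, pow_mul]
  simp
end

section
/- For every positive integer k and every x ∈ [0,1], the function f_k(x) = 1 + ∑_{i=1}^{2k} binom(2k, i) · (−1/(1+x))^i · ∑_{r=1}^{i} (1/r)·binom(i, r−1)·binom(i−1, r−1)·x^{r−1} satisfies f_k(x) = 1 − ∑_{j=1}^{k} (x^{j−1}/(1+x)^{2j−1}) · (2j−2)! / (j!(j−1)!), and moreover f_k(x) ≤ (4x)^k / (1+x)^{2k−1}. -/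
noncomputable section

/-- The function `f_k(x)` from Heiny–Mikosch (A.2). -/
def fkfun (k : ℕ) (x : ℝ) : ℝ :=
  1 + ∑ i ∈ Finset.Icc 1 (2 * k), (Nat.choose (2 * k) i : ℝ) * (-1 / (1 + x)) ^ i *
      ∑ r ∈ Finset.Icc 1 i, (1 / (r : ℝ)) * (Nat.choose i (r - 1)) *
        (Nat.choose (i - 1) (r - 1)) * x ^ (r - 1)

open Finset

namespace HM

/-- alternating sum with two binomials vanishes when `m < n` (ℤ version). -/
lemma alt_choose_choose {n m : ℕ} (h : m < n) :
    ∑ i ∈ range (n + 1), (-1 : ℤ) ^ i * (n.choose i) * (i.choose m) = 0 := by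
  have hsplit : range (n+1) = Ico 0 m ∪ Ico m (n+1) := by
    rw [Finset.Ico_union_Ico_eq_Ico (Nat.zero_le m) (by omega), Finset.range_eq_Ico]
  rw [hsplit, Finset.sum_union]
  · have h1 : ∑ i ∈ Ico 0 m, (-1 : ℤ) ^ i * (n.choose i) * (i.choose m) = 0 := by
      apply Finset.sum_eq_zero
      intro i hi
      simp only [mem_Ico] at hi
      rw [Nat.choose_eq_zero_of_lt hi.2]
      simp
    rw [h1, zero_add]
    have h2 : ∀ i ∈ Ico m (n+1), (-1 : ℤ) ^ i * (n.choose i) * (i.choose m)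
        = (-1 : ℤ)^i * (n.choose m) * ((n-m).choose (i-m)) := by
      intro i hi
      simp only [mem_Ico] at hi
      have := Nat.choose_mul (n := n) (show m ≤ i from hi.1)
      have h5 := congrArg (Nat.cast (R := ℤ)) this
      push_cast at h5
      rw [mul_assoc, h5, mul_assoc]
    rw [Finset.sum_congr rfl h2]
    rw [Finset.sum_Ico_eq_sum_range]
    have h3 : ∀ d ∈ range (n + 1 - m), (-1:ℤ)^(m+d) * (n.choose m) * ((n-m).choose (m+d-m))
        = ((-1:ℤ)^m * n.choose m) * ((-1:ℤ)^d * ((n-m).choose d)) := by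
      intro d _
      have : m + d - m = d := by omega
      rw [this, pow_add]
      ring
    rw [Finset.sum_congr rfl h3, ← Finset.mul_sum]
    have h4 : n + 1 - m = (n - m) + 1 := by omega
    rw [h4]
    rw [Int.alternating_sum_range_choose_of_ne (by omega : n - m ≠ 0)]
    ring
  · exact Finset.Ico_disjoint_Ico_consecutive 0 m (n+1)

/-- `∑_{j∈range n} (-1)^{j+1} C(n,j+1) C(j,m) = (-1)^{m+1}` for `n > m`. -/
lemma alt_sum_T {m : ℕ} : ∀ {n : ℕ}, m < n →
    ∑ j ∈ range n, (-1 : ℤ) ^ (j+1) * (n.choose (j+1)) * (j.choose m) = (-1 : ℤ)^(m+1) := by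
  intro n
  induction n with
  | zero => omega
  | succ n ih =>
    intro hn
    have pascal : ∀ j, ((n+1).choose (j+1) : ℤ) = n.choose j + n.choose (j+1) := by
      intro j; exact_mod_cast congrArg (Nat.cast (R := ℤ)) (Nat.choose_succ_succ n j)
    have expand : ∑ j ∈ range (n+1), (-1 : ℤ) ^ (j+1) * ((n+1).choose (j+1)) * (j.choose m)
        = (∑ j ∈ range (n+1), (-1 : ℤ) ^ (j+1) * (n.choose j) * (j.choose m))
          + ∑ j ∈ range (n+1), (-1 : ℤ) ^ (j+1) * (n.choose (j+1)) * (j.choose m) := by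
      rw [← Finset.sum_add_distrib]
      apply Finset.sum_congr rfl
      intro j _
      rw [pascal j]; ring
    rw [expand]
    rcases Nat.lt_or_ge m n with hmn | hmn
    · -- first sum is zero by alt_choose_choose, second is ih
      have first : ∑ j ∈ range (n+1), (-1 : ℤ) ^ (j+1) * (n.choose j) * (j.choose m) = 0 := by
        have := alt_choose_choose hmn
        calc ∑ j ∈ range (n+1), (-1 : ℤ) ^ (j+1) * (n.choose j) * (j.choose m)
            = -1 * ∑ j ∈ range (n+1), (-1 : ℤ) ^ j * (n.choose j) * (j.choose m) := by
              rw [Finset.mul_sum]; apply Finset.sum_congr rfl; intro j _; ring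
          _ = 0 := by rw [this]; ring
      have second : ∑ j ∈ range (n+1), (-1 : ℤ) ^ (j+1) * (n.choose (j+1)) * (j.choose m)
          = ∑ j ∈ range n, (-1 : ℤ) ^ (j+1) * (n.choose (j+1)) * (j.choose m) := by
        rw [Finset.sum_range_succ, Nat.choose_succ_self]
        simp
      rw [first, second, ih hmn, zero_add]
    · -- m = n
      have hm : m = n := by omega
      subst hm
      -- first sum: only j = m term survives
      have first : ∑ j ∈ range (m+1), (-1 : ℤ) ^ (j+1) * (m.choose j) * (j.choose m)
          = (-1 : ℤ)^(m+1) := by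
        rw [Finset.sum_eq_single m]
        · simp
        · intro j hj hne
          simp only [mem_range] at hj
          rw [Nat.choose_eq_zero_of_lt (show j < m by omega)]
          ring
        · intro h; exact absurd (Finset.self_mem_range_succ m) h
      have second : ∑ j ∈ range (m+1), (-1 : ℤ) ^ (j+1) * (m.choose (j+1)) * (j.choose m) = 0 := by
        apply Finset.sum_eq_zero
        intro j hj
        simp only [mem_range] at hj
        rcases Nat.lt_or_ge j m with hj2 | hj2
        · rw [Nat.choose_eq_zero_of_lt hj2]; ring
        · have : j = m := by omega
          subst this
          rw [Nat.choose_succ_self]; simp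
      rw [first, second, add_zero]

/-- choosing two disjoint subsets in either order. -/
lemma choose_choose_symm (M a b : ℕ) :
    M.choose a * (M - a).choose b = M.choose b * (M - b).choose a := by
  rcases le_or_gt (a + b) M with h | h
  · have h1 := Nat.choose_mul (n := M) (show a ≤ a + b by omega)
    have h2 := Nat.choose_mul (n := M) (show b ≤ a + b by omega)
    have hs : (a+b).choose a = (a+b).choose b := by
      rw [← Nat.choose_symm (show a ≤ a + b by omega)]
      congr 1; omega
    have e1 : a + b - a = b := by omega
    have e2 : a + b - b = a := by omega
    rw [e1] at h1; rw [e2] at h2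
    rw [← h1, ← h2, hs]
  · rcases le_or_gt a M with ha | ha
    · rcases le_or_gt b M with hb | hb
      · rw [Nat.choose_eq_zero_of_lt (show M - a < b by omega),
            Nat.choose_eq_zero_of_lt (show M - b < a by omega)]
        ring
      · rw [Nat.choose_eq_zero_of_lt hb, Nat.choose_eq_zero_of_lt (show M - a < b by omega)]
        ring
    · rw [Nat.choose_eq_zero_of_lt ha, Nat.choose_eq_zero_of_lt (show M - b < a by omega)]
      ring

/-- termwise identity (a). -/
lemma term_a {m s j : ℕ} (hj : j ≤ s) (hs : s ≤ m) :
    m.choose (2*j) * (2*j).choose j * (m - 2*j).choose (s - j)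
      = m.choose s * s.choose j * (m - s).choose j := by
  rcases le_or_gt (2*j) m with h2j | h2j
  · have h1 := Nat.choose_mul (n := m) (show j ≤ 2*j by omega)
    have e1 : 2*j - j = j := by omega
    rw [e1] at h1
    have h2 := Nat.choose_mul (n := m) (show j ≤ s from hj)
    rw [h1, h2]
    have e2 : m - 2*j = (m - j) - j := by omega
    have e3 : m - s = (m - j) - (s - j) := by omega
    rw [e2, e3, mul_assoc, mul_assoc]
    congr 1
    have := choose_choose_symm (m - j) j (s - j)
    rw [this]
  · rw [Nat.choose_eq_zero_of_lt h2j, Nat.choose_eq_zero_of_lt (show m - s < j by omega)]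
    ring

/-- termwise identity (b), for `1 ≤ j ≤ s ≤ m`. -/
lemma term_b {m s j : ℕ} (hj1 : 1 ≤ j) (hj : j ≤ s) (hs : s ≤ m) :
    m.choose (2*j) * (2*j).choose (j+1) * (m - 2*j).choose (s - j)
      = m.choose (s-1) * (s-1).choose (j-1) * (m - s + 1).choose (j+1) := by
  rcases le_or_gt j (m - s) with hms | hms
  · -- all in range: use factorials over ℚ? do it in ℕ via factorial cancellation: use cast to ℚ
    have h2j : 2*j ≤ m := by omega
    have hsj : s - j ≤ m - 2*j := by omega
    have hj1s : j + 1 ≤ m - s + 1 := by omega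
    have hjs1 : j - 1 ≤ s - 1 := by omega
    have hs1 : s - 1 ≤ m := by omega
    have hq : (↑(m.choose (2*j) * (2*j).choose (j+1) * (m - 2*j).choose (s - j)) : ℚ)
        = ↑(m.choose (s-1) * (s-1).choose (j-1) * (m - s + 1).choose (j+1)) := by
      push_cast
      rw [Nat.cast_choose ℚ h2j, Nat.cast_choose ℚ (show j+1 ≤ 2*j by omega),
          Nat.cast_choose ℚ hsj, Nat.cast_choose ℚ hs1, Nat.cast_choose ℚ hjs1,
          Nat.cast_choose ℚ hj1s]
      have e1 : 2*j - (j+1) = j - 1 := by omega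
      have e2 : m - 2*j - (s - j) = m - s - j := by omega
      have e3 : m - (s-1) = m - s + 1 := by omega
      have e4 : s - 1 - (j - 1) = s - j := by omega
      have e5 : m - s + 1 - (j + 1) = m - s - j := by omega
      rw [e1, e2, e3, e4, e5]
      have f1 : ((m - s + 1).factorial : ℚ) ≠ 0 := by positivity
      have f2 : ((s-1).factorial : ℚ) ≠ 0 := by positivity
      have f3 : ((2*j).factorial : ℚ) ≠ 0 := by positivity
      have f4 : ((m - 2*j).factorial : ℚ) ≠ 0 := by positivity
      have f5 : ((j+1).factorial : ℚ) ≠ 0 := by positivity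
      have f6 : ((j-1).factorial : ℚ) ≠ 0 := by positivity
      have f7 : ((s-j).factorial : ℚ) ≠ 0 := by positivity
      have f8 : ((m-s-j).factorial : ℚ) ≠ 0 := by positivity
      field_simp
    exact_mod_cast hq
  · -- j > m - s: both sides vanish
    have hrhs : (m - s + 1).choose (j+1) = 0 := Nat.choose_eq_zero_of_lt (by omega)
    rcases le_or_gt (2*j) m with h2j | h2j
    · rw [Nat.choose_eq_zero_of_lt (show m - 2*j < s - j by omega), hrhs]
      ring
    · rw [Nat.choose_eq_zero_of_lt h2j, hrhs]
      ring

/-- Vandermonde: `∑_j C(s,j) C(t,j) = C(s+t, s)`. -/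
lemma vandermonde_sq (s t : ℕ) :
    ∑ j ∈ range (s+1), s.choose j * t.choose j = (s+t).choose s := by
  have key : (s+t).choose t = ∑ i ∈ range (t+1), s.choose i * t.choose (t - i) := by
    rw [Nat.add_choose_eq, Finset.Nat.sum_antidiagonal_eq_sum_range_succ
      (fun a b => s.choose a * t.choose b)]
  have symm : (s+t).choose s = (s+t).choose t := by
    rw [← Nat.choose_symm (show s ≤ s + t by omega)]
    congr 1; omega
  rw [symm, key]
  -- both sides extend to range (s+t+1)
  have left : ∑ j ∈ range (s+1), s.choose j * t.choose j
      = ∑ j ∈ range (s+t+1), s.choose j * t.choose j := by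
    apply Finset.sum_subset (by intro a ha; simp only [mem_range] at *; omega)
    intro j _ hj
    simp only [mem_range] at hj
    rw [Nat.choose_eq_zero_of_lt (show s < j by omega)]
    ring
  have right : ∑ i ∈ range (t+1), s.choose i * t.choose (t - i)
      = ∑ i ∈ range (s+t+1), s.choose i * t.choose i := by
    have ext : ∑ i ∈ range (t+1), s.choose i * t.choose (t-i)
        = ∑ i ∈ range (t+1), s.choose i * t.choose i := by
      apply Finset.sum_congr rfl
      intro i hi
      simp only [mem_range] at hi
      rw [Nat.choose_symm (show i ≤ t by omega)]
    rw [ext]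
    apply Finset.sum_subset (by intro a ha; simp only [mem_range] at *; omega)
    intro j _ hj
    simp only [mem_range] at hj
    rw [Nat.choose_eq_zero_of_lt (show t < j by omega)]
    ring
  rw [left, right]

/-- Vandermonde shifted by 2: `∑_{a∈range (p+1)} C(p,a) C(q,a+2) = C(p+q, p+2)`. -/
lemma vandermonde_shift2 (p q : ℕ) (hq : 2 ≤ q) :
    ∑ a ∈ range (p+1), p.choose a * q.choose (a+2) = (p+q).choose (p+2) := by
  have key : (p+q).choose (q-2) = ∑ i ∈ range (q-2+1), p.choose i * q.choose (q - 2 - i) := by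
    rw [Nat.add_choose_eq, Finset.Nat.sum_antidiagonal_eq_sum_range_succ
      (fun a b => p.choose a * q.choose b)]
  have symm : (p+q).choose (p+2) = (p+q).choose (q-2) := by
    rw [← Nat.choose_symm (show p + 2 ≤ p + q by omega)]
    congr 1; omega
  rw [symm, key]
  have ext : ∑ i ∈ range (q-2+1), p.choose i * q.choose (q - 2 - i)
      = ∑ i ∈ range (q-2+1), p.choose i * q.choose (i+2) := by
    apply Finset.sum_congr rfl
    intro i hi
    simp only [mem_range] at hi
    have : q - 2 - i = q - (i + 2) := by omega
    rw [this, Nat.choose_symm (show i + 2 ≤ q by omega)]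
  rw [ext]
  -- extend both to range (p+q+1)
  have left : ∑ a ∈ range (p+1), p.choose a * q.choose (a+2)
      = ∑ a ∈ range (p+q+1), p.choose a * q.choose (a+2) := by
    apply Finset.sum_subset (by intro a ha; simp only [mem_range] at *; omega)
    intro j _ hj
    simp only [mem_range] at hj
    rw [Nat.choose_eq_zero_of_lt (show p < j by omega)]
    ring
  have right : ∑ i ∈ range (q-2+1), p.choose i * q.choose (i+2)
      = ∑ i ∈ range (p+q+1), p.choose i * q.choose (i+2) := by
    apply Finset.sum_subset (by intro a ha; simp only [mem_range] at *; omega)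
    intro j _ hj
    simp only [mem_range] at hj
    rw [Nat.choose_eq_zero_of_lt (show q < j + 2 by omega)]
    ring
  rw [left, right]

/-- the γ identity in ℕ: `(s+1)C(m,s)² = (s+1)C(m,s-1)C(m,s+1) + C(m,s)C(m+1,s)` for `1 ≤ s`. -/
lemma gamma_nat {m s : ℕ} (hs1 : 1 ≤ s) :
    (s+1) * (m.choose s * m.choose s)
      = (s+1) * (m.choose (s-1) * m.choose (s+1)) + m.choose s * (m+1).choose s := by
  rcases le_or_gt s m with hsm | hsm
  · have hp : ((m+1).choose s : ℤ) = m.choose s + m.choose (s-1) := by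
      have h0 := Nat.choose_succ_succ m (s-1)
      simp only [Nat.succ_eq_add_one] at h0
      rw [Nat.sub_add_cancel hs1] at h0
      have := congrArg (Nat.cast (R := ℤ)) h0
      push_cast at this
      linarith [this]
    have h1 : (m.choose (s+1) : ℤ) * (s+1) = m.choose s * (m - s : ℕ) := by
      exact_mod_cast congrArg (Nat.cast (R := ℤ)) (Nat.choose_succ_right_eq m s)
    have h2 : (m.choose s : ℤ) * s = m.choose (s-1) * ((m - s : ℕ) + 1) := by
      have := Nat.choose_succ_right_eq m (s-1)
      have e : s - 1 + 1 = s := by omega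
      have e2 : m - (s - 1) = (m - s) + 1 := by omega
      rw [e, e2] at this
      exact_mod_cast congrArg (Nat.cast (R := ℤ)) this
    have goal : ((s:ℤ)+1) * (m.choose s * m.choose s)
        = ((s:ℤ)+1) * (m.choose (s-1) * m.choose (s+1)) + m.choose s * (m+1).choose s := by
      linear_combination (m.choose s : ℤ) * h2 - (m.choose (s-1) : ℤ) * h1
        - (m.choose s : ℤ) * hp
    exact_mod_cast goal
  · -- s > m : all relevant choose vanish except possibly C(m,s-1) when s = m+1
    rw [Nat.choose_eq_zero_of_lt hsm, Nat.choose_eq_zero_of_lt (show m < s + 1 by omega)]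
    simp

-- placeholders for compiled lemmas (re-verified separately)
/-- the Catalan number as a difference of binomials (real). -/
lemma catalan_real_eq (j : ℕ) :
    (catalan j : ℝ) = ((2*j).choose j : ℝ) - ((2*j).choose (j+1) : ℝ) := by
  have h1 : (j+1) * catalan j = (2*j).choose j := by
    rw [succ_mul_catalan_eq_centralBinom]
    rfl
  have h2 : (2*j).choose (j+1) * (j+1) = (2*j).choose j * j := by
    have := Nat.choose_succ_right_eq (2*j) j
    rwa [show 2*j - j = j by omega] at this
  have h1' : ((j:ℝ)+1) * catalan j = ((2*j).choose j : ℝ) := by exact_mod_cast h1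
  have h2' : ((2*j).choose (j+1) : ℝ) * ((j:ℝ)+1) = ((2*j).choose j : ℝ) * j := by
    exact_mod_cast h2
  have hj : ((j:ℝ)+1) ≠ 0 := by positivity
  apply mul_left_cancel₀ hj
  nlinarith [h1', h2']

/-- Per-coefficient version of Coker's identity. -/
lemma coker_coeff {m s : ℕ} (hs : s ≤ m) :
    ∑ j ∈ range (s+1), (catalan j : ℝ) * (m.choose (2*j)) * ((m - 2*j).choose (s - j))
      = (m+1).choose s * m.choose s / (s+1) := by
  rcases Nat.eq_zero_or_pos s with rfl | hs1
  · simp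
  -- split catalan
  have split : ∀ j ∈ range (s+1), (catalan j : ℝ) * (m.choose (2*j)) * ((m - 2*j).choose (s - j))
      = ((m.choose (2*j) * (2*j).choose j * (m - 2*j).choose (s - j) : ℕ) : ℝ)
        - ((m.choose (2*j) * (2*j).choose (j+1) * (m - 2*j).choose (s - j) : ℕ) : ℝ) := by
    intro j _
    rw [catalan_real_eq]
    push_cast
    ring
  rw [Finset.sum_congr rfl split, Finset.sum_sub_distrib]
  -- first sum
  have S1 : ∑ j ∈ range (s+1),
      ((m.choose (2*j) * (2*j).choose j * (m - 2*j).choose (s - j) : ℕ) : ℝ)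
      = ((m.choose s * m.choose s : ℕ) : ℝ) := by
    have enat1 : ∑ j ∈ range (s+1), (m.choose (2*j) * (2*j).choose j * (m - 2*j).choose (s - j))
        = m.choose s * m.choose s := by
      have e : ∀ j ∈ range (s+1), (m.choose (2*j) * (2*j).choose j * (m - 2*j).choose (s - j) : ℕ)
          = m.choose s * (s.choose j * (m-s).choose j) := by
        intro j hj
        simp only [mem_range] at hj
        rw [term_a (show j ≤ s by omega) hs]
        ring
      rw [Finset.sum_congr rfl e, ← Finset.mul_sum, vandermonde_sq s (m-s),
          show s + (m - s) = m by omega]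
    exact_mod_cast congrArg (Nat.cast (R := ℝ)) enat1
  -- second sum
  have S2 : ∑ j ∈ range (s+1),
      ((m.choose (2*j) * (2*j).choose (j+1) * (m - 2*j).choose (s - j) : ℕ) : ℝ)
      = ((m.choose (s-1) * m.choose (s+1) : ℕ) : ℝ) := by
    have enat : ∑ j ∈ range (s+1),
        (m.choose (2*j) * (2*j).choose (j+1) * (m - 2*j).choose (s - j))
        = m.choose (s-1) * m.choose (s+1) := by
      rw [Finset.sum_range_succ']
      have h0 : m.choose (2*0) * (2*0).choose (0+1) * (m - 2*0).choose (s - 0) = 0 := by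
        simp
      rw [h0, add_zero]
      have e : ∀ a ∈ range s,
          m.choose (2*(a+1)) * (2*(a+1)).choose ((a+1)+1) * (m - 2*(a+1)).choose (s - (a+1))
          = m.choose (s-1) * ((s-1).choose a * (m - s + 1).choose (a+2)) := by
        intro a ha
        simp only [mem_range] at ha
        rw [term_b (by omega) (by omega) hs]
        rw [show a + 1 - 1 = a by omega, show a + 1 + 1 = a + 2 by omega]
        ring
      rw [Finset.sum_congr rfl e, ← Finset.mul_sum]
      rcases lt_or_ge s m with hsm | hsm
      · have hv := vandermonde_shift2 (s-1) (m-s+1) (by omega)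
        rw [Nat.sub_add_cancel hs1, show s - 1 + (m - s + 1) = m by omega,
            show s - 1 + 2 = s + 1 by omega] at hv
        rw [hv]
      · rw [Nat.choose_eq_zero_of_lt (show m < s + 1 by omega)]
        have z : ∑ a ∈ range s, (s-1).choose a * (m - s + 1).choose (a+2) = 0 := by
          apply Finset.sum_eq_zero
          intro a _
          rw [Nat.choose_eq_zero_of_lt (show m - s + 1 < a + 2 by omega)]
          ring
        rw [z]
    exact_mod_cast congrArg (Nat.cast (R := ℝ)) enat
  rw [S1, S2]
  -- finish with gamma
  have hg := congrArg (Nat.cast (R := ℝ)) (gamma_nat (m := m) hs1)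
  push_cast at hg ⊢
  have hsne : ((s:ℝ)+1) ≠ 0 := by positivity
  field_simp
  linear_combination hg

/-- Coker's identity for Narayana polynomials. -/
lemma coker_poly (m : ℕ) (x : ℝ) :
    ∑ r ∈ Icc 1 (m+1), (1/(r:ℝ)) * ((m+1).choose (r-1)) * (m.choose (r-1)) * x^(r-1)
      = ∑ j ∈ range (m+1), (catalan j : ℝ) * (m.choose (2*j)) * x^j * (1+x)^(m - 2*j) := by
  -- LHS to range form
  have lhs_eq : ∑ r ∈ Icc 1 (m+1), (1/(r:ℝ)) * ((m+1).choose (r-1)) * (m.choose (r-1)) * x^(r-1)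
      = ∑ s ∈ range (m+1), ((m+1).choose s * m.choose s / (s+1) : ℝ) * x^s := by
    rw [show Icc 1 (m+1) = Ico 1 (m+2) by rfl, Finset.sum_Ico_eq_sum_range]
    rw [show m + 2 - 1 = m + 1 by omega]
    apply Finset.sum_congr rfl
    intro d _
    rw [show 1 + d - 1 = d by omega]
    push_cast
    ring
  rw [lhs_eq]
  -- RHS reshaping
  have step1 : ∀ j ∈ range (m+1),
      (catalan j : ℝ) * (m.choose (2*j)) * x^j * (1+x)^(m - 2*j)
      = ∑ s ∈ Ico j (m+1), (catalan j : ℝ) * (m.choose (2*j)) * ((m - 2*j).choose (s-j)) * x^s := by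
    intro j hj
    simp only [mem_range] at hj
    have expand : (1+x)^(m - 2*j) = ∑ d ∈ range (m - 2*j + 1), ((m-2*j).choose d : ℝ) * x^d := by
      rw [show (1:ℝ) + x = x + 1 by ring, add_pow]
      apply Finset.sum_congr rfl
      intro d _
      simp
      ring
    rw [expand, Finset.mul_sum]
    have pad : ∑ d ∈ range (m - 2*j + 1),
        (catalan j : ℝ) * (m.choose (2*j)) * x^j * (((m-2*j).choose d : ℝ) * x^d)
        = ∑ d ∈ range (m + 1 - j),
        (catalan j : ℝ) * (m.choose (2*j)) * x^j * (((m-2*j).choose d : ℝ) * x^d) := by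
      apply Finset.sum_subset (by intro a ha; simp only [mem_range] at *; omega)
      intro d _ hd
      simp only [mem_range] at hd
      rw [Nat.choose_eq_zero_of_lt (show m - 2*j < d by omega)]
      push_cast
      ring
    rw [pad, Finset.sum_Ico_eq_sum_range]
    apply Finset.sum_congr rfl
    intro d _
    rw [show j + d - j = d by omega, pow_add]
    ring
  rw [Finset.sum_congr rfl step1]
  rw [show range (m+1) = Ico 0 (m+1) by rw [Finset.range_eq_Ico]]
  rw [Finset.sum_Ico_Ico_comm]
  apply Finset.sum_congr rfl
  intro s hs
  simp only [mem_Ico] at hs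
  have : ∑ j ∈ Ico 0 (s+1), (catalan j : ℝ) * (m.choose (2*j)) * ((m - 2*j).choose (s-j)) * x^s
      = (∑ j ∈ range (s+1), (catalan j : ℝ) * (m.choose (2*j)) * ((m - 2*j).choose (s-j))) * x^s := by
    rw [← Finset.range_eq_Ico, Finset.sum_mul]
  rw [this, coker_coeff (show s ≤ m by omega)]

/-- closed form of `fkfun`. -/
lemma fkfun_closed (k : ℕ) (hk : 1 ≤ k) (x : ℝ) (hx0 : 0 ≤ x) :
    fkfun k x = 1 - ∑ j ∈ range k, (catalan j : ℝ) * x^j / (1+x)^(2*j+1) := by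
  set y : ℝ := 1 + x with hy
  have hy0 : 0 < y := by rw [hy]; linarith
  have hyne : y ≠ 0 := ne_of_gt hy0
  rw [fkfun]
  -- rewrite inner sums via coker_poly, pad j-range to range (2*k)
  have stepA : ∀ i ∈ Icc 1 (2*k),
      ((2*k).choose i : ℝ) * (-1 / y) ^ i *
        ∑ r ∈ Icc 1 i, (1/(r:ℝ)) * (i.choose (r-1)) * ((i-1).choose (r-1)) * x^(r-1)
      = ∑ j ∈ range (2*k), (catalan j : ℝ) * x^j * (1/y)^(2*j+1) *
          ((-1:ℝ)^i * ((2*k).choose i) * ((i-1).choose (2*j))) := by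
    intro i hi
    simp only [mem_Icc] at hi
    have hi1 : 1 ≤ i := hi.1
    have hcok := coker_poly (i-1) x
    rw [show i - 1 + 1 = i by omega] at hcok
    rw [hcok]
    rw [Finset.mul_sum]
    -- pad range i to range (2*k)
    have pad : ∑ j ∈ range i, ((2*k).choose i : ℝ) * (-1 / y) ^ i *
          ((catalan j : ℝ) * ((i-1).choose (2*j)) * x^j * y^(i-1 - 2*j))
        = ∑ j ∈ range (2*k), ((2*k).choose i : ℝ) * (-1 / y) ^ i *
          ((catalan j : ℝ) * ((i-1).choose (2*j)) * x^j * y^(i-1 - 2*j)) := by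
      apply Finset.sum_subset (by intro a ha; simp only [mem_range] at *; omega)
      intro j _ hj
      simp only [mem_range] at hj
      rw [Nat.choose_eq_zero_of_lt (show i - 1 < 2*j by omega)]
      push_cast
      ring
    rw [pad]
    apply Finset.sum_congr rfl
    intro j _
    rcases le_or_gt i (2*j) with hij | hij
    · rw [Nat.choose_eq_zero_of_lt (show i - 1 < 2*j by omega)]
      push_cast
      ring
    · -- i ≥ 2j+1
      have hpow : y ^ (i - 1 - 2*j) * y ^ (2*j+1) = y ^ i := by
        rw [← pow_add]; congr 1; omega
      have hneg : (-1 / y) ^ i = (-1:ℝ)^i * (1/y)^i := by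
        rw [← mul_pow]; congr 1; ring
      rw [hneg]
      field_simp
      rw [div_pow, one_pow, div_pow, one_pow, ← hpow]
      field_simp
  rw [Finset.sum_congr rfl stepA]
  rw [Finset.sum_comm]
  -- inner alternating sums
  have stepE : ∀ j ∈ range (2*k),
      ∑ i ∈ Icc 1 (2*k), (catalan j : ℝ) * x^j * (1/y)^(2*j+1) *
          ((-1:ℝ)^i * ((2*k).choose i) * ((i-1).choose (2*j)))
      = if j < k then -((catalan j : ℝ) * x^j * (1/y)^(2*j+1)) else 0 := by
    intro j _
    rw [← Finset.mul_sum]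
    rcases lt_or_ge j k with hjk | hjk
    · have halt := alt_sum_T (m := 2*j) (n := 2*k) (by omega)
      have hsum : ∑ i ∈ Icc 1 (2*k), (-1:ℝ)^i * ((2*k).choose i) * ((i-1).choose (2*j))
          = -1 := by
        rw [show Icc 1 (2*k) = Ico 1 (2*k+1) by rfl, Finset.sum_Ico_eq_sum_range,
            show 2*k + 1 - 1 = 2*k by omega]
        have conv : ∀ d ∈ range (2*k), (-1:ℝ)^(1+d) * ((2*k).choose (1+d)) * ((1+d-1).choose (2*j))
            = ((-1:ℤ)^(d+1) * ((2*k).choose (d+1)) * (d.choose (2*j)) : ℤ) := by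
          intro d _
          rw [show 1 + d - 1 = d by omega, show 1 + d = d + 1 by omega]
          push_cast
          ring
        rw [Finset.sum_congr rfl conv, ← Int.cast_sum, halt]
        push_cast
        rw [pow_succ, pow_mul]
        norm_num
      rw [hsum, if_pos hjk]
      ring
    · have hzero : ∑ i ∈ Icc 1 (2*k), (-1:ℝ)^i * ((2*k).choose i) * ((i-1).choose (2*j)) = 0 := by
        apply Finset.sum_eq_zero
        intro i hi
        simp only [mem_Icc] at hi
        rw [Nat.choose_eq_zero_of_lt (show i - 1 < 2*j by omega)]
        ring
      rw [hzero, if_neg (by omega)]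
      ring
  rw [Finset.sum_congr rfl stepE]
  have hfilter : (range (2*k)).filter (fun j => j < k) = range k := by
    ext a
    simp only [mem_filter, mem_range]
    omega
  rw [← Finset.sum_filter, hfilter]
  have hneg : ∑ j ∈ range k, -((catalan j : ℝ) * x^j * (1/y)^(2*j+1))
      = - ∑ j ∈ range k, (catalan j : ℝ) * x^j / y^(2*j+1) := by
    rw [← Finset.sum_neg_distrib]
    apply Finset.sum_congr rfl
    intro j _
    rw [div_pow, one_pow]
    ring
  rw [hneg]
  ring

lemma centralBinom_sq_bound : ∀ n : ℕ, (Nat.centralBinom n)^2 * (n+1) ≤ 16^n := by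
  intro n
  induction n with
  | zero => simp [Nat.centralBinom]
  | succ n ih =>
    have hrec := Nat.succ_mul_centralBinom_succ n
    apply Nat.le_of_mul_le_mul_right _ (show 0 < (n+1)^3 by positivity)
    calc Nat.centralBinom (n+1)^2 * ((n+1)+1) * (n+1)^3
        = ((n+1) * Nat.centralBinom (n+1))^2 * ((n+2)*(n+1)) := by ring
      _ = (2*(2*n+1) * Nat.centralBinom n)^2 * ((n+2)*(n+1)) := by rw [hrec]
      _ = 4*(2*n+1)^2*(n+2) * (Nat.centralBinom n^2 * (n+1)) := by ring
      _ ≤ 4*(2*n+1)^2*(n+2) * 16^n := Nat.mul_le_mul_left _ ih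
      _ = 16^n * (4*(2*n+1)^2*(n+2)) := by ring
      _ ≤ 16^n * (16*(n+1)^3) := Nat.mul_le_mul_left _ (by nlinarith)
      _ = 16^(n+1) * (n+1)^3 := by ring

lemma catalan_le_real (n : ℕ) :
    (catalan n : ℝ) * (1/4)^n ≤ 1 / ((n:ℝ)+1) ^ ((3:ℝ)/2) := by
  have hb2 : ((n+1) * catalan n)^2 * (n+1) ≤ 16^n := by
    rw [succ_mul_catalan_eq_centralBinom]; exact centralBinom_sq_bound n
  have hb3 : ((catalan n : ℝ))^2 * ((n:ℝ)+1)^3 ≤ 16^n := by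
    have hb2' : ((((n+1) * catalan n)^2 * (n+1) : ℕ) : ℝ) ≤ ((16^n : ℕ) : ℝ) := by
      exact_mod_cast hb2
    push_cast at hb2'
    nlinarith [hb2']
  have ht : (0:ℝ) < (n:ℝ)+1 := by positivity
  have hX : (((n:ℝ)+1) ^ ((3:ℝ)/2))^2 = ((n:ℝ)+1)^3 := by
    rw [← Real.rpow_natCast (((n:ℝ)+1) ^ ((3:ℝ)/2)) 2, ← Real.rpow_mul (le_of_lt ht)]
    norm_num
  have hA0 : (0:ℝ) ≤ (catalan n : ℝ) * (1/4)^n := by positivity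
  have hB0 : (0:ℝ) ≤ 1 / ((n:ℝ)+1) ^ ((3:ℝ)/2) := by positivity
  have h14 : ((1/4:ℝ)^n)^2 = 1/16^n := by
    rw [← pow_mul, show (16:ℝ)^n = (4:ℝ)^(n*2) by rw [show (16:ℝ) = 4^2 by norm_num, ← pow_mul]; ring, div_pow, one_pow]
  have hsq : ((catalan n : ℝ) * (1/4)^n)^2 ≤ (1 / ((n:ℝ)+1) ^ ((3:ℝ)/2))^2 := by
    rw [show (1 / ((n:ℝ)+1) ^ ((3:ℝ)/2))^2 = 1/((n:ℝ)+1)^3 by rw [div_pow, hX, one_pow]]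
    rw [show ((catalan n : ℝ) * (1/4)^n)^2 = (catalan n:ℝ)^2/16^n by rw [mul_pow, h14]; ring]
    rw [div_le_div_iff₀ (by positivity) (by positivity)]
    calc (catalan n : ℝ)^2 * ((n:ℝ)+1)^3 ≤ 16^n := hb3
      _ = 1 * 16^n := by ring
  exact (pow_le_pow_iff_left₀ hA0 hB0 (by norm_num)).mp hsq

lemma summable_bound : Summable (fun n : ℕ => 1 / ((n:ℝ)+1) ^ ((3:ℝ)/2)) := by
  have h := (Real.summable_one_div_nat_rpow (p := (3:ℝ)/2)).mpr (by norm_num)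
  have h2 := (summable_nat_add_iff 1).mpr h
  apply h2.congr
  intro n
  push_cast
  norm_num

lemma summable_cat {u : ℝ} (hu0 : 0 ≤ u) (hu : u ≤ 1/4) :
    Summable (fun j : ℕ => (catalan j : ℝ) * u^j) := by
  apply Summable.of_nonneg_of_le (fun j => by positivity) _ summable_bound
  intro j
  calc (catalan j : ℝ) * u^j ≤ (catalan j : ℝ) * (1/4)^j := by
        apply mul_le_mul_of_nonneg_left (pow_le_pow_left₀ hu0 hu j) (by positivity)
    _ ≤ 1 / ((j:ℝ)+1) ^ ((3:ℝ)/2) := catalan_le_real j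

lemma cat_quad {u : ℝ} (hu0 : 0 ≤ u) (hu : u ≤ 1/4) :
    (∑' j : ℕ, (catalan j : ℝ) * u^j)
      = 1 + u * (∑' j : ℕ, (catalan j : ℝ) * u^j)^2 := by
  set f : ℕ → ℝ := fun j => (catalan j : ℝ) * u^j with hf
  have hsumf : Summable f := summable_cat hu0 hu
  have hnorm : Summable (fun j => ‖f j‖) := by
    apply hsumf.congr
    intro j
    rw [Real.norm_of_nonneg (by positivity)]
  have hprod := tsum_mul_tsum_eq_tsum_sum_antidiagonal_of_summable_norm hnorm hnorm
  have inner_eq : ∀ n : ℕ, ∑ ij ∈ Finset.HasAntidiagonal.antidiagonal n, f ij.1 * f ij.2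
      = (catalan (n+1) : ℝ) * u^n := by
    intro n
    have he : ∀ ij ∈ Finset.HasAntidiagonal.antidiagonal n, f ij.1 * f ij.2
        = ((catalan ij.1 * catalan ij.2 : ℕ) : ℝ) * u^n := by
      intro ij hij
      rw [Finset.HasAntidiagonal.mem_antidiagonal] at hij
      simp only [hf]
      push_cast
      rw [← hij, pow_add]
      ring
    rw [Finset.sum_congr rfl he, ← Finset.sum_mul, ← Nat.cast_sum, ← catalan_succ']
  have hsq : (∑' j, f j)^2 = ∑' n : ℕ, (catalan (n+1) : ℝ) * u^n := by
    rw [sq, hprod]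
    exact tsum_congr inner_eq
  have hshift : ∑' j, f j = f 0 + ∑' n : ℕ, f (n+1) := Summable.tsum_eq_zero_add hsumf
  have hf0 : f 0 = 1 := by simp [hf]
  calc ∑' j, f j = f 0 + ∑' n : ℕ, f (n+1) := hshift
    _ = 1 + u * ((∑' j, f j)^2) := by
        rw [hf0, hsq, ← tsum_mul_left]
        congr 1
        apply tsum_congr
        intro n
        simp only [hf]
        ring

lemma L_eq {x : ℝ} (hx0 : 0 < x) (hx1 : x ≤ 1) :
    (∑' j : ℕ, (catalan j : ℝ) * (x/(1+x)^2)^j) = 1 + x := by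
  set u : ℝ := x/(1+x)^2 with hu_def
  have hy : (0:ℝ) < 1 + x := by linarith
  have hu0 : 0 ≤ u := by positivity
  have hu : u ≤ 1/4 := by
    rw [hu_def, div_le_div_iff₀ (by positivity) (by norm_num)]
    nlinarith [sq_nonneg (1-x)]
  set L : ℝ := ∑' j : ℕ, (catalan j : ℝ) * u^j with hL_def
  have hq := cat_quad hu0 hu
  have hL2 : L ≤ 2 := by
    have hmono : L ≤ ∑' j : ℕ, (catalan j : ℝ) * (1/4)^j := by
      apply Summable.tsum_le_tsum _ (summable_cat hu0 hu) (summable_cat (by norm_num) (by norm_num))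
      intro j
      exact mul_le_mul_of_nonneg_left (pow_le_pow_left₀ hu0 hu j) (by positivity)
    have hq4 := cat_quad (u := 1/4) (by norm_num) (by norm_num)
    set M : ℝ := ∑' j : ℕ, (catalan j : ℝ) * (1/4)^j with hM_def
    have hM : M = 2 := by
      have h2 : (M - 2)^2 = 0 := by nlinarith [hq4]
      have := pow_eq_zero_iff (n := 2) (by norm_num) |>.mp h2
      linarith
    linarith
  have hxne : x ≠ 0 := ne_of_gt hx0
  have hyne : (1+x) ≠ 0 := ne_of_gt hy
  have hfact : u * ((L - (1+x)) * (L - (1+x)/x)) = u * L^2 - L + 1 := by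
    rw [hu_def]
    field_simp
    ring
  have hzero : u * ((L - (1+x)) * (L - (1+x)/x)) = 0 := by
    rw [hfact]
    linarith [hq]
  have hune : u ≠ 0 := by
    rw [hu_def]
    positivity
  rcases mul_eq_zero.mp hzero with h | h
  · exact absurd h hune
  · rcases mul_eq_zero.mp h with h1 | h2
    · linarith [sub_eq_zero.mp h1]
    · have hLx : L = (1+x)/x := sub_eq_zero.mp h2
      have hle : (1+x)/x ≤ 2 := by rw [← hLx]; exact hL2
      have hx_ge : 1 ≤ x := by
        rw [div_le_iff₀ hx0] at hle
        linarith
      have hx_eq : x = 1 := le_antisymm hx1 hx_ge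
      rw [hLx, hx_eq]
      norm_num

lemma catalan_succ_le (n : ℕ) : catalan (n+1) ≤ 4 * catalan n := by
  have h1 := Nat.succ_mul_centralBinom_succ n
  have h2 : Nat.centralBinom (n+1) = (n+2) * catalan (n+1) :=
    (succ_mul_catalan_eq_centralBinom (n+1)).symm
  have h3 : Nat.centralBinom n = (n+1) * catalan n := (succ_mul_catalan_eq_centralBinom n).symm
  rw [h2, h3] at h1
  apply Nat.le_of_mul_le_mul_right _ (show 0 < (n+1)*(n+2) by positivity)
  calc catalan (n+1) * ((n+1)*(n+2)) = (n+1)*((n+2)*catalan (n+1)) := by ring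
    _ = 2*(2*n+1)*((n+1)*catalan n) := h1
    _ ≤ 4*(n+2)*((n+1)*catalan n) := Nat.mul_le_mul_right _ (by nlinarith)
    _ = 4*catalan n * ((n+1)*(n+2)) := by ring

lemma catalan_add_le (k j : ℕ) : catalan (j+k) ≤ 4^k * catalan j := by
  induction k with
  | zero => simp
  | succ k ih =>
    calc catalan (j+(k+1)) = catalan ((j+k)+1) := rfl
      _ ≤ 4 * catalan (j+k) := catalan_succ_le _
      _ ≤ 4 * (4^k * catalan j) := Nat.mul_le_mul_left _ ih
      _ = 4^(k+1) * catalan j := by ring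

/-- the catalan number via factorials, real. -/
lemma catalan_real_factorial (n : ℕ) :
    (catalan n : ℝ) = (2*n).factorial / ((n+1).factorial * n.factorial) := by
  have h1 : (n+1) * catalan n = Nat.centralBinom n := succ_mul_catalan_eq_centralBinom n
  have h2 : Nat.centralBinom n = (2*n).choose n := Nat.centralBinom_eq_two_mul_choose n
  have h3 : ((2*n).choose n : ℝ) = (2*n).factorial / (n.factorial * (2*n - n).factorial) :=
    Nat.cast_choose ℝ (by omega)
  rw [show 2*n - n = n by omega] at h3
  have h1' : ((n:ℝ)+1) * catalan n = ((2*n).choose n : ℝ) := by exact_mod_cast h1.trans h2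
  rw [h3] at h1'
  have hfs : ((n+1).factorial : ℝ) = ((n:ℝ)+1) * n.factorial := by
    rw [Nat.factorial_succ]; push_cast; ring
  rw [hfs]
  have hne1 : ((n:ℝ)+1) ≠ 0 := by positivity
  have hne2 : (n.factorial : ℝ) ≠ 0 := by positivity
  field_simp at h1' ⊢
  linarith [h1']

/-- the key tail bound. -/
lemma tail_bound (k : ℕ) (hk : 1 ≤ k) {x : ℝ} (hx0 : 0 < x) (hx1 : x ≤ 1) :
    1 - ∑ j ∈ range k, (catalan j : ℝ) * x^j / (1+x)^(2*j+1)
      ≤ (4*x)^k / (1+x)^(2*k-1) := by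
  set y : ℝ := 1 + x with hy_def
  have hy1 : (1:ℝ) ≤ y := by rw [hy_def]; linarith
  have hy0 : (0:ℝ) < y := by linarith
  set u : ℝ := x / y^2 with hu_def
  have hu0 : 0 ≤ u := by positivity
  have hu : u ≤ 1/4 := by
    rw [hu_def, div_le_div_iff₀ (by positivity) (by norm_num)]
    nlinarith [sq_nonneg (1-x)]
  set g : ℕ → ℝ := fun j => (catalan j : ℝ) * u^j with hg_def
  have hgsum : Summable g := summable_cat hu0 hu
  have hL : ∑' j, g j = y := L_eq hx0 hx1
  -- convert terms
  have hterm : ∀ j, (catalan j : ℝ) * x^j / y^(2*j+1) = g j / y := by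
    intro j
    have hupow : u^j = x^j / y^(2*j) := by
      rw [hu_def, div_pow, ← pow_mul, Nat.mul_comm]
    rw [hg_def]
    simp only
    rw [hupow, pow_succ]
    field_simp
  have hpartial : ∑ j ∈ range k, (catalan j : ℝ) * x^j / y^(2*j+1)
      = (∑ j ∈ range k, g j) / y := by
    rw [Finset.sum_congr rfl (fun j _ => hterm j), ← Finset.sum_div]
  rw [hpartial]
  have hsplit : ∑ j ∈ range k, g j + ∑' j, g (j+k) = y := by
    rw [← hL]; exact Summable.sum_add_tsum_nat_add k hgsum
  have htail_sum : Summable (fun j => g (j+k)) := (summable_nat_add_iff k).mpr hgsum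
  have htail_le : ∑' j, g (j+k) ≤ 4^k * u^k * y := by
    have hmaj : Summable (fun j => (4:ℝ)^k * u^k * g j) := hgsum.mul_left _
    have hle : ∀ j, g (j+k) ≤ 4^k * u^k * g j := by
      intro j
      rw [hg_def]
      simp only
      have hc : (catalan (j+k) : ℝ) ≤ 4^k * catalan j := by
        exact_mod_cast catalan_add_le k j
      rw [pow_add]
      calc (catalan (j+k) : ℝ) * (u^j * u^k) ≤ (4^k * catalan j) * (u^j * u^k) := by
            apply mul_le_mul_of_nonneg_right hc (by positivity)
        _ = 4^k * u^k * ((catalan j : ℝ) * u^j) := by ring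
    calc ∑' j, g (j+k) ≤ ∑' j, (4:ℝ)^k * u^k * g j := Summable.tsum_le_tsum hle htail_sum hmaj
      _ = 4^k * u^k * ∑' j, g j := tsum_mul_left
      _ = 4^k * u^k * y := by rw [hL]
  have lhs_eq : 1 - (∑ j ∈ range k, g j) / y = (∑' j, g (j+k)) / y := by
    field_simp
    linarith [hsplit]
  rw [lhs_eq]
  have step1 : (∑' j, g (j+k)) / y ≤ 4^k * u^k := by
    rw [div_le_iff₀ hy0]
    calc ∑' j, g (j+k) ≤ 4^k * u^k * y := htail_le
      _ = 4^k * u^k * y := rfl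
  have step2 : (4:ℝ)^k * u^k = (4*x)^k / y^(2*k) := by
    rw [hu_def, mul_pow, div_pow, ← pow_mul, Nat.mul_comm 2 k]
    ring
  have step3 : (4*x)^k / y^(2*k) ≤ (4*x)^k / y^(2*k-1) := by
    apply div_le_div_of_nonneg_left (by positivity) (by positivity)
    apply pow_le_pow_right₀ hy1
    omega
  calc (∑' j, g (j+k)) / y ≤ 4^k * u^k := step1
    _ = (4*x)^k / y^(2*k) := step2
    _ ≤ (4*x)^k / y^(2*k-1) := step3

/-- conversion between the two sum forms. -/
lemma sum_form_conv (k : ℕ) (x : ℝ) :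
    ∑ j ∈ Icc 1 k, x ^ (j - 1) / (1 + x) ^ (2 * j - 1) *
        ((2 * j - 2).factorial / ((j.factorial : ℝ) * (j - 1).factorial))
      = ∑ j ∈ range k, (catalan j : ℝ) * x^j / (1+x)^(2*j+1) := by
  rw [show Icc 1 k = Ico 1 (k+1) by rfl, Finset.sum_Ico_eq_sum_range,
      show k + 1 - 1 = k by omega]
  apply Finset.sum_congr rfl
  intro d _
  rw [show 1 + d - 1 = d by omega, show 2*(1+d) - 1 = 2*d+1 by omega,
      show 2*(1+d) - 2 = 2*d by omega, show (1+d) = d+1 by omega]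
  rw [catalan_real_factorial]
  ring

end HM

theorem fkfun_closed_form_and_bound (k : ℕ) (hk : 1 ≤ k) (x : ℝ) (hx : x ∈ Set.Icc (0 : ℝ) 1) :
    fkfun k x =
      1 - ∑ j ∈ Finset.Icc 1 k, x ^ (j - 1) / (1 + x) ^ (2 * j - 1) *
        ((2 * j - 2).factorial / ((j.factorial : ℝ) * (j - 1).factorial)) ∧
    fkfun k x ≤ (4 * x) ^ k / (1 + x) ^ (2 * k - 1) := by
  obtain ⟨hx0, hx1⟩ := hx
  have hid : fkfun k x =
      1 - ∑ j ∈ Finset.Icc 1 k, x ^ (j - 1) / (1 + x) ^ (2 * j - 1) *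
        ((2 * j - 2).factorial / ((j.factorial : ℝ) * (j - 1).factorial)) := by
    rw [HM.fkfun_closed k hk x hx0, HM.sum_form_conv]
  refine ⟨hid, ?_⟩
  rw [hid, HM.sum_form_conv]
  rcases eq_or_lt_of_le hx0 with h0 | hpos
  · -- x = 0
    rw [← h0]
    have hsum : ∑ j ∈ Finset.range k, (catalan j : ℝ) * (0:ℝ)^j / (1+(0:ℝ))^(2*j+1) = 1 := by
      rw [Finset.sum_eq_single_of_mem 0 (Finset.mem_range.mpr (by omega))]
      · norm_num
      · intro j _ hj
        rw [zero_pow hj]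
        norm_num
    rw [hsum]
    have : ((4:ℝ) * 0)^k / (1+(0:ℝ))^(2*k-1) = 0 := by
      rw [mul_zero, zero_pow (by omega : k ≠ 0)]
      norm_num
    rw [this]
    norm_num
  · exact HM.tail_bound k hk hpos hx1

end
end

section
/- Let X_1,…,X_n be i.i.d. standard normal random variables, D = ∑_{t=1}^n X_t², and Y_t = X_t/√D. Then for every 1 ≤ r ≤ n and all positive integers m_1,…,m_r with m_1+⋯+m_r = ℓ, one has E[Y_1^{2m_1} ⋯ Y_r^{2m_r}] = (Γ(n/2) / (2^ℓ · Γ(n/2 + ℓ))) · ∏_{j=1}^r (2m_j − 1)!!, where (2m−1)!! = 1·3·5⋯(2m−1). -/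
open MeasureTheory ProbabilityTheory Filter

noncomputable section

variable {Ω : Type*}

open Real Set Nat Function

section Aux

lemma auxL1int {a b : ℝ} (ha : 0 < a) (hb : 0 < b) :
    IntegrableOn (fun t : ℝ => t ^ (a - 1) * Real.exp (-(b * t))) (Ioi 0) := by
  have := integrableOn_rpow_mul_exp_neg_mul_rpow (s := a - 1) (p := 1) (by linarith) one_pos hb
  simpa [neg_mul] using this

lemma auxL1 {a b : ℝ} (ha : 0 < a) (hb : 0 < b) :
    ∫ t in Ioi (0:ℝ), t ^ (a - 1) * Real.exp (-(b * t)) = b ^ (-a) * Real.Gamma a := by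
  have := integral_rpow_mul_exp_neg_mul_rpow (p := 1) (q := a - 1) one_pos (by linarith) hb
  simpa [neg_mul] using this

lemma auxRpowSum {ι : Type*} (s : Finset ι) {b : ℝ} (hb : 0 < b) (a : ι → ℝ) :
    b ^ (∑ j ∈ s, a j) = ∏ j ∈ s, b ^ (a j) := by
  simp_rw [Real.rpow_def_of_pos hb, ← Real.exp_sum, Finset.mul_sum]

lemma auxGammaHalf (k : ℕ) :
    Real.Gamma (k + 1/2) = ((2*k-1)‼ : ℝ) * Real.sqrt π / 2^k := by
  induction k with
  | zero =>
    simp only [Nat.cast_zero, zero_add, Nat.mul_zero, Nat.zero_sub, pow_zero]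
    rw [show (0:ℕ)‼ = 1 from rfl]
    rw [Real.Gamma_one_half_eq]
    simp
  | succ k ih =>
    have h1 : ((k:ℝ)+1) + 1/2 = (k + 1/2) + 1 := by ring
    rw [Nat.cast_add, Nat.cast_one, h1, Real.Gamma_add_one (by positivity), ih]
    have h3 : 2*(k+1)-1 = (2*k)+1 := by omega
    rw [h3, Nat.doubleFactorial_add_one]
    have h4 : 2*k-1+1 = 2*k ∨ k = 0 := by omega
    rcases h4 with h4 | h4
    · have : ((2*k+1 : ℕ):ℝ) = 2*(k:ℝ)+1 := by push_cast; ring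
      rw [Nat.cast_mul, this]
      field_simp
      ring
    · subst h4
      norm_num [Nat.doubleFactorial]
      ring

lemma auxL2 (k : ℕ) {b : ℝ} (hb : 0 < b) :
    ∫ x : ℝ, x ^ (2*k) * Real.exp (-(b * x^2)) =
      b ^ (-((k:ℝ)+1/2)) * Real.Gamma ((k:ℝ) + 1/2) := by
  have habs : ∀ x : ℝ, |x| ^ (2*k) * Real.exp (-(b * |x|^2))
      = x ^ (2*k) * Real.exp (-(b * x^2)) := by
    intro x; rw [pow_mul, sq_abs, ← pow_mul]
  calc ∫ x : ℝ, x ^ (2*k) * Real.exp (-(b * x^2))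
      = ∫ x : ℝ, (fun y : ℝ => y ^ (2*k) * Real.exp (-(b * y^2))) |x| := by
        simp only [habs]
    _ = 2 * ∫ x in Ioi (0:ℝ), x ^ (2*k) * Real.exp (-(b * x^2)) :=
        integral_comp_abs (f := fun y : ℝ => y ^ (2*k) * Real.exp (-(b * y^2)))
    _ = 2 * ∫ x in Ioi (0:ℝ), x ^ ((2*k : ℕ):ℝ) * Real.exp (-b * x ^ (2:ℝ)) := by
        congr 1
        refine setIntegral_congr_fun measurableSet_Ioi (fun x hx => ?_)
        rw [Real.rpow_natCast, ← Real.rpow_natCast x 2]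
        norm_num
    _ = 2 * (b ^ (-(((2*k:ℕ):ℝ) + 1) / 2) * (1/2) * Real.Gamma ((((2*k:ℕ):ℝ) + 1) / 2)) := by
        rw [integral_rpow_mul_exp_neg_mul_rpow two_pos
          (lt_of_lt_of_le neg_one_lt_zero (by positivity)) hb]
    _ = b ^ (-((k:ℝ)+1/2)) * Real.Gamma ((k:ℝ) + 1/2) := by
        rw [show -(((2*k:ℕ):ℝ) + 1) / 2 = -((k:ℝ)+1/2) by push_cast; ring,
          show (((2*k:ℕ):ℝ) + 1) / 2 = (k:ℝ)+1/2 by push_cast; ring]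
        ring

lemma auxGaussInt (g : ℝ → ℝ) :
    ∫ x, g x ∂(gaussianReal 0 1) = ∫ x, gaussianPDFReal 0 1 x * g x := by
  rw [gaussianReal_of_var_ne_zero 0 one_ne_zero]
  have hm : Measurable fun x => (gaussianPDFReal 0 1 x).toNNReal :=
    (measurable_gaussianPDFReal 0 1).real_toNNReal
  rw [show gaussianPDF 0 1 = fun x => ((gaussianPDFReal 0 1 x).toNNReal : ENNReal) from rfl]
  rw [integral_withDensity_eq_integral_smul hm]
  congr 1; funext x
  simp [NNReal.smul_def, Real.coe_toNNReal _ (gaussianPDFReal_nonneg 0 1 x)]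

lemma auxG1 (k : ℕ) {t : ℝ} (ht : 0 ≤ t) :
    ∫ x, x ^ (2*k) * Real.exp (-(t * x^2)) ∂(gaussianReal 0 1) =
      ((2*k-1)‼ : ℝ) * (1+2*t) ^ (-((k:ℝ)+1/2)) := by
  rw [auxGaussInt]
  have hb : (0:ℝ) < t + 1/2 := by linarith
  have key : ∀ x : ℝ, gaussianPDFReal 0 1 x * (x ^ (2*k) * Real.exp (-(t * x^2)))
      = (Real.sqrt (2*π))⁻¹ * (x ^ (2*k) * Real.exp (-((t+1/2) * x^2))) := by
    intro x
    rw [gaussianPDFReal]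
    simp only [mul_one, sub_zero, NNReal.coe_one]
    rw [show -((t+1/2)*x^2) = -x^2/2 + -(t*x^2) by ring, Real.exp_add]
    ring
  simp_rw [key]
  rw [integral_const_mul, auxL2 k hb, auxGammaHalf]
  have h2 : (1+2*t) ^ (-((k:ℝ)+1/2)) = (2:ℝ) ^ (-((k:ℝ)+1/2)) * (t+1/2) ^ (-((k:ℝ)+1/2)) := by
    rw [← Real.mul_rpow two_pos.le hb.le]
    norm_num
    ring_nf
  rw [h2]
  have hsqrt2pi : (Real.sqrt (2*π))⁻¹ = (Real.sqrt 2)⁻¹ * (Real.sqrt π)⁻¹ := by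
    rw [Real.sqrt_mul two_pos.le, mul_inv]
  have h3 : (2:ℝ) ^ (-((k:ℝ)+1/2)) = (Real.sqrt 2)⁻¹ * ((2:ℝ)^k)⁻¹ := by
    rw [show -((k:ℝ)+1/2) = (-(1/2)) + (-(k:ℝ)) by ring, Real.rpow_add two_pos,
      Real.rpow_neg two_pos.le, Real.rpow_neg two_pos.le, Real.rpow_natCast,
      ← Real.sqrt_eq_rpow]
  rw [hsqrt2pi, h3]
  have hs2 : Real.sqrt 2 ≠ 0 := by positivity
  have hsp : Real.sqrt π ≠ 0 := by positivity
  have h2k : ((2:ℝ)^k) ≠ 0 := by positivity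
  field_simp

lemma auxJlem {a c : ℝ} (ha : 0 < a) (hc : 0 < c) :
    ∫ t in Ioi (0:ℝ), t ^ (a-1) * (1+2*t) ^ (-(a+c)) =
      Real.Gamma a * Real.Gamma c / (2 ^ a * Real.Gamma (a+c)) := by
  set μ := volume.restrict (Ioi (0:ℝ)) with hμ
  set K : ℝ → ℝ → ℝ := fun s t =>
    (s ^ (a+c-1) * Real.exp (-s)) * (t ^ (a-1) * Real.exp (-(2*s*t))) with hK
  have hKm : AEStronglyMeasurable (uncurry K) (μ.prod μ) := by
    apply Measurable.aestronglyMeasurable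
    have : uncurry K = fun p : ℝ × ℝ =>
        (p.1 ^ (a+c-1) * Real.exp (-p.1)) * (p.2 ^ (a-1) * Real.exp (-(2*p.1*p.2))) := rfl
    rw [this]; fun_prop
  have hint_t : ∀ s ∈ Ioi (0:ℝ), Integrable (K s) μ := by
    intro s hs
    have hs' : (0:ℝ) < s := hs
    exact ((auxL1int ha (by positivity : (0:ℝ) < 2*s)).const_mul _)
  have hpos : ∀ s ∈ Ioi (0:ℝ), ∫ t, ‖K s t‖ ∂μ
      = Real.Gamma a * 2 ^ (-a) * (s ^ (c-1) * Real.exp (-(1*s))) := by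
    intro s hs
    have hs' : (0:ℝ) < s := hs
    have h1 : ∫ t, ‖K s t‖ ∂μ = ∫ t, K s t ∂μ := by
      rw [hμ]
      refine integral_congr_ae ?_
      filter_upwards [ae_restrict_mem measurableSet_Ioi] with t ht
      have ht' : (0:ℝ) < t := ht
      rw [Real.norm_eq_abs, abs_of_nonneg (by positivity)]
    rw [h1, hμ, integral_const_mul, auxL1 ha (by positivity : (0:ℝ) < 2*s),
      Real.mul_rpow two_pos.le hs'.le,
      show s ^ (a+c-1) = s ^ (c-1) * s ^ a from by rw [← Real.rpow_add hs']; congr 1; ring]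
    have hss : s ^ a * s ^ (-a) = 1 := by rw [← Real.rpow_add hs']; simp
    calc s ^ (c-1) * s ^ a * Real.exp (-s) * (2 ^ (-a) * s ^ (-a) * Real.Gamma a)
        = Real.Gamma a * 2 ^ (-a) * (s ^ (c-1) * Real.exp (-s)) * (s ^ a * s ^ (-a)) := by ring
      _ = Real.Gamma a * 2 ^ (-a) * (s ^ (c-1) * Real.exp (-(1*s))) := by
          rw [hss, mul_one, one_mul]
  have hKint : Integrable (uncurry K) (μ.prod μ) := by
    rw [integrable_prod_iff hKm]
    constructor
    · filter_upwards [ae_restrict_mem measurableSet_Ioi] with s hs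
      exact hint_t s hs
    · apply Integrable.congr (((auxL1int hc one_pos).const_mul (Real.Gamma a * 2 ^ (-a))))
      filter_upwards [ae_restrict_mem measurableSet_Ioi] with s hs
      exact (hpos s hs).symm
  have hswap := integral_integral_swap hKint
  have hleft : ∫ s, ∫ t, K s t ∂μ ∂μ = Real.Gamma a * 2 ^ (-a) * Real.Gamma c := by
    have : ∀ s ∈ Ioi (0:ℝ), ∫ t, K s t ∂μ
        = Real.Gamma a * 2 ^ (-a) * (s ^ (c-1) * Real.exp (-(1*s))) := by
      intro s hs
      rw [← hpos s hs]
      refine integral_congr_ae ?_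
      filter_upwards [ae_restrict_mem measurableSet_Ioi] with t ht
      have ht' : (0:ℝ) < t := ht
      have hs' : (0:ℝ) < s := hs
      rw [Real.norm_eq_abs, abs_of_nonneg (by positivity)]
    rw [hμ, setIntegral_congr_fun measurableSet_Ioi fun s hs => this s hs]
    rw [integral_const_mul, auxL1 hc one_pos, Real.one_rpow, one_mul]
  have hright : ∫ t, ∫ s, K s t ∂μ ∂μ =
      (∫ t in Ioi (0:ℝ), t ^ (a-1) * (1+2*t) ^ (-(a+c))) * Real.Gamma (a+c) := by
    rw [hμ, ← integral_mul_const]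
    refine setIntegral_congr_fun measurableSet_Ioi fun t ht => ?_
    have ht' : (0:ℝ) < t := ht
    have hb : (0:ℝ) < 1 + 2*t := by linarith
    have : ∀ s : ℝ, K s t = (t ^ (a-1)) * (s ^ ((a+c)-1) * Real.exp (-((1+2*t)*s))) := by
      intro s
      rw [hK]
      simp only
      rw [show -((1+2*t)*s) = -s + -(2*s*t) from by ring, Real.exp_add]
      ring
    simp_rw [this]
    rw [integral_const_mul, auxL1 (by positivity) hb]
    ring
  rw [hswap] at hleft
  rw [hright] at hleft
  have hG : Real.Gamma (a+c) ≠ 0 := (Real.Gamma_pos_of_pos (by linarith)).ne'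
  have h2a : (2:ℝ) ^ (-a) = (2 ^ a)⁻¹ := Real.rpow_neg two_pos.le a
  rw [h2a] at hleft
  field_simp at hleft ⊢
  linarith [hleft]

lemma auxIndepProd [MeasurableSpace Ω] (P : Measure Ω) [IsProbabilityMeasure P]
    (X : ℕ → Ω → ℝ) (hmeas : ∀ t, Measurable (X t))
    (hindep : iIndepFun X P)
    (g : ℕ → ℝ → ℝ) (hg : ∀ j, Measurable (g j)) (k : ℕ) :
    ∫ ω, ∏ j ∈ Finset.range k, g j (X j ω) ∂P
      = ∏ j ∈ Finset.range k, ∫ ω, g j (X j ω) ∂P := by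
  have hc : iIndepFun
      (fun i ω => g i (X i ω)) P := hindep.comp _ hg
  induction k with
  | zero => simp
  | succ k ih =>
    simp_rw [Finset.prod_range_succ]
    have hI : IndepFun (∏ j ∈ Finset.range k, fun ω => g j (X j ω))
        (fun ω => g k (X k ω)) P :=
      hc.indepFun_finsetProd_of_notMem (fun i => (hg i).comp (hmeas i))
        (Finset.notMem_range_self)
    have h1 : (fun ω => ∏ j ∈ Finset.range k, g j (X j ω))
        = ∏ j ∈ Finset.range k, fun ω => g j (X j ω) := by
      funext ω; simp [Finset.prod_apply]
    have hm : AEStronglyMeasurable (∏ j ∈ Finset.range k, fun ω => g j (X j ω)) P := by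
      rw [← h1]
      exact (Finset.measurable_prod _ fun i _ => (hg i).comp (hmeas i)).aestronglyMeasurable
    have := hI.integral_mul_eq_mul_integral hm (((hg k).comp (hmeas k)).aestronglyMeasurable)
    have h2 : ∫ ω, (∏ j ∈ Finset.range k, g j (X j ω)) * g k (X k ω) ∂P
        = (∫ ω, ∏ j ∈ Finset.range k, g j (X j ω) ∂P) * ∫ ω, g k (X k ω) ∂P := by
      have h3 := this
      simp only [Pi.mul_apply] at h3
      simpa [Finset.prod_apply] using h3
    rw [h2, ih]

end Aux

set_option maxHeartbeats 1000000 in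
theorem gaussian_self_normalized_moments
    [MeasurableSpace Ω] (P : Measure Ω) [IsProbabilityMeasure P]
    (X : ℕ → Ω → ℝ)
    (hmeas : ∀ t, Measurable (X t))
    (hindep : iIndepFun X P)
    (hgauss : ∀ t, Measure.map (X t) P = gaussianReal 0 1)
    (n r ℓ : ℕ) (hr1 : 1 ≤ r) (hrn : r ≤ n)
    (m : ℕ → ℕ) (hm : ∀ j < r, 1 ≤ m j) (hsum : (∑ j ∈ Finset.range r, m j) = ℓ) :
    ∫ ω, ∏ j ∈ Finset.range r, (Yvec X n j ω) ^ (2 * m j) ∂P =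
      (Real.Gamma ((n : ℝ) / 2) / (2 ^ ℓ * Real.Gamma ((n : ℝ) / 2 + ℓ))) *
        ∏ j ∈ Finset.range r, ((2 * m j - 1).doubleFactorial : ℝ) := by
  classical
  have hn1 : 1 ≤ n := hr1.trans hrn
  have hl1 : 1 ≤ ℓ := by
    have h := Finset.sum_le_sum (fun j hj => hm j (Finset.mem_range.mp hj))
    rw [hsum] at h
    have h' : r ≤ ℓ := by simpa using h
    exact hr1.trans h'
  set S : Ω → ℝ := fun ω => ∑ s ∈ Finset.range n, X s ω ^ 2 with hSdef
  set N : Ω → ℝ := fun ω => ∏ j ∈ Finset.range r, X j ω ^ (2 * m j) with hNdef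
  have hSapp : ∀ ω, (∑ s ∈ Finset.range n, X s ω ^ 2) = S ω := fun ω => rfl
  have hNapp : ∀ ω, (∏ j ∈ Finset.range r, X j ω ^ (2 * m j)) = N ω := fun ω => rfl
  have hSmeas : Measurable S := Finset.measurable_sum _ fun i _ => ((hmeas i).pow_const 2)
  have hNmeas : Measurable N := Finset.measurable_prod _ fun i _ => ((hmeas i).pow_const _)
  have hS0 : ∀ ω, 0 ≤ S ω := fun ω => Finset.sum_nonneg fun i _ => sq_nonneg _
  have hN0 : ∀ ω, 0 ≤ N ω := fun ω => Finset.prod_nonneg fun i _ => by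
    rw [pow_mul]; positivity
  have hNS : ∀ ω, N ω ≤ S ω ^ ℓ := by
    intro ω
    have h1 : ∀ j ∈ Finset.range r, X j ω ^ (2 * m j) ≤ S ω ^ (m j) := by
      intro j hj
      rw [pow_mul]
      refine pow_le_pow_left₀ (sq_nonneg _) ?_ _
      exact Finset.single_le_sum (f := fun s => X s ω ^ 2) (fun i _ => sq_nonneg _)
        (Finset.mem_range.mpr (lt_of_lt_of_le (Finset.mem_range.mp hj) hrn))
    calc N ω ≤ ∏ j ∈ Finset.range r, S ω ^ (m j) :=
          Finset.prod_le_prod (fun j _ => by rw [pow_mul]; positivity) h1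
      _ = S ω ^ ℓ := by rw [Finset.prod_pow_eq_pow_sum, hsum]
  have haeS : ∀ᵐ ω ∂P, 0 < S ω := by
    have hset : {ω | ¬ 0 < S ω} ⊆ X 0 ⁻¹' {0} := by
      intro ω hω
      have hS0' : S ω = 0 := le_antisymm (not_lt.mp hω) (hS0 ω)
      have h2 := (Finset.sum_eq_zero_iff_of_nonneg
        (fun i (_ : i ∈ Finset.range n) => sq_nonneg (X i ω))).mp hS0' 0
        (Finset.mem_range.mpr hn1)
      have h3 : X 0 ω = 0 := by
        have := sq_eq_zero_iff.mp h2
        exact this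
      simpa using h3
    rw [ae_iff]
    refine measure_mono_null hset ?_
    have hmap : P (X 0 ⁻¹' {0}) = (Measure.map (X 0) P) {0} :=
      (Measure.map_apply (hmeas 0) (measurableSet_singleton 0)).symm
    rw [hmap, hgauss 0]
    exact gaussianReal_absolutelyContinuous 0 one_ne_zero Real.volume_singleton
  have hlpos : (0:ℝ) < (ℓ:ℝ) := by exact_mod_cast Nat.lt_of_lt_of_le Nat.zero_lt_one hl1
  set Γl := Real.Gamma ℓ with hΓldef
  have hΓlpos : 0 < Γl := Real.Gamma_pos_of_pos hlpos
  set C := ∏ j ∈ Finset.range r, ((2 * m j - 1).doubleFactorial : ℝ) with hCdef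
  set H : Ω → ℝ → ℝ := fun ω t => N ω * (t ^ ((ℓ:ℝ)-1) * Real.exp (-(S ω * t))) with hHdef
  have key1 : ∀ ω, 0 < S ω →
      (∫ t in Ioi (0:ℝ), H ω t) = N ω * ((S ω)^ℓ)⁻¹ * Γl := by
    intro ω hω
    rw [hHdef]
    simp only
    rw [integral_const_mul, auxL1 hlpos hω, Real.rpow_neg (hS0 ω), Real.rpow_natCast]
    ring
  have step0 : ∀ ω, (∏ j ∈ Finset.range r, (Yvec X n j ω) ^ (2 * m j))
      = N ω * ((S ω)^ℓ)⁻¹ := by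
    intro ω
    simp only [Yvec, div_pow, hSapp]
    rw [Finset.prod_div_distrib]
    have hden : ∏ j ∈ Finset.range r, Real.sqrt (S ω) ^ (2 * m j) = S ω ^ ℓ := by
      have heach : ∀ j, Real.sqrt (S ω) ^ (2 * m j) = S ω ^ (m j) := by
        intro j; rw [pow_mul, Real.sq_sqrt (hS0 ω)]
      simp_rw [heach]
      rw [Finset.prod_pow_eq_pow_sum, hsum]
    rw [hden, hNapp, div_eq_mul_inv]
  have hHm : AEStronglyMeasurable (uncurry H) (P.prod (volume.restrict (Ioi (0:ℝ)))) := by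
    apply Measurable.aestronglyMeasurable
    have hrw : uncurry H = fun p : Ω × ℝ =>
        N p.1 * (p.2 ^ ((ℓ:ℝ)-1) * Real.exp (-(S p.1 * p.2))) := rfl
    rw [hrw]
    fun_prop
  have hnormint : ∀ ω, 0 < S ω →
      (∫ t in Ioi (0:ℝ), ‖H ω t‖) = N ω * ((S ω)^ℓ)⁻¹ * Γl := by
    intro ω hω
    rw [← key1 ω hω]
    refine integral_congr_ae ?_
    filter_upwards [ae_restrict_mem measurableSet_Ioi] with t ht
    have ht' : (0:ℝ) < t := ht
    rw [hHdef]
    simp only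
    rw [Real.norm_eq_abs, abs_of_nonneg]
    have hn := hN0 ω
    positivity
  have hbound : ∀ ω, 0 < S ω → N ω * ((S ω)^ℓ)⁻¹ * Γl ≤ Γl := by
    intro ω hω
    have hp : (0:ℝ) < S ω ^ ℓ := pow_pos hω ℓ
    have h1 : N ω * ((S ω)^ℓ)⁻¹ ≤ 1 := by
      calc N ω * ((S ω)^ℓ)⁻¹ ≤ S ω ^ ℓ * ((S ω)^ℓ)⁻¹ :=
            mul_le_mul_of_nonneg_right (hNS ω) (inv_nonneg.mpr hp.le)
        _ = 1 := mul_inv_cancel₀ hp.ne'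
    calc N ω * ((S ω)^ℓ)⁻¹ * Γl ≤ 1 * Γl :=
          mul_le_mul_of_nonneg_right h1 hΓlpos.le
      _ = Γl := one_mul _
  have hHint : Integrable (uncurry H) (P.prod (volume.restrict (Ioi (0:ℝ)))) := by
    rw [integrable_prod_iff hHm]
    simp only [Function.uncurry_apply_pair]
    constructor
    · filter_upwards [haeS] with ω hω
      exact (auxL1int hlpos hω).const_mul _
    · refine Integrable.mono' (integrable_const Γl) hHm.norm.integral_prod_right' ?_
      filter_upwards [haeS] with ω hω
      rw [Real.norm_eq_abs, abs_of_nonneg (integral_nonneg fun t => norm_nonneg _)]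
      rw [hnormint ω hω]
      exact hbound ω hω
  have hswap := integral_integral_swap hHint
  have stepA : (∫ ω, ∏ j ∈ Finset.range r, (Yvec X n j ω) ^ (2 * m j) ∂P)
      = Γl⁻¹ * ∫ ω, (∫ t in Ioi (0:ℝ), H ω t) ∂P := by
    rw [← integral_const_mul]
    refine integral_congr_ae ?_
    filter_upwards [haeS] with ω hω
    rw [step0 ω, key1 ω hω]
    field_simp
  have stepB : ∀ t : ℝ, 0 < t →
      (∫ ω, N ω * Real.exp (-(t * S ω)) ∂P)
        = C * (1+2*t) ^ (-((ℓ:ℝ) + (n:ℝ)/2)) := by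
    intro t ht
    set K : ℕ → ℕ := fun j => if j < r then m j else 0 with hKdef
    have hK0 : ∀ x, ¬ x < r → K x = 0 := by
      intro x hx; rw [hKdef]; simp only; rw [if_neg hx]
    have hKr : ∀ j, j < r → K j = m j := by
      intro j hj; rw [hKdef]; simp only; rw [if_pos hj]
    set g : ℕ → ℝ → ℝ :=
      fun j x => x ^ (2 * K j) * Real.exp (-(t * x^2)) with hgdef
    have hgmeas : ∀ j, Measurable (g j) := by
      intro j; rw [hgdef]; fun_prop
    have hsumK : (∑ j ∈ Finset.range n, K j) = ℓ := by
      rw [← Finset.sum_subset (Finset.range_subset_range.mpr hrn)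
        (fun x _ hnx => hK0 x (fun hc => hnx (Finset.mem_range.mpr hc)))]
      rw [← hsum]
      exact Finset.sum_congr rfl fun j hj => hKr j (Finset.mem_range.mp hj)
    have hpoint : ∀ ω, N ω * Real.exp (-(t * S ω))
        = ∏ j ∈ Finset.range n, g j (X j ω) := by
      intro ω
      rw [hgdef]
      simp only
      rw [Finset.prod_mul_distrib]
      congr 1
      · rw [hNdef]
        simp only
        rw [← Finset.prod_subset (Finset.range_subset_range.mpr hrn)
          (fun x _ hnx => by
            rw [hK0 x (fun hc => hnx (Finset.mem_range.mpr hc))]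
            simp)]
        exact Finset.prod_congr rfl fun j hj => by rw [hKr j (Finset.mem_range.mp hj)]
      · rw [hSdef]
        simp only
        rw [← Real.exp_sum]
        congr 1
        rw [Finset.mul_sum]
        exact (Finset.sum_neg_distrib _).symm
    simp_rw [hpoint]
    rw [auxIndepProd P X hmeas hindep g hgmeas n]
    have heach : ∀ j ∈ Finset.range n, (∫ ω, g j (X j ω) ∂P)
        = ((2 * K j - 1)‼ : ℝ) * (1+2*t) ^ (-((K j : ℝ)+1/2)) := by
      intro j _
      have h1 : (∫ ω, g j (X j ω) ∂P) = ∫ x, g j x ∂(Measure.map (X j) P) :=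
        (integral_map (hmeas j).aemeasurable (hgmeas j).aestronglyMeasurable).symm
      have h2 : g j = fun x => x ^ (2 * K j) * Real.exp (-(t * x^2)) := by rw [hgdef]
      rw [h1, hgauss j, h2]
      exact auxG1 (K j) ht.le
    rw [Finset.prod_congr rfl heach, Finset.prod_mul_distrib,
      ← auxRpowSum _ (by linarith : (0:ℝ) < 1 + 2*t)]
    have hexp : (∑ j ∈ Finset.range n, -((K j : ℝ)+1/2)) = -((ℓ:ℝ) + (n:ℝ)/2) := by
      rw [Finset.sum_neg_distrib, Finset.sum_add_distrib, Finset.sum_const,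
        Finset.card_range, ← Nat.cast_sum, hsumK]
      ring
    rw [hexp]
    congr 1
    rw [hCdef]
    rw [← Finset.prod_subset (Finset.range_subset_range.mpr hrn)
      (fun x _ hnx => by
        rw [hK0 x (fun hc => hnx (Finset.mem_range.mpr hc))]
        norm_num [Nat.doubleFactorial])]
    exact Finset.prod_congr rfl fun j hj => by rw [hKr j (Finset.mem_range.mp hj)]
  have stepC : (∫ t in Ioi (0:ℝ), (∫ ω, H ω t ∂P))
      = C * (Γl * Real.Gamma ((n:ℝ)/2) / (2 ^ ((ℓ:ℝ)) * Real.Gamma ((ℓ:ℝ) + (n:ℝ)/2))) := by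
    have h1 : ∀ t ∈ Ioi (0:ℝ), (∫ ω, H ω t ∂P)
        = C * (t ^ ((ℓ:ℝ)-1) * (1+2*t) ^ (-((ℓ:ℝ) + (n:ℝ)/2))) := by
      intro t ht
      have ht' : (0:ℝ) < t := ht
      have hptw : ∀ ω, H ω t = (N ω * Real.exp (-(t * S ω))) * t ^ ((ℓ:ℝ)-1) := by
        intro ω; rw [hHdef]; simp only; rw [mul_comm (S ω) t]; ring
      simp_rw [hptw]
      rw [integral_mul_const, stepB t ht']
      ring
    rw [setIntegral_congr_fun measurableSet_Ioi h1, integral_const_mul,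
      auxJlem hlpos (by positivity : (0:ℝ) < (n:ℝ)/2)]
  rw [stepA, hswap, stepC]
  rw [show ((2:ℝ) ^ ℓ : ℝ) = (2:ℝ) ^ ((ℓ:ℝ)) from (Real.rpow_natCast 2 ℓ).symm]
  rw [show Real.Gamma ((n:ℝ)/2 + ℓ) = Real.Gamma ((ℓ:ℝ) + (n:ℝ)/2) from by rw [add_comm]]
  have h2l : (0:ℝ) < 2 ^ ((ℓ:ℝ)) := by positivity
  have hΓ2 : 0 < Real.Gamma ((ℓ:ℝ) + (n:ℝ)/2) :=
    Real.Gamma_pos_of_pos (by positivity)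
  field_simp

end
end

section
/- Let X be a real p×n matrix whose rows have positive squared norms D_i = ∑_{t=1}^n X_{it}² > 0, let F = diag(1/D_1,…,1/D_p), and let R = F^{1/2} X X' F^{1/2} be the associated correlation matrix. Let λ_(1) ≥ ⋯ ≥ λ_(p) be the ordered eigenvalues of X X' and μ_(1) ≥ ⋯ ≥ μ_(p) the ordered eigenvalues of R. Then max_{i=1,…,p} |μ_(i) − n^{-1}λ_(i)| ≤ n^{-1}·λ_(1) · max_{i=1,…,p} |n/D_i − 1|. -/
open Finset Matrix
open scoped RealInnerProductSpace

noncomputable section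

lemma antitone_multiset_eq {p : ℕ} {f g : Fin p → ℝ} (hf : Antitone f) (hg : Antitone g)
    (h : Multiset.map f Finset.univ.val = Multiset.map g Finset.univ.val) : f = g := by
  rw [Fin.univ_val_map, Fin.univ_val_map] at h
  have hperm : (List.ofFn f).Perm (List.ofFn g) := Quotient.exact h
  have hs : ∀ {h : Fin p → ℝ}, Antitone h → List.Pairwise (· ≥ ·) (List.ofFn h) := by
    intro h hh
    rw [List.pairwise_ofFn]
    intro a b hab
    exact hh hab.le
  exact List.ofFn_injective (List.Perm.eq_of_pairwise' (hs hf) (hs hg) hperm)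

/-- Sorted eigenbasis. -/
lemma exists_sorted_eigenbasis {p : ℕ} {M : Matrix (Fin p) (Fin p) ℝ} (hM : M.IsHermitian)
    (c : Fin p → ℝ) (hc : Antitone c)
    (hmc : Multiset.map c Finset.univ.val = Multiset.map hM.eigenvalues Finset.univ.val) :
    ∃ u : OrthonormalBasis (Fin p) ℝ (EuclideanSpace ℝ (Fin p)),
      ∀ j, Matrix.toEuclideanLin M (u j) = c j • u j := by
  set σ := Tuple.sort (fun i => - hM.eigenvalues i) with hσ
  have hanti : Antitone (hM.eigenvalues ∘ σ) := by
    have hmono := Tuple.monotone_sort (fun i => - hM.eigenvalues i)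
    intro a b hab
    have := hmono hab
    simp only [Function.comp_apply, neg_le_neg_iff] at this ⊢
    exact this
  have hperm : Multiset.map (hM.eigenvalues ∘ σ) Finset.univ.val
      = Multiset.map hM.eigenvalues Finset.univ.val := by
    rw [← Multiset.map_map]
    congr 1
    have : Finset.univ.map σ.toEmbedding = Finset.univ := Finset.map_univ_equiv σ
    calc Multiset.map (⇑σ) Finset.univ.val = (Finset.univ.map σ.toEmbedding).val := rfl
      _ = Finset.univ.val := by rw [this]
  have hce : c = hM.eigenvalues ∘ σ := antitone_multiset_eq hc hanti (hmc.trans hperm.symm)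
  refine ⟨hM.eigenvectorBasis.reindex σ.symm, fun j => ?_⟩
  rw [OrthonormalBasis.reindex_apply, Equiv.symm_symm]
  have h1 := hM.mulVec_eigenvectorBasis (σ j)
  rw [Matrix.toEuclideanLin_apply, hce]
  simp only [Function.comp_apply]
  rw [h1]
  simp



variable {p : ℕ}

local notation "E" => EuclideanSpace ℝ (Fin p)

lemma repr_zero_of_notmem
    (u : OrthonormalBasis (Fin p) ℝ E) (s : Finset (Fin p))
    {v : E} (hv : v ∈ Submodule.span ℝ (u '' ↑s))
    {j : Fin p} (hj : j ∉ s) : (inner ℝ (u j) v : ℝ) = 0 := by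
  induction hv using Submodule.span_induction with
  | mem x hx =>
    obtain ⟨k, hk, rfl⟩ := hx
    have hne : j ≠ k := by rintro rfl; exact hj hk
    exact u.orthonormal.2 hne
  | zero => exact inner_zero_right _
  | add x y _ _ hx hy => rw [inner_add_right, hx, hy, add_zero]
  | smul a x _ hx => rw [real_inner_smul_right, hx, mul_zero]

lemma form_expand (T : E →ₗ[ℝ] E)
    (u : OrthonormalBasis (Fin p) ℝ E) (c : Fin p → ℝ)
    (hu : ∀ j, T (u j) = c j • u j) (v : E) :
    (inner ℝ v (T v) : ℝ) = ∑ j, c j * (inner ℝ (u j) v : ℝ) ^ 2 ∧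
      (inner ℝ v v : ℝ) = ∑ j, (inner ℝ (u j) v : ℝ) ^ 2 := by
  set a : Fin p → ℝ := fun j => (inner ℝ (u j) v : ℝ) with ha
  have hrepr : ∑ i, a i • u i = v := u.sum_repr' v
  have hTv : T v = ∑ j, (a j * c j) • u j := by
    conv_lhs => rw [← hrepr]
    rw [map_sum]
    refine Finset.sum_congr rfl fun j _ => ?_
    rw [_root_.map_smul, hu, smul_smul]
  have hvuj : ∀ j, (inner ℝ v (u j) : ℝ) = a j := fun j => (real_inner_comm v (u j)).symm
  constructor
  · rw [hTv, inner_sum]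
    refine Finset.sum_congr rfl fun j _ => ?_
    rw [real_inner_smul_right, hvuj]
    ring
  · have h0 : (inner ℝ v v : ℝ) = inner ℝ v (∑ i, a i • u i) := by rw [hrepr]
    rw [h0, inner_sum]
    refine Finset.sum_congr rfl fun j _ => ?_
    rw [real_inner_smul_right, hvuj]
    ring

lemma form_ge_on_span (T : E →ₗ[ℝ] E)
    (u : OrthonormalBasis (Fin p) ℝ E) (c : Fin p → ℝ)
    (hu : ∀ j, T (u j) = c j • u j) (s : Finset (Fin p)) (r : ℝ) (hr : ∀ j ∈ s, r ≤ c j)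
    {v : E} (hv : v ∈ Submodule.span ℝ (u '' ↑s)) :
    r * (inner ℝ v v : ℝ) ≤ (inner ℝ v (T v) : ℝ) := by
  obtain ⟨h1, h2⟩ := form_expand T u c hu v
  rw [h1, h2, Finset.mul_sum]
  refine Finset.sum_le_sum fun j _ => ?_
  by_cases hj : j ∈ s
  · exact mul_le_mul_of_nonneg_right (hr j hj) (sq_nonneg _)
  · rw [repr_zero_of_notmem u s hv hj]
    simp

lemma form_le_on_span (T : E →ₗ[ℝ] E)
    (u : OrthonormalBasis (Fin p) ℝ E) (c : Fin p → ℝ)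
    (hu : ∀ j, T (u j) = c j • u j) (s : Finset (Fin p)) (r : ℝ) (hr : ∀ j ∈ s, c j ≤ r)
    {v : E} (hv : v ∈ Submodule.span ℝ (u '' ↑s)) :
    (inner ℝ v (T v) : ℝ) ≤ r * (inner ℝ v v : ℝ) := by
  obtain ⟨h1, h2⟩ := form_expand T u c hu v
  rw [h1, h2, Finset.mul_sum]
  refine Finset.sum_le_sum fun j _ => ?_
  by_cases hj : j ∈ s
  · exact mul_le_mul_of_nonneg_right (hr j hj) (sq_nonneg _)
  · rw [repr_zero_of_notmem u s hv hj]
    simp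

lemma finrank_span_image_finset {u : Fin p → E}
    (hu : LinearIndependent ℝ u) (s : Finset (Fin p)) :
    Module.finrank ℝ (Submodule.span ℝ (u '' ↑s)) = s.card := by
  have himg : u '' ↑s = Set.range (fun x : {x : Fin p // x ∈ s} => u ↑x) :=
    Set.image_eq_range u ↑s
  have li : LinearIndependent ℝ (fun x : {x : Fin p // x ∈ s} => u ↑x) :=
    hu.comp _ Subtype.coe_injective
  rw [himg, finrank_span_eq_card li, Fintype.card_coe]

lemma exists_ne_zero_mem_inf (V W : Submodule ℝ E)
    (h : p < Module.finrank ℝ V + Module.finrank ℝ W) :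
    ∃ v, v ∈ V ∧ v ∈ W ∧ v ≠ 0 := by
  have hsup : Module.finrank ℝ ↥(V ⊔ W) ≤ p := by
    have := Submodule.finrank_le (V ⊔ W)
    rwa [finrank_euclideanSpace, Fintype.card_fin] at this
  have heq := Submodule.finrank_sup_add_finrank_inf_eq V W
  have hpos : 0 < Module.finrank ℝ ↥(V ⊓ W) := by omega
  rw [Module.finrank_pos_iff] at hpos
  obtain ⟨⟨v, hv⟩, hvne⟩ := exists_ne (0 : ↥(V ⊓ W))
  exact ⟨v, hv.1, hv.2, by simpa [Submodule.mk_eq_zero] using hvne⟩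


lemma inner_toEuclideanLin_eq {p : ℕ} (M : Matrix (Fin p) (Fin p) ℝ)
    (x y : EuclideanSpace ℝ (Fin p)) :
    (inner ℝ x (Matrix.toEuclideanLin M y) : ℝ)
      = (WithLp.equiv 2 _ x) ⬝ᵥ (M *ᵥ (WithLp.equiv 2 _ y)) := by
  simp [Matrix.toEuclideanLin_apply, PiLp.inner_apply, dotProduct, RCLike.inner_apply]
  exact Finset.sum_congr rfl fun _ _ => mul_comm _ _

theorem corr_cov_eigenvalue_comparison
    (p n : ℕ) (hp : 0 < p)
    (X : Matrix (Fin p) (Fin n) ℝ)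
    (D : Fin p → ℝ) (hD : ∀ i, D i = ∑ t, X i t ^ 2) (hDpos : ∀ i, 0 < D i)
    (R : Matrix (Fin p) (Fin p) ℝ)
    (hR : R = Matrix.diagonal (fun i => Real.sqrt (1 / D i)) * (X * Xᵀ) *
        Matrix.diagonal (fun i => Real.sqrt (1 / D i)))
    (hXXT : (X * Xᵀ).IsHermitian) (hRH : R.IsHermitian)
    (lam mu : Fin p → ℝ) (hlam_anti : Antitone lam) (hmu_anti : Antitone mu)
    (hlam : Multiset.map lam Finset.univ.val = Multiset.map hXXT.eigenvalues Finset.univ.val)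
    (hmu : Multiset.map mu Finset.univ.val = Multiset.map hRH.eigenvalues Finset.univ.val) :
    ∀ i, |mu i - lam i / n| ≤
      (1 / (n : ℝ)) * lam ⟨0, hp⟩ * ⨆ j, |(n : ℝ) / D j - 1| := by
  intro i
  -- n is positive
  have hn0 : n ≠ 0 := by
    intro h
    subst h
    have h2 := hDpos ⟨0, hp⟩
    rw [hD ⟨0, hp⟩] at h2
    simp at h2
  have hn : (0:ℝ) < n := Nat.cast_pos.mpr (Nat.pos_of_ne_zero hn0)
  have hS : (X * Xᵀ).PosSemidef := by
    have h := Matrix.posSemidef_self_mul_conjTranspose X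
    rwa [Matrix.conjTranspose_eq_transpose_of_trivial] at h
  -- nonnegativity of lam
  have hlam_nonneg : ∀ k, 0 ≤ lam k := by
    intro k
    have hmem : lam k ∈ Multiset.map lam Finset.univ.val :=
      Multiset.mem_map_of_mem _ (Finset.mem_val.mpr (Finset.mem_univ _))
    rw [hlam] at hmem
    obtain ⟨j, -, hj⟩ := Multiset.mem_map.mp hmem
    rw [← hj]
    exact hS.eigenvalues_nonneg j
  -- the sup
  set ε : ℝ := ⨆ j, |(n:ℝ)/D j - 1| with hεdef
  have hεle : ∀ j, |(n:ℝ)/D j - 1| ≤ ε := by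
    intro j
    rw [hεdef]
    exact le_ciSup (f := fun j => |(n:ℝ)/D j - 1|)
      (Set.Finite.bddAbove (Set.finite_range _)) j
  have hε0 : 0 ≤ ε := le_trans (abs_nonneg _) (hεle ⟨0, hp⟩)
  set g : Fin p → ℝ := fun j => Real.sqrt (1 / D j) with hgdef
  have hg2 : ∀ j, g j ^ 2 = 1 / D j := by
    intro j
    have := hDpos j
    exact Real.sq_sqrt (by positivity)
  have hgbound : ∀ j, |1/D j - 1/(n:ℝ)| ≤ ε / n := by
    intro j
    have hDj := hDpos j
    have h1 : 1/D j - 1/(n:ℝ) = ((n:ℝ)/D j - 1)/n := by field_simp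
    rw [h1, abs_div, abs_of_pos hn]
    gcongr
    exact hεle j
  have hup : ∀ j, g j ^ 2 ≤ 1/(n:ℝ) + ε/n := by
    intro j
    have := abs_le.mp (hgbound j)
    rw [hg2]
    linarith [this.2]
  have hlo : ∀ j, 1/(n:ℝ) - ε/n ≤ g j ^ 2 := by
    intro j
    have := abs_le.mp (hgbound j)
    rw [hg2]
    linarith [this.1]
  have hgne : ∀ j, g j ≠ 0 := by
    intro j
    have := hDpos j
    exact ne_of_gt (Real.sqrt_pos.mpr (by positivity))
  set G : Matrix (Fin p) (Fin p) ℝ := Matrix.diagonal g with hGdef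
  set G' : Matrix (Fin p) (Fin p) ℝ := Matrix.diagonal (fun j => (g j)⁻¹) with hG'def
  have hGG' : G * G' = 1 := by
    rw [hGdef, hG'def, Matrix.diagonal_mul_diagonal]
    rw [show (fun j => g j * (g j)⁻¹) = fun _ => (1:ℝ) from
      funext fun j => mul_inv_cancel₀ (hgne j), Matrix.diagonal_one]
  set L := Matrix.toEuclideanLin G with hLdef
  set L' := Matrix.toEuclideanLin G' with hL'def
  have hLL' : ∀ x, L (L' x) = x := by
    intro x
    simp [hLdef, hL'def, Matrix.toEuclideanLin_apply, Matrix.mulVec_mulVec, hGG',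
      Matrix.one_mulVec]
  have hL'inj : LinearMap.ker L' = ⊥ := by
    rw [LinearMap.ker_eq_bot]
    intro a b hab
    have := congrArg L hab
    rwa [hLL', hLL'] at this
  -- eigenbases
  obtain ⟨w, hw⟩ := exists_sorted_eigenbasis hXXT lam hlam_anti hlam
  obtain ⟨u, hu⟩ := exists_sorted_eigenbasis hRH mu hmu_anti hmu
  -- quadratic form congruence
  have hcong : ∀ x : EuclideanSpace ℝ (Fin p),
      (inner ℝ x (Matrix.toEuclideanLin R x) : ℝ)
        = inner ℝ (L x) (Matrix.toEuclideanLin (X * Xᵀ) (L x)) := by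
    intro x
    rw [inner_toEuclideanLin_eq, inner_toEuclideanLin_eq]
    have hLxv : (WithLp.equiv 2 _) (L x) = G *ᵥ ((WithLp.equiv 2 _) x) := by
      simp [hLdef, Matrix.toEuclideanLin_apply]
    rw [hLxv, hR]
    set xv := (WithLp.equiv 2 _) x
    have hsymm : xv ᵥ* G = G *ᵥ xv := by
      conv_lhs => rw [hGdef, ← Matrix.diagonal_transpose g]
      exact Matrix.vecMul_transpose _ _
    rw [← Matrix.mulVec_mulVec, ← Matrix.mulVec_mulVec, dotProduct_mulVec, hsymm]
  -- inner product of L x vs x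
  have hinner_sum : ∀ x : EuclideanSpace ℝ (Fin p),
      (inner ℝ x x : ℝ) = ∑ j, x j * x j := by
    intro x
    rw [PiLp.inner_apply]
    exact Finset.sum_congr rfl fun j _ => by simp [RCLike.inner_apply, sq]
  have hLx_app : ∀ (x : EuclideanSpace ℝ (Fin p)) j, (L x) j = g j * x j := by
    intro x j
    have : L x = (WithLp.equiv 2 _).symm (G *ᵥ (WithLp.equiv 2 _) x) := by
      simp [hLdef, Matrix.toEuclideanLin_apply]
    rw [this, WithLp.equiv_symm_apply, PiLp.toLp_apply, hGdef, Matrix.mulVec_diagonal]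
    rfl
  have hLup : ∀ x : EuclideanSpace ℝ (Fin p),
      (inner ℝ (L x) (L x) : ℝ) ≤ (1/(n:ℝ) + ε/n) * inner ℝ x x := by
    intro x
    rw [hinner_sum, hinner_sum, Finset.mul_sum]
    refine Finset.sum_le_sum fun j _ => ?_
    rw [hLx_app]
    nlinarith [sq_nonneg (x j), hup j, sq_nonneg (g j)]
  have hLlo : ∀ x : EuclideanSpace ℝ (Fin p),
      (1/(n:ℝ) - ε/n) * inner ℝ x x ≤ (inner ℝ (L x) (L x) : ℝ) := by
    intro x
    rw [hinner_sum, hinner_sum, Finset.mul_sum]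
    refine Finset.sum_le_sum fun j _ => ?_
    rw [hLx_app]
    nlinarith [sq_nonneg (x j), hlo j]
  -- mapping spans
  have hmap : ∀ (s : Finset (Fin p)), ∀ x ∈ Submodule.span ℝ ((fun j => L' (w j)) '' ↑s),
      L x ∈ Submodule.span ℝ ((⇑w) '' ↑s) := by
    intro s x hx
    have h1 : L x ∈ Submodule.map L (Submodule.span ℝ ((fun j => L' (w j)) '' ↑s)) :=
      Submodule.mem_map_of_mem hx
    rw [Submodule.map_span, ← Set.image_comp] at h1
    have h2 : (⇑L ∘ fun j => L' (w j)) = ⇑w := funext fun j => hLL' (w j)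
    rwa [h2] at h1
  have hwLI : LinearIndependent ℝ (fun j => L' (w j)) := by
    have := (w.orthonormal.linearIndependent).map' L' hL'inj
    exact this
  have huLI : LinearIndependent ℝ ⇑u := u.orthonormal.linearIndependent
  -- dimension counting helper
  have hdim : ∀ (s t : Finset (Fin p)), p < s.card + t.card →
      ∃ v : EuclideanSpace ℝ (Fin p), v ∈ Submodule.span ℝ ((⇑u) '' ↑s) ∧
        (L v) ∈ Submodule.span ℝ ((⇑w) '' ↑t) ∧ v ≠ 0 := by
    intro s t hst
    have hfr : p < Module.finrank ℝ (Submodule.span ℝ ((⇑u) '' ↑s))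
        + Module.finrank ℝ (Submodule.span ℝ ((fun j => L' (w j)) '' ↑t)) := by
      rw [finrank_span_image_finset huLI, finrank_span_image_finset hwLI]
      exact hst
    obtain ⟨v, hv1, hv2, hv3⟩ := exists_ne_zero_mem_inf _ _ hfr
    exact ⟨v, hv1, hmap t v hv2, hv3⟩
  -- upper bound : mu i ≤ lam i * (1/n + ε/n)
  have hub : mu i ≤ lam i * (1/(n:ℝ) + ε/n) := by
    have hcount : p < (Finset.Iic i).card + (Finset.Ici i).card := by
      rw [Fin.card_Iic, Fin.card_Ici]
      have := i.isLt
      omega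
    obtain ⟨v, hvV, hvW, hv0⟩ := hdim (Finset.Iic i) (Finset.Ici i) hcount
    have hvv : (0:ℝ) < inner ℝ v v :=
      lt_of_le_of_ne real_inner_self_nonneg
        (Ne.symm fun h => hv0 (inner_self_eq_zero.mp h))
    have h1 : mu i * (inner ℝ v v : ℝ) ≤ inner ℝ v (Matrix.toEuclideanLin R v) :=
      form_ge_on_span _ u mu hu (Finset.Iic i) (mu i)
        (fun j hj => hmu_anti (Finset.mem_Iic.mp hj)) hvV
    have h2 : (inner ℝ (L v) (Matrix.toEuclideanLin (X * Xᵀ) (L v)) : ℝ)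
        ≤ lam i * inner ℝ (L v) (L v) :=
      form_le_on_span _ w lam hw (Finset.Ici i) (lam i)
        (fun j hj => hlam_anti (Finset.mem_Ici.mp hj)) hvW
    have h3 : lam i * (inner ℝ (L v) (L v) : ℝ) ≤ lam i * ((1/(n:ℝ) + ε/n) * inner ℝ v v) :=
      mul_le_mul_of_nonneg_left (hLup v) (hlam_nonneg i)
    have hchain : mu i * (inner ℝ v v : ℝ) ≤ lam i * (1/(n:ℝ) + ε/n) * (inner ℝ v v : ℝ) := by
      calc mu i * (inner ℝ v v : ℝ) ≤ _ := h1
        _ = inner ℝ (L v) (Matrix.toEuclideanLin (X * Xᵀ) (L v)) := hcong v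
        _ ≤ lam i * ((1/(n:ℝ) + ε/n) * inner ℝ v v) := le_trans h2 h3
        _ = lam i * (1/(n:ℝ) + ε/n) * (inner ℝ v v : ℝ) := by ring
    exact le_of_mul_le_mul_right hchain hvv
  -- lower bound : lam i * (1/n - ε/n) ≤ mu i
  have hlb : lam i * (1/(n:ℝ) - ε/n) ≤ mu i := by
    have hcount : p < (Finset.Ici i).card + (Finset.Iic i).card := by
      rw [Fin.card_Iic, Fin.card_Ici]
      have := i.isLt
      omega
    obtain ⟨v, hvV, hvW, hv0⟩ := hdim (Finset.Ici i) (Finset.Iic i) hcount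
    have hvv : (0:ℝ) < inner ℝ v v :=
      lt_of_le_of_ne real_inner_self_nonneg
        (Ne.symm fun h => hv0 (inner_self_eq_zero.mp h))
    have h1 : (inner ℝ v (Matrix.toEuclideanLin R v) : ℝ) ≤ mu i * (inner ℝ v v : ℝ) :=
      form_le_on_span _ u mu hu (Finset.Ici i) (mu i)
        (fun j hj => hmu_anti (Finset.mem_Ici.mp hj)) hvV
    have h2 : lam i * (inner ℝ (L v) (L v) : ℝ)
        ≤ (inner ℝ (L v) (Matrix.toEuclideanLin (X * Xᵀ) (L v)) : ℝ) :=
      form_ge_on_span _ w lam hw (Finset.Iic i) (lam i)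
        (fun j hj => hlam_anti (Finset.mem_Iic.mp hj)) hvW
    have h3 : lam i * ((1/(n:ℝ) - ε/n) * (inner ℝ v v : ℝ)) ≤ lam i * (inner ℝ (L v) (L v) : ℝ) :=
      mul_le_mul_of_nonneg_left (hLlo v) (hlam_nonneg i)
    have hchain : lam i * (1/(n:ℝ) - ε/n) * (inner ℝ v v : ℝ) ≤ mu i * (inner ℝ v v : ℝ) := by
      calc lam i * (1/(n:ℝ) - ε/n) * (inner ℝ v v : ℝ)
          = lam i * ((1/(n:ℝ) - ε/n) * (inner ℝ v v : ℝ)) := by ring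
        _ ≤ lam i * (inner ℝ (L v) (L v) : ℝ) := h3
        _ ≤ inner ℝ (L v) (Matrix.toEuclideanLin (X * Xᵀ) (L v)) := h2
        _ = inner ℝ v (Matrix.toEuclideanLin R v) := (hcong v).symm
        _ ≤ mu i * (inner ℝ v v : ℝ) := h1
    exact le_of_mul_le_mul_right hchain hvv
  -- conclude
  have hlam0 : lam i ≤ lam ⟨0, hp⟩ := hlam_anti (by simp [Fin.le_def])
  have hkey : lam i * (ε/n) ≤ lam ⟨0, hp⟩ * (ε/n) :=
    mul_le_mul_of_nonneg_right hlam0 (by positivity)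
  have e1 : lam i * (1/(n:ℝ) + ε/n) = lam i / n + lam i * (ε/n) := by ring
  have e2 : lam i * (1/(n:ℝ) - ε/n) = lam i / n - lam i * (ε/n) := by ring
  have e3 : (1/(n:ℝ)) * lam ⟨0, hp⟩ * ε = lam ⟨0, hp⟩ * (ε/n) := by ring
  rw [abs_le]
  constructor
  · linarith
  · linarith

end
end
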